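/- arXiv:2101.05905 — 11 statements merged into one kernel-verified Lean document; each statement's English description precedes it below -/
import Mathlib

section
/- Let F be a free group and let S be a generating set of F whose image in the abelianization F^ab is a basis of F^ab as a free abelian group. Then F is freely generated by S (i.e., S is a free basis of F). -/
open Function

lemma exists_perm_extend {γ : Type*} [Fintype γ] [DecidableEq γ] (g : γ → γ) :
    ∀ s : Finset γ, Set.InjOn g s → ∃ σ : Equiv.Perm γ, ∀ x ∈ s, σ x = g x := by
  intro s
  induction s using Finset.induction_on with
  | empty => exact fun _ => ⟨1, by simp⟩
  | @insert a s ha ih =>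
    intro hg
    obtain ⟨σ, hσ⟩ := ih (hg.mono (by simp [Set.subset_def]; tauto))
    refine ⟨σ * Equiv.swap a (σ⁻¹ (g a)), ?_⟩
    intro x hx
    rcases Finset.mem_insert.mp hx with h | hxs
    · subst h; simp
    · have hxa : x ≠ a := by rintro rfl; exact ha hxs
      have h2 : x ≠ σ⁻¹ (g a) := by
        intro h
        have h3 : σ x = g a := by rw [h]; simp
        rw [hσ x hxs] at h3
        exact hxa (hg (by simp [hxs]) (by simp) h3)
      rw [Equiv.Perm.mul_apply, Equiv.swap_apply_of_ne_of_ne hxa h2, hσ x hxs]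

lemma exists_finite_quotient {γ : Type} (x : FreeGroup γ) (hx : x ≠ 1) :
    ∃ (Q : Type) (_ : Group Q) (_ : Fintype Q) (π : FreeGroup γ →* Q), π x ≠ 1 := by
  classical
  set L : List (γ × Bool) := x.toWord with hLdef
  set n : ℕ := L.length with hn
  have hn1 : 1 ≤ n := by
    have hne : L ≠ [] := fun h => hx (FreeGroup.toWord_eq_nil_iff.mp h)
    have := List.length_pos_iff.mpr hne
    omega
  set L' : List (γ × Bool) := L.reverse with hL'
  have hlen' : L'.length = n := by simp [hL', hn]
  have hred : ∀ (i : ℕ) (a : γ) (b : Bool),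
      ¬ (L[i]? = some (a, b) ∧ L[i+1]? = some (a, !b)) := by
    rintro i a b ⟨h1, h2⟩
    obtain ⟨hi1, he1⟩ := List.getElem?_eq_some_iff.mp h1
    obtain ⟨hi2, he2⟩ := List.getElem?_eq_some_iff.mp h2
    have hsplit : L = L.take i ++ (a, b) :: (a, !b) :: L.drop (i+2) := by
      conv_lhs => rw [← List.take_append_drop i L]
      rw [List.drop_eq_getElem_cons hi1, he1, List.drop_eq_getElem_cons hi2, he2]
    have hr : FreeGroup.reduce L = L := FreeGroup.reduce_toWord x
    exact FreeGroup.reduce.not (hr.trans hsplit)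
  have hred' : ∀ (j : ℕ) (a : γ) (b : Bool),
      ¬ (L'[j]? = some (a, b) ∧ L'[j+1]? = some (a, !b)) := by
    rintro j a b ⟨h1, h2⟩
    have hj2 : j + 1 < n := hlen' ▸ (List.getElem?_eq_some_iff.mp h2).1
    rw [hL', List.getElem?_reverse (show j < L.length by omega)] at h1
    rw [hL', List.getElem?_reverse (show j + 1 < L.length by omega)] at h2
    have e1 : L.length - 1 - j = (n - 2 - j) + 1 := by omega
    have e2 : L.length - 1 - (j+1) = n - 2 - j := by omega
    rw [e1] at h1
    rw [e2] at h2
    exact hred (n - 2 - j) a (!b) ⟨h2, by rwa [Bool.not_not]⟩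
  -- the permutations
  let g : γ → ZMod (n+1) → ZMod (n+1) := fun a k =>
    if L'[k.val]? = some (a, true) then k + 1
    else if L'[k.val - 1]? = some (a, false) ∧ k.val ≠ 0 then k - 1 else k
  let s : γ → Finset (ZMod (n+1)) := fun a =>
    Finset.univ.filter fun k =>
      L'[k.val]? = some (a, true) ∨ (L'[k.val - 1]? = some (a, false) ∧ k.val ≠ 0)
  have hkv : ∀ k : ZMod (n+1), ((k.val : ℕ) : ZMod (n+1)) = k := fun k =>
    ZMod.natCast_rightInverse k
  have hcast : ∀ j : ℕ, j < n + 1 → ((j : ZMod (n+1)).val = j) := fun j h =>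
    ZMod.val_cast_of_lt h
  have castinj : ∀ j j' : ℕ, j < n + 1 → j' < n + 1 →
      ((j : ZMod (n+1)) = (j' : ZMod (n+1))) → j = j' := by
    intro j j' h h' he
    have := congrArg ZMod.val he
    rwa [hcast j h, hcast j' h'] at this
  have hdesc : ∀ (a : γ) (k : ZMod (n+1)), k ∈ s a → ∃ j : ℕ, j < n ∧
      ((k = (j : ZMod (n+1)) ∧ g a k = ((j+1 : ℕ) : ZMod (n+1)) ∧ L'[j]? = some (a, true)) ∨
       (k = ((j+1 : ℕ) : ZMod (n+1)) ∧ g a k = (j : ZMod (n+1)) ∧ L'[j]? = some (a, false))) := by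
    intro a k hk
    rw [Finset.mem_filter] at hk
    by_cases h1 : L'[k.val]? = some (a, true)
    · refine ⟨k.val, ?_, Or.inl ⟨(hkv k).symm, ?_, h1⟩⟩
      · have := (List.getElem?_eq_some_iff.mp h1).1; omega
      · show g a k = _
        simp only [g, if_pos h1]
        push_cast
        rw [hkv]
    · have h2 := hk.2.resolve_left h1
      have hk0 : k.val ≠ 0 := h2.2
      refine ⟨k.val - 1, ?_, Or.inr ⟨?_, ?_, h2.1⟩⟩
      · have := (List.getElem?_eq_some_iff.mp h2.1).1
        omega
      · rw [show k.val - 1 + 1 = k.val by omega]; exact (hkv k).symm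
      · show g a k = _
        simp only [g, if_neg h1, if_pos h2]
        conv_lhs => rw [← hkv k, show k.val = k.val - 1 + 1 from by omega]
        push_cast
        ring
  have hinj : ∀ a : γ, Set.InjOn (g a) (s a) := by
    intro a k₁ hk₁ k₂ hk₂ heq
    obtain ⟨j₁, hj₁, hc₁⟩ := hdesc a k₁ hk₁
    obtain ⟨j₂, hj₂, hc₂⟩ := hdesc a k₂ hk₂
    rcases hc₁ with ⟨e₁, v₁, w₁⟩ | ⟨e₁, v₁, w₁⟩ <;>
      rcases hc₂ with ⟨e₂, v₂, w₂⟩ | ⟨e₂, v₂, w₂⟩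
    · rw [v₁, v₂] at heq
      have := castinj _ _ (by omega) (by omega) heq
      rw [e₁, e₂, show j₁ = j₂ by omega]
    · rw [v₁, v₂] at heq
      have := castinj _ _ (by omega) (by omega) heq
      exfalso
      apply hred' j₁ a true
      refine ⟨w₁, ?_⟩
      rw [show j₁ + 1 = j₂ by omega]
      simpa using w₂
    · rw [v₁, v₂] at heq
      have := castinj _ _ (by omega) (by omega) heq
      exfalso
      apply hred' j₂ a true
      refine ⟨w₂, ?_⟩
      rw [show j₂ + 1 = j₁ by omega]
      simpa using w₁
    · rw [v₁, v₂] at heq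
      have := castinj _ _ (by omega) (by omega) heq
      rw [e₁, e₂, show j₁ = j₂ by omega]
  choose σ hσ using fun a => exists_perm_extend (g a) (s a) (hinj a)
  have hPt : ∀ (j : ℕ) (a : γ), L'[j]? = some (a, true) →
      σ a ((j : ℕ) : ZMod (n+1)) = ((j+1 : ℕ) : ZMod (n+1)) := by
    intro j a hj
    have hjn : j < n := hlen' ▸ (List.getElem?_eq_some_iff.mp hj).1
    have hval : ((j : ℕ) : ZMod (n+1)).val = j := hcast j (by omega)
    have hmem : ((j : ℕ) : ZMod (n+1)) ∈ s a :=
      Finset.mem_filter.mpr ⟨Finset.mem_univ _, Or.inl (by rw [hval]; exact hj)⟩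
    rw [hσ a _ hmem]
    simp only [g, hval]
    rw [if_pos hj]
    push_cast
    ring
  have hPf : ∀ (j : ℕ) (a : γ), L'[j]? = some (a, false) →
      σ a ((j+1 : ℕ) : ZMod (n+1)) = ((j : ℕ) : ZMod (n+1)) := by
    intro j a hj
    have hjn : j < n := hlen' ▸ (List.getElem?_eq_some_iff.mp hj).1
    have hval : ((j+1 : ℕ) : ZMod (n+1)).val = j + 1 := hcast (j+1) (by omega)
    have hnot1 : ¬ (L'[((j+1 : ℕ) : ZMod (n+1)).val]? = some (a, true)) := by
      rw [hval]
      intro hcon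
      exact hred' j a false ⟨hj, by simpa using hcon⟩
    have hmem : ((j+1 : ℕ) : ZMod (n+1)) ∈ s a :=
      Finset.mem_filter.mpr ⟨Finset.mem_univ _,
        Or.inr ⟨by rw [hval]; simpa using hj, by rw [hval]; omega⟩⟩
    rw [hσ a _ hmem]
    simp only [g, if_neg hnot1, hval]
    rw [if_pos ⟨by simpa using hj, by omega⟩]
    push_cast
    ring
  set π : FreeGroup γ →* Equiv.Perm (ZMod (n+1)) := FreeGroup.lift σ with hπ
  have main : ∀ k : ℕ, k ≤ n →
      (π (FreeGroup.mk ((L'.take k).reverse))) 0 = ((k : ℕ) : ZMod (n+1)) := by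
    intro k
    induction k with
    | zero =>
      intro _
      have : FreeGroup.mk ((L'.take 0).reverse) = 1 := by
        simp [FreeGroup.one_eq_mk]
      rw [this]
      simp
    | succ k ih =>
      intro hk
      have hkn : k < L'.length := by omega
      rcases hu : L'[k] with ⟨a, b⟩
      have hu? : L'[k]? = some (a, b) := by rw [List.getElem?_eq_getElem hkn, hu]
      have htake : L'.take (k+1) = L'.take k ++ [(a, b)] := by
        rw [List.take_succ, hu?]
        rfl
      have hrev : (L'.take (k+1)).reverse = (a, b) :: (L'.take k).reverse := by
        rw [htake]
        simp
      have hsplitmk : FreeGroup.mk ((L'.take (k+1)).reverse) =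
          FreeGroup.mk [(a, b)] * FreeGroup.mk ((L'.take k).reverse) := by
        rw [hrev, FreeGroup.mul_mk]
        rfl
      rw [hsplitmk, map_mul]
      have ihv := ih (by omega)
      rw [Equiv.Perm.mul_apply, ihv]
      cases b with
      | true =>
        have : FreeGroup.mk [(a, true)] = FreeGroup.of a := rfl
        rw [this, hπ, FreeGroup.lift_apply_of]
        exact hPt k a hu?
      | false =>
        have hofinv : FreeGroup.mk [(a, false)] = (FreeGroup.of a)⁻¹ := by
          show FreeGroup.mk [(a, false)] = (FreeGroup.mk [(a, true)])⁻¹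
          rw [FreeGroup.inv_mk]
          rfl
        rw [hofinv, map_inv, hπ, FreeGroup.lift_apply_of]
        apply (σ a).injective
        rw [Equiv.Perm.inv_def, Equiv.apply_symm_apply]
        have hh := hPf k a hu?
        push_cast at hh ⊢
        exact hh.symm
  have hLx : FreeGroup.mk ((L'.take n).reverse) = x := by
    rw [← hlen', List.take_length, hL', List.reverse_reverse, hLdef, FreeGroup.mk_toWord]
  have h0 : (π x) 0 = ((n : ℕ) : ZMod (n+1)) := by
    rw [← hLx]
    exact main n le_rfl
  refine ⟨Equiv.Perm (ZMod (n+1)), inferInstance, inferInstance, π, ?_⟩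
  intro h1
  rw [h1] at h0
  have h2 : (0 : ZMod (n+1)) = ((n : ℕ) : ZMod (n+1)) := by simpa using h0
  have h3 := congrArg ZMod.val h2
  rw [ZMod.val_zero, ZMod.val_cast_of_lt (by omega)] at h3
  omega

lemma freeGroup_hopfian {ι : Type} [Finite ι] (f : FreeGroup ι →* FreeGroup ι)
    (hf : Surjective f) : Injective f := by
  rw [injective_iff_map_eq_one]
  intro x hfx
  by_contra hx1
  obtain ⟨Q, _, _, π, hπ⟩ := exists_finite_quotient x hx1
  have hfin : Finite (FreeGroup ι →* Q) := Finite.of_equiv _ FreeGroup.lift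
  have hcomp : Injective (fun ψ : FreeGroup ι →* Q => ψ.comp f) := by
    intro ψ1 ψ2 h
    apply MonoidHom.ext
    intro y
    obtain ⟨z, rfl⟩ := hf y
    exact DFunLike.congr_fun h z
  obtain ⟨ψ, hψ⟩ := (Finite.injective_iff_surjective.mp hcomp) π
  apply hπ
  rw [← hψ]
  show ψ (f x) = 1
  rw [hfx, map_one]

lemma lift_inj_fin {α ι : Type} [Fintype ι] (t : ι → FreeGroup α)
    (h : LinearIndependent ℤ fun i =>
      (Additive.ofMul (Abelianization.of (t i)) : Additive (Abelianization (FreeGroup α)))) :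
    Injective (FreeGroup.lift t) := by
  classical
  set φ : FreeGroup ι →* FreeGroup α := FreeGroup.lift t with hφ
  set H : Subgroup (FreeGroup α) := φ.range with hH
  set ψ : FreeGroup ι →* H := φ.rangeRestrict with hψ
  have hψsurj : Surjective ψ := φ.rangeRestrict_surjective
  -- H is a free group (Nielsen–Schreier)
  let β := IsFreeGroup.Generators H
  let e : H ≃* FreeGroup β := IsFreeGroup.toFreeGroup H
  -- abelianizations as ℤ-modules
  let MH := Additive (Abelianization H)
  let bH : Module.Basis β ℤ MH :=
    (FreeAbelianGroup.basis β).map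
      (AddEquiv.toIntLinearEquiv (MulEquiv.toAdditive (e.symm.abelianizationCongr)))
  have hofsurj : Surjective (Abelianization.of : H → Abelianization H) := fun y =>
    QuotientGroup.induction_on y fun z => ⟨z, rfl⟩
  have hmapsurj : Surjective (Abelianization.map ψ) := by
    intro y
    obtain ⟨z, rfl⟩ := hofsurj y
    obtain ⟨w, rfl⟩ := hψsurj z
    exact ⟨Abelianization.of w, Abelianization.map_of _ _⟩
  -- rank comparison
  have hrank1 : Module.rank ℤ MH ≤ (Fintype.card ι : Cardinal) := by
    have hsurjL : Surjective
        ((MonoidHom.toAdditive (Abelianization.map ψ)).toIntLinearMap :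
          FreeAbelianGroup ι →ₗ[ℤ] MH) := hmapsurj
    calc Module.rank ℤ MH ≤ Module.rank ℤ (FreeAbelianGroup ι) :=
          LinearMap.rank_le_of_surjective _ hsurjL
      _ = (Fintype.card ι : Cardinal) := by
          rw [← (FreeAbelianGroup.basis ι).mk_eq_rank'', Cardinal.mk_fintype]
  have hrank2 : (Fintype.card ι : Cardinal) ≤ Module.rank ℤ MH := by
    let v : ι → MH := fun i => Additive.ofMul (Abelianization.of (ψ (FreeGroup.of i)))
    let LJ : MH →ₗ[ℤ] Additive (Abelianization (FreeGroup α)) :=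
      (MonoidHom.toAdditive (Abelianization.map H.subtype)).toIntLinearMap
    have hvind : LinearIndependent ℤ v := by
      apply LinearIndependent.of_comp LJ
      have : (LJ ∘ v) = fun i =>
          (Additive.ofMul (Abelianization.of (t i)) : Additive (Abelianization (FreeGroup α))) := by
        funext i
        show Additive.ofMul (Abelianization.map H.subtype (Abelianization.of (ψ (FreeGroup.of i))))
          = Additive.ofMul (Abelianization.of (t i))
        have h2 : H.subtype (ψ (FreeGroup.of i)) = t i := by
          show φ (FreeGroup.of i) = t i
          rw [hφ, FreeGroup.lift_apply_of]
        rw [Abelianization.map_of, h2]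
      rw [this]
      exact h
    simpa [Cardinal.mk_fintype] using hvind.cardinal_le_rank
  have hcard : Nonempty (β ≃ ι) := by
    rw [← Cardinal.eq, bH.mk_eq_rank'', Cardinal.mk_fintype ι]
    exact le_antisymm hrank1 hrank2
  obtain ⟨eq⟩ := hcard
  -- the Hopfian argument
  have hfinι : Finite ι := inferInstance
  let θ : FreeGroup ι →* FreeGroup ι :=
    ((FreeGroup.freeGroupCongr eq).toMonoidHom.comp e.toMonoidHom).comp ψ
  have hθsurj : Surjective θ := by
    show Surjective ⇑(((FreeGroup.freeGroupCongr eq).toMonoidHom.comp e.toMonoidHom).comp ψ)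
    simp only [MonoidHom.coe_comp, MulEquiv.coe_toMonoidHom]
    exact ((FreeGroup.freeGroupCongr eq).surjective.comp e.surjective).comp hψsurj
  have hθinj : Injective θ := freeGroup_hopfian θ hθsurj
  have hψinj : Injective ψ := by
    intro a b hab
    apply hθinj
    show (FreeGroup.freeGroupCongr eq) (e (ψ a)) = (FreeGroup.freeGroupCongr eq) (e (ψ b))
    rw [hab]
  intro a b hab
  apply hψinj
  apply Subtype.coe_injective
  exact hab

lemma lift_inj {α ι : Type} (t : ι → FreeGroup α)
    (h : LinearIndependent ℤ fun i =>
      (Additive.ofMul (Abelianization.of (t i)) : Additive (Abelianization (FreeGroup α)))) :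
    Injective (FreeGroup.lift t) := by
  classical
  rw [injective_iff_map_eq_one]
  intro w hw
  set T : Finset ι := (w.toWord.map Prod.fst).toFinset with hT
  let w' : FreeGroup {i // i ∈ T} :=
    FreeGroup.mk (w.toWord.attach.map fun p =>
      (⟨p.1.1, by
        rw [hT, List.mem_toFinset]
        exact List.mem_map.mpr ⟨p.1, p.2, rfl⟩⟩, p.1.2))
  have hmapw : FreeGroup.map Subtype.val w' = w := by
    show FreeGroup.map Subtype.val (FreeGroup.mk _) = w
    rw [FreeGroup.map.mk]
    rw [List.map_map]
    have : w.toWord.attach.map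
        ((fun x : {i // i ∈ T} × Bool => (Subtype.val x.1, x.2)) ∘ fun p =>
          ((⟨p.1.1, by
            rw [hT, List.mem_toFinset]
            exact List.mem_map.mpr ⟨p.1, p.2, rfl⟩⟩ : {i // i ∈ T}), p.1.2)) =
        w.toWord.attach.map (fun p => p.1) := by
      apply List.map_congr_left
      intro p _
      rfl
    rw [this, List.attach_map_subtype_val, FreeGroup.mk_toWord]
  have hcomp : (FreeGroup.lift t).comp (FreeGroup.map (Subtype.val : {i // i ∈ T} → ι)) =
      FreeGroup.lift (fun i : {i // i ∈ T} => t i.1) := by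
    apply FreeGroup.ext_hom
    intro a
    simp
  have hval : FreeGroup.lift (fun i : {i // i ∈ T} => t i.1) w' = 1 := by
    rw [← hcomp]
    show FreeGroup.lift t (FreeGroup.map Subtype.val w') = 1
    rw [hmapw, hw]
  have hind : LinearIndependent ℤ fun i : {i // i ∈ T} =>
      (Additive.ofMul (Abelianization.of (t i.1)) : Additive (Abelianization (FreeGroup α))) :=
    h.comp Subtype.val Subtype.val_injective
  have hinj := lift_inj_fin (fun i : {i // i ∈ T} => t i.1) hind
  have hw' : w' = 1 := by
    apply hinj
    rw [hval, map_one]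
  rw [← hmapw, hw', map_one]

/-- `S` is a free basis of the subgroup `H` of `G`: the homomorphism from the free
group on `S` induced by the inclusion `S → G` is injective with range `H`. -/
def IsFreeBasis {G : Type*} [Group G] (S : Set G) (H : Subgroup G) : Prop :=
  Function.Injective (FreeGroup.lift ((↑) : S → G)) ∧
    (FreeGroup.lift ((↑) : S → G)).range = H

/-- If a generating set `S` of a free group `F` projects to a `ℤ`-basis of the
abelianization `F^ab`, then `S` is a free basis of `F`. -/
theorem stmt0 (α : Type) (S : Set (FreeGroup α))
    (hgen : Subgroup.closure S = ⊤)
    (hbasis : ∃ b : Module.Basis S ℤ (Additive (Abelianization (FreeGroup α))),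
      ∀ s : S, b s = Additive.ofMul (Abelianization.of (s : FreeGroup α))) :
    IsFreeBasis S (⊤ : Subgroup (FreeGroup α)) := by
  obtain ⟨b, hb⟩ := hbasis
  constructor
  · apply lift_inj
    have : (fun s : S =>
        (Additive.ofMul (Abelianization.of ((s : FreeGroup α))) :
          Additive (Abelianization (FreeGroup α)))) = fun s : S => b s := by
      funext s
      rw [hb s]
    rw [this]
    exact b.linearIndependent
  · rw [FreeGroup.range_lift_eq_closure, Subtype.range_coe, hgen]
end

section
/- Finite-rank free groups are Hopfian: every surjective group homomorphism from a free group of finite rank to itself is an isomorphism. -/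
section Aux

lemma extend_to_perm {X : Type*} [Fintype X] [DecidableEq X] (f : X → X) (s : Finset X)
    (h : Set.InjOn f s) : ∃ σ : Equiv.Perm X, ∀ x ∈ s, σ x = f x := by
  classical
  set t : Finset X := s.image f with ht
  have hcard : s.card = t.card := (Finset.card_image_of_injOn h).symm
  set g : {x // x ∈ s} → {x // x ∈ t} := fun x => ⟨f x, Finset.mem_image_of_mem f x.2⟩ with hg
  have hgb : Function.Bijective g := by
    constructor
    · rintro ⟨x, hx⟩ ⟨y, hy⟩ hxy
      exact Subtype.ext (h hx hy (congrArg Subtype.val hxy))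
    · rintro ⟨y, hy⟩
      obtain ⟨x, hx, rfl⟩ := Finset.mem_image.mp hy
      exact ⟨⟨x, hx⟩, rfl⟩
  set e1 : {x // x ∈ s} ≃ {x // x ∈ t} := Equiv.ofBijective g hgb with he1
  have hcard2 : sᶜ.card = tᶜ.card := by
    simp [Finset.card_compl, hcard]
  set e2 : {x // x ∉ s} ≃ {x // x ∉ t} :=
    ((Equiv.subtypeEquivRight (fun x => (Finset.mem_compl).symm)).trans
      (Finset.equivOfCardEq hcard2)).trans
      (Equiv.subtypeEquivRight (fun x => Finset.mem_compl)) with he2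
  refine ⟨((Equiv.sumCompl (· ∈ s)).symm.trans ((e1.sumCongr e2).trans
    (Equiv.sumCompl (· ∈ t)))), fun x hx => ?_⟩
  simp [Equiv.sumCompl_symm_apply_of_pos hx, he1, Equiv.ofBijective_apply, hg]

/-- A list of letters has no adjacent cancelling pair. -/
def NoCancel {α : Type*} (r : List (α × Bool)) : Prop :=
  ∀ (j : ℕ) (a : α) (b : Bool), ¬(r[j]? = some (a, b) ∧ r[j + 1]? = some (a, !b))

lemma split_of_get {X : Type*} (L : List X) (j : ℕ) (p q : X)
    (h1 : L[j]? = some p) (h2 : L[j+1]? = some q) :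
    L = L.take j ++ p :: q :: L.drop (j+2) := by
  have hj : j < L.length := (List.getElem?_eq_some_iff.mp h1).1
  have hj2 : j + 1 < L.length := (List.getElem?_eq_some_iff.mp h2).1
  have d1 : L.drop j = L[j] :: L.drop (j+1) := List.drop_eq_getElem_cons hj
  have d2 : L.drop (j+1) = L[j+1] :: L.drop (j+2) := List.drop_eq_getElem_cons hj2
  have e1 : L[j] = p := by simpa [List.getElem?_eq_getElem hj] using h1
  have e2 : L[j+1] = q := by simpa [List.getElem?_eq_getElem hj2] using h2
  conv_lhs => rw [← List.take_append_drop j L]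
  rw [d1, d2, e1, e2]

variable {α : Type*} [DecidableEq α]

/-- The reverse of the reduced word of a nontrivial element has no cancelling pair. -/
lemma noCancel_reverse_toWord (x : FreeGroup α) : NoCancel x.toWord.reverse := by
  intro j a b ⟨h1, h2⟩
  set L := x.toWord with hL
  have hlen : L.reverse.length = L.length := List.length_reverse
  have hj2 : j + 1 < L.length := by
    have := (List.getElem?_eq_some_iff.mp h2).1
    omega
  have hj : j < L.length := by omega
  have h1' : L[L.length - 1 - j]? = some (a, b) := by
    rw [← List.getElem?_reverse (by omega)]; exact h1
  have h2' : L[L.length - 1 - (j+1)]? = some (a, !b) := by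
    rw [← List.getElem?_reverse (by omega)]; exact h2
  set i := L.length - 1 - (j + 1) with hi
  have hii : L.length - 1 - j = i + 1 := by omega
  rw [hii] at h1'
  have hbb : (a, b) = (a, !(!b)) := by simp
  rw [hbb] at h1'
  have hsplit := split_of_get L i (a, !b) (a, !(!b)) h2' h1'
  have hred : FreeGroup.reduce L = L := FreeGroup.reduce_toWord x
  exact FreeGroup.reduce.not (hred.trans hsplit)

variable (r : List (α × Bool))

/-- Partial shift map along a word. -/
def pshift (a : α) (v : Fin (r.length + 1)) : Fin (r.length + 1) :=
  if h : r[v.val]? = some (a, true) then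
    ⟨v.val + 1, by
      have := (List.getElem?_eq_some_iff.mp h).1
      omega⟩
  else if v.val ≠ 0 ∧ r[v.val - 1]? = some (a, false) then
    ⟨v.val - 1, by omega⟩
  else v

/-- The active domain of the partial shift. -/
def sdom (a : α) : Finset (Fin (r.length + 1)) :=
  Finset.univ.filter
    (fun v => r[v.val]? = some (a, true) ∨ (v.val ≠ 0 ∧ r[v.val - 1]? = some (a, false)))

lemma pshift_injOn (hr : NoCancel r) (a : α) : Set.InjOn (pshift r a) (sdom r a) := by
  intro u hu v hv huv
  simp only [sdom, Finset.coe_filter, Finset.mem_univ, true_and, Set.mem_setOf_eq] at hu hv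
  unfold pshift at huv
  by_cases hu1 : r[u.val]? = some (a, true) <;>
    by_cases hv1 : r[v.val]? = some (a, true)
  · rw [dif_pos hu1, dif_pos hv1] at huv
    exact Fin.ext (by simpa using congrArg Fin.val huv)
  · have hv2 : v.val ≠ 0 ∧ r[v.val - 1]? = some (a, false) := hv.resolve_left hv1
    rw [dif_pos hu1, dif_neg hv1, if_pos hv2] at huv
    have hval : u.val + 1 = v.val - 1 := congrArg Fin.val huv
    exact absurd ⟨hu1, by rw [hval]; exact hv2.2⟩ (hr u.val a true)
  · have hu2 : u.val ≠ 0 ∧ r[u.val - 1]? = some (a, false) := hu.resolve_left hu1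
    rw [dif_neg hu1, if_pos hu2, dif_pos hv1] at huv
    have hval : u.val - 1 = v.val + 1 := congrArg Fin.val huv
    exact absurd ⟨hv1, by rw [← hval]; exact hu2.2⟩ (hr v.val a true)
  · have hu2 : u.val ≠ 0 ∧ r[u.val - 1]? = some (a, false) := hu.resolve_left hu1
    have hv2 : v.val ≠ 0 ∧ r[v.val - 1]? = some (a, false) := hv.resolve_left hv1
    rw [dif_neg hu1, if_pos hu2, dif_neg hv1, if_pos hv2] at huv
    have hval : u.val - 1 = v.val - 1 := congrArg Fin.val huv
    exact Fin.ext (by omega)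

lemma exists_perm_hom_ne_one (x : FreeGroup α) (hx : x ≠ 1) :
    ∃ (k : ℕ) (φ : FreeGroup α →* Equiv.Perm (Fin (k + 1))), φ x ≠ 1 := by
  classical
  have hr : NoCancel x.toWord.reverse := noCancel_reverse_toWord x
  choose σ hσ using fun a =>
    extend_to_perm (pshift x.toWord.reverse a) (sdom x.toWord.reverse a)
      (pshift_injOn x.toWord.reverse hr a)
  have hkpos : 0 < x.toWord.reverse.length := by
    rw [List.length_reverse]
    exact List.length_pos_iff.mpr (fun h => hx (FreeGroup.toWord_eq_nil_iff.mp h))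
  have key1 : ∀ (a : α) (v : Fin (x.toWord.reverse.length + 1)),
      x.toWord.reverse[v.val]? = some (a, true) → ((σ a) v).val = v.val + 1 := by
    intro a v h
    have hv : v ∈ sdom x.toWord.reverse a := by
      simp only [sdom, Finset.mem_filter, Finset.mem_univ, true_and]
      exact Or.inl h
    rw [hσ a v hv]
    unfold pshift
    rw [dif_pos h]
  have key2 : ∀ (a : α) (v : Fin (x.toWord.reverse.length + 1)), v.val ≠ 0 →
      x.toWord.reverse[v.val - 1]? = some (a, false) → ((σ a) v).val = v.val - 1 := by
    intro a v h0 h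
    have hv : v ∈ sdom x.toWord.reverse a := by
      simp only [sdom, Finset.mem_filter, Finset.mem_univ, true_and]
      exact Or.inr ⟨h0, h⟩
    rw [hσ a v hv]
    unfold pshift
    have hnot : ¬(x.toWord.reverse[v.val]? = some (a, true)) := by
      intro hcon
      refine hr (v.val - 1) a false ⟨h, ?_⟩
      have : v.val - 1 + 1 = v.val := by omega
      rw [this]
      simpa using hcon
    rw [dif_neg hnot, if_pos ⟨h0, h⟩]
  set F : α × Bool → Equiv.Perm (Fin (x.toWord.reverse.length + 1)) :=
    fun p => cond p.2 (σ p.1) (σ p.1)⁻¹ with hF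
  have claim : ∀ (j : ℕ) (hj : j < x.toWord.reverse.length + 1),
      (((x.toWord.reverse.take j).map F).reverse).prod ⟨0, Nat.succ_pos _⟩ = ⟨j, hj⟩ := by
    intro j
    induction j with
    | zero => intro hj; simp
    | succ j ih =>
      intro hj
      have hjk : j < x.toWord.reverse.length := by omega
      have hget : x.toWord.reverse[j]? = some (x.toWord.reverse[j]) :=
        List.getElem?_eq_getElem hjk
      have hget' : x.toWord.reverse[j]? = some (x.toWord.reverse[j]) := by
        exact hget
      rw [List.take_succ, hget]
      simp only [Option.toList_some, List.map_append, List.map_cons, List.map_nil,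
        List.reverse_append, List.reverse_cons, List.reverse_nil, List.nil_append,
        List.singleton_append, List.prod_cons, Equiv.Perm.mul_apply]
      rw [ih (by omega)]
      rcases hab : x.toWord.reverse[j] with ⟨a, b⟩
      cases b with
      | true =>
        have : F (a, true) = σ a := rfl
        rw [this]
        refine Fin.ext ?_
        rw [key1 a ⟨j, by omega⟩ (by rw [hget']; rw [hab])]
      | false =>
        have hF2 : F (a, false) = (σ a)⁻¹ := rfl
        rw [hF2]
        have h2 : σ a ⟨j + 1, hj⟩ = ⟨j, by omega⟩ := by
          refine Fin.ext ?_
          have := key2 a ⟨j + 1, hj⟩ (by simp) (by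
            simp only []
            have : j + 1 - 1 = j := by omega
            rw [this, hget', hab])
          simpa using this
        rw [← h2]; exact (σ a).symm_apply_apply _
  refine ⟨x.toWord.reverse.length, FreeGroup.lift σ, ?_⟩
  intro h1
  have h1' : FreeGroup.lift σ (FreeGroup.mk x.toWord) = 1 := by
    rw [FreeGroup.mk_toWord]; exact h1
  have heval : FreeGroup.lift σ (FreeGroup.mk x.toWord) = ((x.toWord.map F).prod) :=
    FreeGroup.lift_mk
  have hrev : x.toWord.map F = ((x.toWord.reverse.take x.toWord.reverse.length).map F).reverse := by
    rw [List.take_length, ← List.map_reverse, List.reverse_reverse]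
  have hval := claim x.toWord.reverse.length (by omega)
  rw [← hrev] at hval
  rw [← heval, h1'] at hval
  have : (0 : ℕ) = x.toWord.reverse.length := by
    have := congrArg Fin.val hval
    simpa using this
  omega

end Aux

/-- Finite-rank free groups are Hopfian: every surjective endomorphism of a
free group of finite rank is an isomorphism (i.e. bijective). -/
theorem stmt1 (n : ℕ) (f : FreeGroup (Fin n) →* FreeGroup (Fin n))
    (hf : Function.Surjective f) : Function.Bijective f := by
  refine ⟨?_, hf⟩
  rw [injective_iff_map_eq_one f]
  intro x hx1
  by_contra hx
  obtain ⟨k, φ, hφ⟩ := exists_perm_hom_ne_one x hx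
  haveI : Finite (FreeGroup (Fin n) →* Equiv.Perm (Fin (k + 1))) :=
    Finite.of_equiv _ FreeGroup.lift
  have hinj : Function.Injective
      (fun ψ : FreeGroup (Fin n) →* Equiv.Perm (Fin (k + 1)) => ψ.comp f) := by
    intro ψ1 ψ2 h
    refine MonoidHom.ext fun z => ?_
    obtain ⟨y, rfl⟩ := hf z
    exact DFunLike.congr_fun h y
  obtain ⟨ψ, hψ⟩ := Finite.injective_iff_surjective.mp hinj φ
  apply hφ
  have := DFunLike.congr_fun hψ x
  simp only [MonoidHom.comp_apply] at this
  rw [← this, hx1, map_one]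
end

section
/- A surjective group homomorphism between free groups of the same finite rank is an isomorphism. -/
/-- A word is *good* if it has no adjacent cancelling pair. -/
def FGAux.good {α : Type} (R : List (α × Bool)) : Prop :=
  ∀ (j : ℕ) (a : α) (b : Bool), R[j]? = some (a, b) → R[j+1]? ≠ some (a, !b)

namespace FGAux

variable {α : Type} {R : List (α × Bool)} {a : α}

/-- Source predicate on `Fin (R.length + 1)` for the partial injection of generator `a`. -/
def src (R : List (α × Bool)) (a : α) (j : Fin (R.length + 1)) : Prop :=
  R[(j : ℕ)]? = some (a, true) ∨ (0 < (j : ℕ) ∧ R[(j : ℕ) - 1]? = some (a, false))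

/-- Target predicate. -/
def tgt (R : List (α × Bool)) (a : α) (j : Fin (R.length + 1)) : Prop :=
  (0 < (j : ℕ) ∧ R[(j : ℕ) - 1]? = some (a, true)) ∨ R[(j : ℕ)]? = some (a, false)

open Classical in
/-- The partial injection of generator `a` as an equivalence of subtypes. -/
noncomputable def pinj (hR : good R) (a : α) :
    {j : Fin (R.length + 1) // src R a j} ≃ {j : Fin (R.length + 1) // tgt R a j} where
  toFun jh :=
    if h : R[(jh.1 : ℕ)]? = some (a, true) then
      ⟨⟨(jh.1 : ℕ) + 1, by
        have := (List.getElem?_eq_some_iff.1 h).1; omega⟩,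
        Or.inl ⟨by simp, by simpa using h⟩⟩
    else
      ⟨⟨(jh.1 : ℕ) - 1, by omega⟩,
        Or.inr (by
          have h2 := jh.2.resolve_left h
          have h3 : (jh.1 : ℕ) - 1 ≤ (jh.1 : ℕ) := by omega
          simpa using h2.2)⟩
  invFun jh :=
    if h : 0 < (jh.1 : ℕ) ∧ R[(jh.1 : ℕ) - 1]? = some (a, true) then
      ⟨⟨(jh.1 : ℕ) - 1, by omega⟩, Or.inl (by simpa using h.2)⟩
    else
      ⟨⟨(jh.1 : ℕ) + 1, by
        have h2 := jh.2.resolve_left h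
        have := (List.getElem?_eq_some_iff.1 h2).1; omega⟩,
        Or.inr ⟨by simp, by simpa using jh.2.resolve_left h⟩⟩
  left_inv jh := by
    obtain ⟨⟨j, hjn⟩, hj⟩ := jh
    dsimp only
    by_cases h : R[j]? = some (a, true)
    · rw [dif_pos h, dif_pos (by simpa using h : 0 < j + 1 ∧ R[j + 1 - 1]? = some (a, true))]
      refine Subtype.ext (Fin.ext ?_)
      try simp
      all_goals omega
    · rw [dif_neg h]
      have h2 := hj.resolve_left h
      have hne : ¬ (0 < j - 1 ∧ R[j - 1 - 1]? = some (a, true)) := by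
        rintro ⟨h3, h4⟩
        exact hR (j - 1 - 1) a true h4 (by
          rw [show j - 1 - 1 + 1 = j - 1 by omega]
          simpa using h2.2)
      rw [dif_neg hne]
      have h0 : 0 < j := h2.1
      refine Subtype.ext (Fin.ext ?_)
      try simp
      all_goals omega
  right_inv jh := by
    obtain ⟨⟨j, hjn⟩, hj⟩ := jh
    dsimp only
    by_cases h : 0 < j ∧ R[j - 1]? = some (a, true)
    · rw [dif_pos h, dif_pos (by simpa using h.2)]
      refine Subtype.ext (Fin.ext ?_)
      try simp
      all_goals omega
    · rw [dif_neg h]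
      have h2 := hj.resolve_left h
      have hne : ¬ (R[j + 1]? = some (a, true)) := fun h3 =>
        hR j a false (by simpa using h2) (by simpa using h3)
      rw [dif_neg (by simpa using hne)]
      refine Subtype.ext (Fin.ext ?_)
      try simp
      all_goals omega

open Classical in
/-- The permutation of `Fin (R.length + 1)` attached to generator `a`. -/
noncomputable def sigma (hR : good R) (a : α) : Equiv.Perm (Fin (R.length + 1)) :=
  (pinj hR a).extendSubtype

theorem sigma_apply_true (hR : good R) {j : ℕ} (hjn : j < R.length + 1)
    (h : R[j]? = some (a, true)) :
    sigma hR a ⟨j, hjn⟩ = ⟨j + 1, by have := (List.getElem?_eq_some_iff.1 h).1; omega⟩ := by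
  classical
  have hs : src R a ⟨j, hjn⟩ := Or.inl h
  rw [sigma, Equiv.extendSubtype_apply_of_mem (pinj hR a) _ hs]
  show ((pinj hR a ⟨⟨j, hjn⟩, hs⟩ : {j // tgt R a j}) : Fin (R.length + 1)) = _
  simp only [pinj, Equiv.coe_fn_mk]
  rw [dif_pos h]

theorem sigma_apply_false (hR : good R) {j : ℕ} (hjn : j + 1 < R.length + 1)
    (h : R[j]? = some (a, false)) :
    sigma hR a ⟨j + 1, hjn⟩ = ⟨j, by omega⟩ := by
  classical
  have hs : src R a ⟨j + 1, hjn⟩ := Or.inr ⟨by simp, by simpa using h⟩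
  rw [sigma, Equiv.extendSubtype_apply_of_mem (pinj hR a) _ hs]
  show ((pinj hR a ⟨⟨j + 1, hjn⟩, hs⟩ : {j // tgt R a j}) : Fin (R.length + 1)) = _
  simp only [pinj, Equiv.coe_fn_mk]
  have hne : ¬ (R[j + 1]? = some (a, true)) := fun h3 =>
    hR j a false h (by simpa using h3)
  rw [dif_neg (by simpa using hne)]
  exact Fin.ext (by simp)

end FGAux

/-- Free groups are residually finite: every nontrivial element survives in some
homomorphism to a finite symmetric group. -/
theorem FGAux.residually_finite {α : Type} (w : FreeGroup α) (hw : w ≠ 1) :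
    ∃ (m : ℕ) (ψ : FreeGroup α →* Equiv.Perm (Fin (m + 1))), ψ w ≠ 1 := by
  classical
  set L := w.toWord with hL
  have hred : FreeGroup.reduce L = L := FreeGroup.reduce_toWord w
  have hlen : L.reverse.length = L.length := List.length_reverse
  -- L.reverse is good
  have hR : good L.reverse := by
    intro j a b h1 h2
    have hj1 : j + 1 < L.length := by
      have := (List.getElem?_eq_some_iff.1 h2).1; omega
    have e1 : L[L.length - 1 - j]? = some (a, b) := by
      rw [← List.getElem?_reverse (by omega)]; exact h1
    have e2 : L[L.length - 1 - (j + 1)]? = some (a, !b) := by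
      rw [← List.getElem?_reverse (by omega)]; exact h2
    rw [show L.length - 1 - j = (L.length - 1 - (j + 1)) + 1 by omega] at e1
    obtain ⟨hi1, ei1⟩ := List.getElem?_eq_some_iff.1 e2
    obtain ⟨hi2, ei2⟩ := List.getElem?_eq_some_iff.1 e1
    set i := L.length - 1 - (j + 1) with hidef
    have hdecomp : L = L.take i ++ (a, !b) :: (a, !(!b)) :: L.drop (i + 2) := by
      conv_lhs => rw [← List.take_append_drop i L]
      congr 1
      rw [List.drop_eq_getElem_cons (l := L) (i := i) (by omega), ei1,
        List.drop_eq_getElem_cons (l := L) (i := i + 1) (by omega), ei2, Bool.not_not]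
    exact FreeGroup.reduce.not (by rw [← hdecomp, hred])
  -- the homomorphism
  refine ⟨L.reverse.length, FreeGroup.lift (fun a => sigma hR a), ?_⟩
  -- key computation
  have key : ∀ (k i : ℕ) (hik : i + k = L.length),
      (((L.drop i).map fun x => cond x.2 (sigma hR x.1) (sigma hR x.1)⁻¹).prod)
        (⟨0, by omega⟩ : Fin (L.reverse.length + 1)) = ⟨k, by omega⟩ := by
    intro k
    induction k with
    | zero =>
      intro i hik
      have hnil : L.drop i = [] := List.drop_eq_nil_of_le (by omega)
      rw [hnil]
      simp
    | succ k ih =>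
      intro i hik
      have hiL : i < L.length := by omega
      rw [List.drop_eq_getElem_cons hiL, List.map_cons, List.prod_cons,
        Equiv.Perm.mul_apply, ih (i + 1) (by omega)]
      rcases hab : (L[i]'hiL) with ⟨a, b⟩
      have hRk : L.reverse[k]? = some (a, b) := by
        rw [List.getElem?_reverse (by omega), show L.length - 1 - k = i by omega,
          List.getElem?_eq_getElem hiL, hab]
      cases b with
      | false =>
        simp only [cond_false]
        have hs := sigma_apply_false hR (a := a) (j := k) (by omega) hRk
        rw [← hs, Equiv.Perm.inv_def, Equiv.symm_apply_apply]
      | true =>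
        simp only [cond_true]
        exact sigma_apply_true hR (by omega) hRk
  intro hcontra
  have hmk : FreeGroup.mk L = w := FreeGroup.mk_toWord
  have h2 : FreeGroup.lift (fun a => sigma hR a) (FreeGroup.mk L) = 1 := by
    rw [hmk]; exact hcontra
  rw [FreeGroup.lift_mk] at h2
  have h3 := key L.length 0 (by omega)
  rw [List.drop_zero, h2] at h3
  have hn1 : 1 ≤ L.length := by
    rcases Nat.eq_zero_or_pos L.length with h | h
    · exact absurd (FreeGroup.toWord_eq_nil_iff.1 (List.length_eq_zero_iff.1 h)) hw
    · exact h
  have : (0 : ℕ) = L.length := by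
    have := congrArg Fin.val h3
    simpa using this
  omega

/-- A surjective homomorphism between free groups of the same finite rank is an
isomorphism (i.e. bijective). -/
theorem stmt2 (α β : Type) [Finite α] [Finite β] (h : Nat.card α = Nat.card β)
    (f : FreeGroup α →* FreeGroup β) (hf : Function.Surjective f) :
    Function.Bijective f := by
  classical
  refine ⟨?_, hf⟩
  rw [injective_iff_map_eq_one f]
  intro w hw1
  by_contra hw
  obtain ⟨m, ψ, hψ⟩ := FGAux.residually_finite w hw
  set G := Equiv.Perm (Fin (m + 1))
  have hinj : Function.Injective (fun φ : FreeGroup β →* G => φ.comp f) := by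
    intro φ₁ φ₂ hφ
    exact (MonoidHom.cancel_right hf).1 hφ
  have hfinA : Finite (FreeGroup α →* G) :=
    Finite.of_equiv _ (FreeGroup.lift (β := G))
  have hfinB : Finite (FreeGroup β →* G) :=
    Finite.of_equiv _ (FreeGroup.lift (β := G))
  have hcard1 : Nat.card (FreeGroup α →* G) = Nat.card G ^ Nat.card α := by
    rw [Nat.card_congr (FreeGroup.lift (β := G)).symm, Nat.card_fun]
  have hcard2 : Nat.card (FreeGroup β →* G) = Nat.card G ^ Nat.card β := by
    rw [Nat.card_congr (FreeGroup.lift (β := G)).symm, Nat.card_fun]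
  have hbij : Function.Bijective (fun φ : FreeGroup β →* G => φ.comp f) :=
    (Nat.bijective_iff_injective_and_card _).2 ⟨hinj, by rw [hcard1, hcard2, h]⟩
  obtain ⟨φ, hφ⟩ := hbij.2 ψ
  apply hψ
  calc ψ w = (φ.comp f) w := by rw [show φ.comp f = ψ from hφ]
    _ = φ (f w) := rfl
    _ = 1 := by rw [hw1, map_one]
end

section
/- Let T be a set and S ⊆ T. The normal closure of S in the free group F(T) is freely generated by the set of conjugates { w⁻¹ s w : s ∈ S, w ∈ F(T \ S) }, where F(T \ S) is the subgroup of F(T) generated by T \ S. -/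
namespace Stmt3Aux

variable {T : Type} {S : Set T}

/-- inclusion of the free group on `Sᶜ` into `FreeGroup T`. -/
def ι (S : Set T) : FreeGroup ↥Sᶜ →* FreeGroup T :=
  FreeGroup.lift fun u => FreeGroup.of u.val

@[simp] lemma ι_of (u : ↥Sᶜ) : ι S (FreeGroup.of u) = FreeGroup.of u.val :=
  FreeGroup.lift_apply_of

lemma range_ι : (ι S).range = Subgroup.closure (FreeGroup.of '' Sᶜ) := by
  rw [ι, FreeGroup.range_lift_eq_closure]
  congr 1
  exact (Set.image_eq_range _ _).symm

/-- the index type for the free basis. -/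
abbrev Idx (S : Set T) := ↥S × FreeGroup ↥Sᶜ

/-- the map sending `(s, w)` to `(ι w)⁻¹ * s * ι w`. -/
def θ (S : Set T) : FreeGroup (Idx S) →* FreeGroup T :=
  FreeGroup.lift fun p => (ι S p.2)⁻¹ * FreeGroup.of p.1.val * ι S p.2

@[simp] lemma θ_of (p : Idx S) :
    θ S (FreeGroup.of p) = (ι S p.2)⁻¹ * FreeGroup.of p.1.val * ι S p.2 :=
  FreeGroup.lift_apply_of

/-- action of generators on the index type. -/
def e (u : ↥Sᶜ) : Idx S ≃ Idx S :=
  Equiv.prodCongr (Equiv.refl _) (Equiv.mulLeft (FreeGroup.of u))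

/-- the action of `FreeGroup ↥Sᶜ` on `FreeGroup (Idx S)`. -/
def φ (S : Set T) : FreeGroup ↥Sᶜ →* MulAut (FreeGroup (Idx S)) :=
  FreeGroup.lift fun u => (FreeGroup.freeGroupCongr (e u) : MulAut (FreeGroup (Idx S)))

lemma φ_apply_of (u : FreeGroup ↥Sᶜ) (s : ↥S) (w : FreeGroup ↥Sᶜ) :
    φ S u (FreeGroup.of (s, w)) = FreeGroup.of (s, u * w) := by
  induction u using FreeGroup.induction_on generalizing w with
  | C1 => simp
  | of a =>
      show φ S (FreeGroup.of a) _ = FreeGroup.of (s, FreeGroup.of a * w)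
      rw [φ, FreeGroup.lift_apply_of]
      rfl
  | inv_of a ih =>
      show (φ S) (FreeGroup.of a)⁻¹ (FreeGroup.of (s, w))
        = FreeGroup.of (s, (FreeGroup.of a)⁻¹ * w)
      rw [map_inv, MulAut.inv_def, MulEquiv.symm_apply_eq]
      have h2 : FreeGroup.of ((s, w) : Idx S)
          = FreeGroup.of (s, FreeGroup.of a * ((FreeGroup.of a)⁻¹ * w)) := by
        rw [mul_inv_cancel_left]
      rw [h2]
      exact (ih _).symm
  | mul x y hx hy =>
      show (φ S) (x * y) (FreeGroup.of (s, w)) = FreeGroup.of (s, x * y * w)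
      rw [map_mul, MulAut.mul_apply, hy, hx, mul_assoc]

open scoped Classical in
/-- the retraction-style homomorphism into the semidirect product. -/
noncomputable def Φ (S : Set T) :
    FreeGroup T →* SemidirectProduct (FreeGroup (Idx S)) (FreeGroup ↥Sᶜ) (φ S) :=
  FreeGroup.lift fun t =>
    if h : t ∈ S then SemidirectProduct.inl (FreeGroup.of ((⟨t, h⟩ : ↥S), 1))
    else SemidirectProduct.inr (FreeGroup.of (⟨t, h⟩ : ↥Sᶜ))

lemma Φ_comp_ι : (Φ S).comp (ι S) = SemidirectProduct.inr := by
  apply FreeGroup.ext_hom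
  intro u
  simp only [MonoidHom.comp_apply, ι_of, Φ, FreeGroup.lift_apply_of]
  rw [dif_neg u.property]

lemma Φ_ι (w : FreeGroup ↥Sᶜ) : Φ S (ι S w) = SemidirectProduct.inr w :=
  DFunLike.congr_fun Φ_comp_ι w

/-- the inversion automorphism of the index type. -/
def η (S : Set T) : FreeGroup (Idx S) ≃* FreeGroup (Idx S) :=
  FreeGroup.freeGroupCongr (Equiv.prodCongr (Equiv.refl ↥S) (Equiv.inv (FreeGroup ↥Sᶜ)))

lemma Φ_comp_θ :
    (Φ S).comp (θ S) = SemidirectProduct.inl.comp (η S).toMonoidHom := by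
  apply FreeGroup.ext_hom
  rintro ⟨s, w⟩
  simp only [MonoidHom.comp_apply, θ_of, map_mul, map_inv, Φ_ι, MulEquiv.coe_toMonoidHom]
  have hs : Φ S (FreeGroup.of s.val) = SemidirectProduct.inl (FreeGroup.of (s, 1)) := by
    rw [Φ, FreeGroup.lift_apply_of, dif_pos s.property]
  rw [hs]
  have key := SemidirectProduct.inl_aut (φ := φ S) w⁻¹ (FreeGroup.of (s, (1 : FreeGroup ↥Sᶜ)))
  rw [φ_apply_of, mul_one, inv_inv] at key
  have hη : η S (FreeGroup.of ((s, w) : Idx S)) = FreeGroup.of (s, w⁻¹) := rfl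
  rw [hη, key, ← map_inv]

lemma θ_injective : Function.Injective (θ S) := by
  have h : Function.Injective ((Φ S).comp (θ S)) := by
    rw [Φ_comp_θ]
    exact SemidirectProduct.inl_injective.comp (η S).injective
  exact fun a b hab => h (by simp only [MonoidHom.comp_apply, hab])

/-- the generating set of the range of θ. -/
def R (S : Set T) : Set (FreeGroup T) :=
  Set.range fun p : Idx S => (ι S p.2)⁻¹ * FreeGroup.of p.1.val * ι S p.2

lemma range_θ_eq_closure : (θ S).range = Subgroup.closure (R S) :=
  FreeGroup.range_lift_eq_closure

lemma conj_mem_range (c : FreeGroup T)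
    (hc : ∀ r ∈ R S, c⁻¹ * r * c ∈ (θ S).range) :
    ∀ h ∈ (θ S).range, c⁻¹ * h * c ∈ (θ S).range := by
  rw [range_θ_eq_closure] at hc ⊢
  intro h hh
  induction hh using Subgroup.closure_induction with
  | mem x hx => exact hc x hx
  | one => simpa using Subgroup.one_mem _
  | mul x y _ _ hx hy =>
      have h1 : c⁻¹ * (x * y) * c = (c⁻¹ * x * c) * (c⁻¹ * y * c) := by group
      rw [h1]; exact Subgroup.mul_mem _ hx hy
  | inv x _ hx =>
      have h1 : c⁻¹ * x⁻¹ * c = (c⁻¹ * x * c)⁻¹ := by group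
      rw [h1]; exact Subgroup.inv_mem _ hx

lemma conj_all (x : FreeGroup T) :
    ∀ h ∈ (θ S).range, x⁻¹ * h * x ∈ (θ S).range ∧ x * h * x⁻¹ ∈ (θ S).range := by
  induction x using FreeGroup.induction_on with
  | C1 =>
      intro h hh
      constructor <;> simpa using hh
  | of t =>
      show ∀ h ∈ (θ S).range, (FreeGroup.of t)⁻¹ * h * FreeGroup.of t ∈ (θ S).range ∧
        FreeGroup.of t * h * (FreeGroup.of t)⁻¹ ∈ (θ S).range
      by_cases ht : t ∈ S
      · have hmem : FreeGroup.of t ∈ (θ S).range := by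
          refine ⟨FreeGroup.of ((⟨t, ht⟩ : ↥S), 1), ?_⟩
          simp [θ_of]
        intro h hh
        exact ⟨Subgroup.mul_mem _ (Subgroup.mul_mem _ (Subgroup.inv_mem _ hmem) hh) hmem,
          Subgroup.mul_mem _ (Subgroup.mul_mem _ hmem hh) (Subgroup.inv_mem _ hmem)⟩
      · intro h hh
        constructor
        · refine conj_mem_range (FreeGroup.of t) ?_ h hh
          rintro r ⟨⟨s, w⟩, rfl⟩
          refine ⟨FreeGroup.of (s, w * FreeGroup.of (⟨t, ht⟩ : ↥Sᶜ)), ?_⟩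
          simp only [θ_of, map_mul, ι_of]
          group
        · have h1 : FreeGroup.of t * h * (FreeGroup.of t)⁻¹
              = ((FreeGroup.of t)⁻¹)⁻¹ * h * (FreeGroup.of t)⁻¹ := by group
          rw [h1]
          refine conj_mem_range (FreeGroup.of t)⁻¹ ?_ h hh
          rintro r ⟨⟨s, w⟩, rfl⟩
          refine ⟨FreeGroup.of (s, w * (FreeGroup.of (⟨t, ht⟩ : ↥Sᶜ))⁻¹), ?_⟩
          simp only [θ_of, map_mul, map_inv, ι_of]
          group
  | inv_of t ih =>
      show ∀ h ∈ (θ S).range, ((FreeGroup.of t)⁻¹)⁻¹ * h * (FreeGroup.of t)⁻¹ ∈ (θ S).range ∧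
        (FreeGroup.of t)⁻¹ * h * ((FreeGroup.of t)⁻¹)⁻¹ ∈ (θ S).range
      intro h hh
      obtain ⟨h1, h2⟩ := ih h hh
      exact ⟨by simpa using h2, by simpa using h1⟩
  | mul x y hx hy =>
      intro h hh
      constructor
      · have h1 : (x * y)⁻¹ * h * (x * y) = y⁻¹ * (x⁻¹ * h * x) * y := by group
        rw [h1]; exact (hy _ (hx h hh).1).1
      · have h1 : (x * y) * h * (x * y)⁻¹ = x * (y * h * y⁻¹) * x⁻¹ := by group
        rw [h1]; exact (hx _ (hy h hh).2).2

instance range_θ_normal : ((θ S)).range.Normal :=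
  ⟨fun n hn g => (conj_all g n hn).2⟩

lemma range_θ : (θ S).range = Subgroup.normalClosure (FreeGroup.of '' S) := by
  apply le_antisymm
  · rw [range_θ_eq_closure, Subgroup.closure_le]
    rintro r ⟨⟨s, w⟩, rfl⟩
    have hs : FreeGroup.of s.val ∈ Subgroup.normalClosure (FreeGroup.of '' S) :=
      Subgroup.subset_normalClosure ⟨s.val, s.property, rfl⟩
    have := Subgroup.Normal.conj_mem (Subgroup.normalClosure_normal) _ hs (ι S w)⁻¹
    simpa [mul_assoc] using this
  · apply Subgroup.normalClosure_le_normal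
    rintro g ⟨t, ht, rfl⟩
    exact ⟨FreeGroup.of ((⟨t, ht⟩ : ↥S), 1), by simp [θ_of]⟩

end Stmt3Aux

/-- The normal closure of `S ⊆ T` in the free group `F(T)` is freely generated by
the conjugates `w⁻¹ s w` with `s ∈ S` and `w` in the subgroup generated by `T \ S`. -/
theorem stmt3 (T : Type) (S : Set T) :
    IsFreeBasis
      {g : FreeGroup T | ∃ s ∈ S, ∃ w ∈ Subgroup.closure (FreeGroup.of '' Sᶜ),
        g = w⁻¹ * FreeGroup.of s * w}
      (Subgroup.normalClosure (FreeGroup.of '' S)) := by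
  open Stmt3Aux in
  set B : Set (FreeGroup T) :=
    {g : FreeGroup T | ∃ s ∈ S, ∃ w ∈ Subgroup.closure (FreeGroup.of '' Sᶜ),
        g = w⁻¹ * FreeGroup.of s * w} with hB
  have hm : ∀ p : Stmt3Aux.Idx S,
      (Stmt3Aux.ι S p.2)⁻¹ * FreeGroup.of p.1.val * Stmt3Aux.ι S p.2 ∈ B := by
    intro p
    refine ⟨p.1.val, p.1.property, Stmt3Aux.ι S p.2, ?_, rfl⟩
    rw [← Stmt3Aux.range_ι]
    exact ⟨p.2, rfl⟩
  let m : Stmt3Aux.Idx S → B := fun p => ⟨_, hm p⟩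
  have hmθ : ∀ p : Stmt3Aux.Idx S, (m p : FreeGroup T) = Stmt3Aux.θ S (FreeGroup.of p) := by
    intro p; rw [Stmt3Aux.θ_of]
  have hbij : Function.Bijective m := by
    constructor
    · intro p q hpq
      have : Stmt3Aux.θ S (FreeGroup.of p) = Stmt3Aux.θ S (FreeGroup.of q) := by
        rw [← hmθ, ← hmθ, hpq]
      exact FreeGroup.of_injective (Stmt3Aux.θ_injective this)
    · rintro ⟨g, s, hs, w, hw, rfl⟩
      rw [← Stmt3Aux.range_ι] at hw
      obtain ⟨w', rfl⟩ := hw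
      exact ⟨((⟨s, hs⟩ : ↥S), w'), rfl⟩
  let E := FreeGroup.freeGroupCongr (Equiv.ofBijective m hbij)
  have hcomp : (FreeGroup.lift ((↑) : B → FreeGroup T)).comp E.toMonoidHom
      = Stmt3Aux.θ S := by
    apply FreeGroup.ext_hom
    intro p
    have hE : E (FreeGroup.of p) = FreeGroup.of (m p) := by
      simp [E, FreeGroup.freeGroupCongr, Equiv.ofBijective]
    simp only [MonoidHom.comp_apply, MulEquiv.coe_toMonoidHom, hE, FreeGroup.lift_apply_of]
    rw [Stmt3Aux.θ_of]
  have hfun : ∀ y, FreeGroup.lift ((↑) : B → FreeGroup T) (E y) = Stmt3Aux.θ S y :=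
    fun y => DFunLike.congr_fun hcomp y
  constructor
  · intro a b hab
    have h1 : Stmt3Aux.θ S (E.symm a) = Stmt3Aux.θ S (E.symm b) := by
      rw [← hfun, ← hfun, E.apply_symm_apply, E.apply_symm_apply, hab]
    have := Stmt3Aux.θ_injective h1
    calc a = E (E.symm a) := (E.apply_symm_apply a).symm
      _ = E (E.symm b) := by rw [this]
      _ = b := E.apply_symm_apply b
  · rw [← Stmt3Aux.range_θ]
    ext x
    constructor
    · rintro ⟨a, rfl⟩
      exact ⟨E.symm a, by rw [← hfun, E.apply_symm_apply]⟩
    · rintro ⟨y, rfl⟩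
      exact ⟨E y, hfun y⟩
end

section
/- Let G be a group and x, y, w, w' ∈ G. If w and w' have the same image in the abelianization G^ab, then the conjugates w⁻¹[x,y]w and w'⁻¹[x,y]w' have the same image in the abelianization of [G,G]. -/
/-- The conjugate `w⁻¹ [x,y] w` of the commutator `[x,y] = x⁻¹y⁻¹xy` lies in the
commutator subgroup. -/
lemma conj_comm_mem {G : Type*} [Group G] (x y w : G) :
    w⁻¹ * (x⁻¹ * y⁻¹ * x * y) * w ∈ commutator G := by
  have h : x⁻¹ * y⁻¹ * x * y ∈ commutator G := by
    have := Subgroup.commutator_mem_commutator (Subgroup.mem_top x⁻¹) (Subgroup.mem_top y⁻¹)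
    show _ ∈ ⁅(⊤ : Subgroup G), ⊤⁆
    simpa [commutatorElement_def] using this
  have := (Subgroup.commutator_normal ⊤ ⊤).conj_mem _ h w⁻¹
  show _ ∈ ⁅(⊤ : Subgroup G), ⊤⁆
  simpa using this

/-- If `w` and `w'` have the same image in `G^ab`, then `w⁻¹[x,y]w` and `w'⁻¹[x,y]w'`
have the same image in the abelianization of the commutator subgroup `[G,G]`. -/
theorem stmt4 {G : Type*} [Group G] (x y w w' : G)
    (h : Abelianization.of w = Abelianization.of w') :
    Abelianization.of (⟨w⁻¹ * (x⁻¹ * y⁻¹ * x * y) * w, conj_comm_mem x y w⟩ :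
        commutator G) =
      Abelianization.of (⟨w'⁻¹ * (x⁻¹ * y⁻¹ * x * y) * w', conj_comm_mem x y w'⟩ :
        commutator G) := by
  have hc : w⁻¹ * w' ∈ commutator G := (QuotientGroup.eq).mp h
  set c : commutator G := ⟨w⁻¹ * w', hc⟩ with hcdef
  set a : commutator G := ⟨w⁻¹ * (x⁻¹ * y⁻¹ * x * y) * w, conj_comm_mem x y w⟩ with hadef
  have key : (⟨w'⁻¹ * (x⁻¹ * y⁻¹ * x * y) * w', conj_comm_mem x y w'⟩ : commutator G)
      = c⁻¹ * a * c := by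
    ext
    simp [hcdef, hadef]
    group
  rw [key, map_mul, map_mul, map_inv, mul_comm, ← mul_assoc]
  simp
end

section
/- The commutator subgroup [F₂,F₂] of the free group F₂ on generators x₁, x₂ is freely generated by the set { (x₁^{k₁} x₂^{k₂})⁻¹ [x₁,x₂] (x₁^{k₁} x₂^{k₂}) : k₁, k₂ ∈ ℤ }. -/
namespace Stmt5Aux

open scoped commutatorElement

abbrev F := FreeGroup (Fin 2)
abbrev W := FreeGroup (ℤ × ℤ)

def x1 : F := FreeGroup.of 0
def x2 : F := FreeGroup.of 1
def Cm : F := x1⁻¹ * x2⁻¹ * x1 * x2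
def c (k₁ k₂ : ℤ) : F := (x1 ^ k₁ * x2 ^ k₂)⁻¹ * Cm * (x1 ^ k₁ * x2 ^ k₂)
def e (k₁ k₂ : ℤ) : W := FreeGroup.of (k₁, k₂)

def S : Set F := {g | ∃ k₁ k₂ : ℤ,
    g = (FreeGroup.of 0 ^ k₁ * FreeGroup.of 1 ^ k₂)⁻¹ *
          ((FreeGroup.of 0)⁻¹ * (FreeGroup.of 1)⁻¹ * FreeGroup.of 0 * FreeGroup.of 1) *
        (FreeGroup.of 0 ^ k₁ * FreeGroup.of 1 ^ k₂)}

lemma c_mem_S (k₁ k₂ : ℤ) : c k₁ k₂ ∈ S := ⟨k₁, k₂, rfl⟩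

/-! ### the cocycle `nn` -/

def nnAux : ℕ → ℤ → W
  | 0, _ => 1
  | k+1, b => nnAux k b * (e k b)⁻¹

def nnAux' : ℕ → ℤ → W
  | 0, b => e (-1) b
  | k+1, b => nnAux' k b * e (Int.negSucc (k+1)) b

def nn : ℤ → ℤ → W
  | .ofNat k, b => nnAux k b
  | .negSucc k, b => nnAux' k b

lemma nn_zero (b : ℤ) : nn 0 b = 1 := rfl

lemma nn_succ (a b : ℤ) : nn (a + 1) b = nn a b * (e a b)⁻¹ := by
  cases a with
  | ofNat k =>
      rw [show (Int.ofNat k) + 1 = Int.ofNat (k+1) by simp]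
      show nnAux (k+1) b = nnAux k b * (e (Int.ofNat k) b)⁻¹
      simp [nnAux, e]
  | negSucc k =>
      cases k with
      | zero =>
          show nn 0 b = nnAux' 0 b * (e (-1) b)⁻¹
          simp [nn_zero, nnAux']
      | succ k =>
          rw [show (Int.negSucc (k+1)) + 1 = Int.negSucc k from by
            rw [Int.negSucc_eq, Int.negSucc_eq]; push_cast; ring]
          show nnAux' k b = nnAux' (k+1) b * (e (Int.negSucc (k+1)) b)⁻¹
          simp [nnAux']

lemma nn_key (a b : ℤ) : (nn (a + 1) b)⁻¹ * nn a b = e a b := by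
  rw [nn_succ]; group

/-! ### the permutation action -/

abbrev X := W × ℤ × ℤ

def s1 : Equiv.Perm X where
  toFun p := (p.1, p.2.1 + 1, p.2.2)
  invFun p := (p.1, p.2.1 - 1, p.2.2)
  left_inv p := by simp
  right_inv p := by simp

def s2 : Equiv.Perm X where
  toFun p := (nn p.2.1 p.2.2 * p.1, p.2.1, p.2.2 + 1)
  invFun p := ((nn p.2.1 (p.2.2 - 1))⁻¹ * p.1, p.2.1, p.2.2 - 1)
  left_inv p := by simp
  right_inv p := by simp

noncomputable def Phi : F →* Equiv.Perm X := FreeGroup.lift ![s1, s2]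

lemma Phi_x1 : Phi x1 = s1 := by simp [Phi, x1]
lemma Phi_x2 : Phi x2 = s2 := by simp [Phi, x2]

lemma s1_apply (v : W) (a b : ℤ) : s1 (v, a, b) = (v, a + 1, b) := rfl
lemma s1_inv_apply (v : W) (a b : ℤ) : s1⁻¹ (v, a, b) = (v, a - 1, b) := rfl
lemma s2_apply (v : W) (a b : ℤ) : s2 (v, a, b) = (nn a b * v, a, b + 1) := rfl
lemma s2_inv_apply (v : W) (a b : ℤ) :
    s2⁻¹ (v, a, b) = ((nn a (b - 1))⁻¹ * v, a, b - 1) := rfl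

lemma s1_zpow (k : ℤ) : ∀ (v : W) (a b : ℤ), (s1 ^ k) (v, a, b) = (v, a + k, b) := by
  induction k using Int.induction_on with
  | zero => simp
  | succ k ih =>
      intro v a b
      rw [zpow_add_one, Equiv.Perm.mul_apply, s1_apply, ih]
      refine Prod.ext rfl (Prod.ext ?_ rfl); push_cast; ring
  | pred k ih =>
      intro v a b
      rw [zpow_sub_one, Equiv.Perm.mul_apply, s1_inv_apply, ih]
      refine Prod.ext rfl (Prod.ext ?_ rfl); push_cast; ring

lemma s2_zpow_col0 (k : ℤ) : ∀ (v : W) (b : ℤ), (s2 ^ k) (v, 0, b) = (v, 0, b + k) := by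
  induction k using Int.induction_on with
  | zero => simp
  | succ k ih =>
      intro v b
      rw [zpow_add_one, Equiv.Perm.mul_apply, s2_apply, nn_zero, one_mul, ih]
      refine Prod.ext rfl (Prod.ext rfl ?_); push_cast; ring
  | pred k ih =>
      intro v b
      rw [zpow_sub_one, Equiv.Perm.mul_apply, s2_inv_apply, nn_zero, inv_one, one_mul, ih]
      refine Prod.ext rfl (Prod.ext rfl ?_); push_cast; ring

lemma Phi_c (k₁ k₂ : ℤ) (v : W) :
    Phi (c k₁ k₂) (v, 0, 0) = (e k₁ k₂ * v, 0, 0) := by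
  have hs : ∀ w : W, Phi (x1 ^ k₁ * x2 ^ k₂) (w, 0, 0) = (w, k₁, k₂) := by
    intro w
    rw [map_mul, Equiv.Perm.mul_apply, map_zpow, map_zpow, Phi_x1, Phi_x2,
      s2_zpow_col0, s1_zpow]
    simp
  have hsinv : ∀ w : W, Phi ((x1 ^ k₁ * x2 ^ k₂)⁻¹) (w, k₁, k₂) = (w, 0, 0) := by
    intro w
    rw [map_inv, ← hs w, Equiv.Perm.inv_def, Equiv.symm_apply_apply]
  have hC : Phi Cm (v, k₁, k₂) = (e k₁ k₂ * v, k₁, k₂) := by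
    show Phi (x1⁻¹ * x2⁻¹ * x1 * x2) _ = _
    rw [map_mul, map_mul, map_mul, map_inv, map_inv, Phi_x1, Phi_x2]
    rw [Equiv.Perm.mul_apply, Equiv.Perm.mul_apply, Equiv.Perm.mul_apply]
    rw [s2_apply, s1_apply, s2_inv_apply, s1_inv_apply]
    rw [show k₂ + 1 - 1 = k₂ from by ring, show k₁ + 1 - 1 = k₁ from by ring,
      ← mul_assoc, nn_key]
  show Phi ((x1 ^ k₁ * x2 ^ k₂)⁻¹ * Cm * (x1 ^ k₁ * x2 ^ k₂)) _ = _
  rw [map_mul, map_mul, Equiv.Perm.mul_apply, Equiv.Perm.mul_apply, hs, hC, hsinv]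

/-! ### injectivity -/

noncomputable def chi (s : S) : ℤ × ℤ :=
  (s.2.choose, s.2.choose_spec.choose)

lemma chi_spec (s : S) : (s : F) = c (chi s).1 (chi s).2 :=
  s.2.choose_spec.choose_spec

def iota (k : ℤ × ℤ) : S := ⟨c k.1 k.2, c_mem_S k.1 k.2⟩

lemma iota_chi (s : S) : iota (chi s) = s := by
  apply Subtype.ext
  exact (chi_spec s).symm

noncomputable def psi : FreeGroup S →* F := FreeGroup.lift ((↑) : S → F)

lemma map_chi_injective : Function.Injective (FreeGroup.map chi) := by
  have h : ∀ w : FreeGroup S, FreeGroup.map iota (FreeGroup.map chi w) = w := by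
    intro w
    rw [FreeGroup.map.comp]
    have : iota ∘ chi = id := funext iota_chi
    rw [this, FreeGroup.map.id]
  exact Function.LeftInverse.injective h

lemma invariant (w : FreeGroup S) :
    ∀ v : W, Phi (psi w) (v, 0, 0) = (FreeGroup.map chi w * v, 0, 0) := by
  induction w with
  | C1 => simp
  | of s =>
      intro v
      have h1 : psi (FreeGroup.of s) = c (chi s).1 (chi s).2 := by
        rw [show (FreeGroup.of s : FreeGroup S) = FreeGroup.of s from rfl]
        rw [psi, FreeGroup.lift_apply_of]
        exact chi_spec s
      have h2 : FreeGroup.map chi (FreeGroup.of s) = e (chi s).1 (chi s).2 := by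
        rw [FreeGroup.map.of, e]
      rw [h1, h2, Phi_c]
  | inv_of s ih =>
      intro v
      rw [map_inv, map_inv, map_inv]
      have := ih ((FreeGroup.map chi (FreeGroup.of s))⁻¹ * v)
      rw [← mul_assoc, mul_inv_cancel, one_mul] at this
      rw [← this, Equiv.Perm.inv_def, Equiv.symm_apply_apply]
  | mul x y ihx ihy =>
      intro v
      rw [map_mul, map_mul, map_mul, Equiv.Perm.mul_apply, ihy, ihx, mul_assoc]

lemma psi_injective : Function.Injective psi := by
  rw [injective_iff_map_eq_one]
  intro w hw
  have := invariant w 1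
  rw [hw, map_one, Equiv.Perm.one_apply, mul_one] at this
  have h1 : FreeGroup.map chi w = 1 := by
    have := this
    exact (Prod.ext_iff.1 this.symm).1
  apply map_chi_injective
  rw [h1, map_one]

/-! ### the range is the commutator subgroup -/

def H : Subgroup F := Subgroup.closure S

lemma c_mem_H (k₁ k₂ : ℤ) : c k₁ k₂ ∈ H := Subgroup.subset_closure (c_mem_S k₁ k₂)

def u (b : ℤ) : F := x2 ^ (-b) * x1⁻¹ * x2 ^ b * x1
def u' (b : ℤ) : F := x1 * x2 ^ (-b) * x1⁻¹ * x2 ^ b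

lemma u_mem (b : ℤ) : u b ∈ H := by
  induction b using Int.induction_on with
  | zero =>
      have : u 0 = 1 := by unfold u; group
      rw [this]; exact one_mem _
  | succ k ih =>
      have : u (k + 1) = (c 0 k)⁻¹ * u k := by unfold u c Cm; group
      rw [this]; exact mul_mem (inv_mem (c_mem_H 0 k)) ih
  | pred k ih =>
      have : u (-(k:ℤ) - 1) = c 0 (-(k:ℤ) - 1) * u (-k) := by unfold u c Cm; group
      rw [this]; exact mul_mem (c_mem_H 0 _) ih

lemma u'_mem (b : ℤ) : u' b ∈ H := by
  induction b using Int.induction_on with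
  | zero =>
      have : u' 0 = 1 := by unfold u'; group
      rw [this]; exact one_mem _
  | succ k ih =>
      have : u' (k + 1) = u' k * (c (-1) k)⁻¹ := by unfold u' c Cm; group
      rw [this]; exact mul_mem ih (inv_mem (c_mem_H (-1) k))
  | pred k ih =>
      have : u' (-(k:ℤ) - 1) = u' (-k) * c (-1) (-(k:ℤ) - 1) := by unfold u' c Cm; group
      rw [this]; exact mul_mem ih (c_mem_H (-1) _)

lemma conj_x2 (k₁ k₂ : ℤ) : x2 * c k₁ k₂ * x2⁻¹ = c k₁ (k₂ - 1) := by
  unfold c Cm; group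

lemma conj_x2' (k₁ k₂ : ℤ) : x2⁻¹ * c k₁ k₂ * x2 = c k₁ (k₂ + 1) := by
  unfold c Cm; group

lemma conj_x1 (k₁ k₂ : ℤ) :
    x1 * c k₁ k₂ * x1⁻¹ = u' k₂ * c (k₁ - 1) k₂ * (u' k₂)⁻¹ := by
  unfold c Cm u'; group

lemma conj_x1' (k₁ k₂ : ℤ) :
    x1⁻¹ * c k₁ k₂ * x1 = (u k₂)⁻¹ * c (k₁ + 1) k₂ * u k₂ := by
  unfold c Cm u; group

lemma conj_gen_mem (i : Fin 2) (k₁ k₂ : ℤ) :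
    FreeGroup.of i * c k₁ k₂ * (FreeGroup.of i)⁻¹ ∈ H ∧
      (FreeGroup.of i)⁻¹ * c k₁ k₂ * FreeGroup.of i ∈ H := by
  fin_cases i
  · constructor
    · show x1 * c k₁ k₂ * x1⁻¹ ∈ H
      rw [conj_x1]
      exact mul_mem (mul_mem (u'_mem k₂) (c_mem_H _ _)) (inv_mem (u'_mem k₂))
    · show x1⁻¹ * c k₁ k₂ * x1 ∈ H
      rw [conj_x1']
      exact mul_mem (mul_mem (inv_mem (u_mem k₂)) (c_mem_H _ _)) (u_mem k₂)
  · constructor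
    · show x2 * c k₁ k₂ * x2⁻¹ ∈ H
      rw [conj_x2]
      exact c_mem_H _ _
    · show x2⁻¹ * c k₁ k₂ * x2 ∈ H
      rw [conj_x2']
      exact c_mem_H _ _

lemma conj_mem_H (g : F) : ∀ h ∈ H, g * h * g⁻¹ ∈ H := by
  induction g using FreeGroup.induction_on with
  | C1 => intro h hh; simpa using hh
  | of i =>
      intro h hh
      induction hh using Subgroup.closure_induction with
      | mem s hs =>
          obtain ⟨k₁, k₂, rfl⟩ := hs
          exact (conj_gen_mem i k₁ k₂).1
      | one => simpa using one_mem H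
      | mul a b _ _ ha hb =>
          have := mul_mem ha hb
          simpa [mul_assoc] using this
      | inv a _ ha =>
          have := inv_mem ha
          simpa [mul_assoc] using this
  | inv_of i _ =>
      intro h hh
      rw [inv_inv]
      induction hh using Subgroup.closure_induction with
      | mem s hs =>
          obtain ⟨k₁, k₂, rfl⟩ := hs
          exact (conj_gen_mem i k₁ k₂).2
      | one => simpa using one_mem H
      | mul a b _ _ ha hb =>
          have := mul_mem ha hb
          simpa [mul_assoc] using this
      | inv a _ ha =>
          have := inv_mem ha
          simpa [mul_assoc] using this
  | mul a b iha ihb =>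
      intro h hh
      have := iha (b * h * b⁻¹) (ihb h hh)
      rw [mul_inv_rev]
      simpa [mul_assoc] using this

instance H_normal : H.Normal := ⟨fun h hh g => conj_mem_H g h hh⟩

/-! ### quotient is abelian -/

noncomputable def q : F →* F ⧸ H := QuotientGroup.mk' H

lemma Cm_mem_H : Cm ∈ H := by
  have := c_mem_H 0 0
  rwa [show c 0 0 = Cm from by unfold c; group] at this

lemma comm_key : Commute (q x1) (q x2) := by
  rw [← commutatorElement_eq_one_iff_commute, ← map_commutatorElement]
  have h : ⁅x1, x2⁆ = (x1 * x2) * Cm * (x1 * x2)⁻¹ := by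
    rw [commutatorElement_def]; unfold Cm; group
  have hm : ⁅x1, x2⁆ ∈ H := by
    rw [h]; exact conj_mem_H (x1 * x2) Cm Cm_mem_H
  exact (QuotientGroup.eq_one_iff _).2 hm

lemma comm_of (i : Fin 2) (g : F) : Commute (q (FreeGroup.of i)) (q g) := by
  induction g using FreeGroup.induction_on with
  | C1 => rw [map_one]; exact Commute.one_right _
  | of j =>
      fin_cases i <;> fin_cases j
      · exact Commute.refl _
      · exact comm_key
      · exact comm_key.symm
      · exact Commute.refl _
  | inv_of j ih =>
      rw [map_inv]; exact ih.inv_right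
  | mul a b iha ihb =>
      rw [map_mul]; exact iha.mul_right ihb

lemma comm_all (g h : F) : Commute (q g) (q h) := by
  induction g using FreeGroup.induction_on with
  | C1 => rw [map_one]; exact Commute.one_left _
  | of i => exact comm_of i h
  | inv_of i _ => rw [map_inv]; exact (comm_of i h).inv_left
  | mul a b iha ihb => rw [map_mul]; exact iha.mul_left ihb

lemma commutator_le_H : commutator F ≤ H := by
  rw [commutator_def]
  refine Subgroup.commutator_le.2 fun g _ h _ => ?_
  have hq : q ⁅g, h⁆ = 1 := by
    rw [map_commutatorElement]
    exact commutatorElement_eq_one_iff_commute.2 (comm_all g h)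
  exact (QuotientGroup.eq_one_iff _).1 hq

lemma H_le_commutator : H ≤ commutator F := by
  refine (Subgroup.closure_le _).2 ?_
  rintro g ⟨k₁, k₂, rfl⟩
  have hC : Cm ∈ commutator F := by
    have : Cm = ⁅x1⁻¹, x2⁻¹⁆ := by
      unfold Cm; rw [commutatorElement_def, inv_inv, inv_inv]
    rw [this, commutator_def]
    exact Subgroup.commutator_mem_commutator (Subgroup.mem_top _) (Subgroup.mem_top _)
  have hn : (commutator F).Normal := inferInstance
  have := hn.conj_mem Cm hC (x1 ^ k₁ * x2 ^ k₂)⁻¹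
  rw [inv_inv] at this
  exact this

end Stmt5Aux

/-- The commutator subgroup of the free group `F₂` on `x₁, x₂` is freely generated by
the conjugates `(x₁^{k₁} x₂^{k₂})⁻¹ [x₁,x₂] (x₁^{k₁} x₂^{k₂})`, `k₁, k₂ ∈ ℤ`. -/
theorem stmt5 :
    IsFreeBasis
      {g : FreeGroup (Fin 2) | ∃ k₁ k₂ : ℤ,
        g = (FreeGroup.of 0 ^ k₁ * FreeGroup.of 1 ^ k₂)⁻¹ *
              ((FreeGroup.of 0)⁻¹ * (FreeGroup.of 1)⁻¹ * FreeGroup.of 0 * FreeGroup.of 1) *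
            (FreeGroup.of 0 ^ k₁ * FreeGroup.of 1 ^ k₂)}
      (commutator (FreeGroup (Fin 2))) := by
  constructor
  · exact Stmt5Aux.psi_injective
  · rw [FreeGroup.range_lift_eq_closure, Subtype.range_coe]
    exact le_antisymm Stmt5Aux.H_le_commutator Stmt5Aux.commutator_le_H
end

section
/- The commutator subgroup [F₂,F₂] of the free group F₂ on x₁, x₂ is freely generated by the set of commutators { [x₁^{k₁}, x₂^{k₂}] : k₁, k₂ ∈ ℤ, k₁ ≠ 0, k₂ ≠ 0 }. -/
namespace Stmt6Aux

open FreeGroup SemidirectProduct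
open scoped commutatorElement



abbrev F2 := FreeGroup (Fin 2)

def X : F2 := FreeGroup.of 0
def Y : F2 := FreeGroup.of 1

def σ1 : MulAut (FreeGroup ℤ) := FreeGroup.freeGroupCongr (Equiv.addRight (1 : ℤ))

def φ1 : Multiplicative ℤ →* MulAut (FreeGroup ℤ) := zpowersHom _ σ1

abbrev D1 := SemidirectProduct (FreeGroup ℤ) (Multiplicative ℤ) φ1

def ι1 : FreeGroup ℤ →* F2 := FreeGroup.lift fun j => Y ^ j * X * Y ^ (-j)

def e1 : F2 →* D1 :=
  FreeGroup.lift ![inl (FreeGroup.of (0 : ℤ)), inr (Multiplicative.ofAdd 1)]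

lemma σ1_zpow (k : ℤ) : ∀ m, (σ1 ^ k) (FreeGroup.of m) = FreeGroup.of (m + k) := by
  induction k using Int.induction_on with
  | zero => simp
  | succ n ih =>
      intro m
      rw [zpow_add_one]
      show (σ1 ^ (n : ℤ)) (σ1 (FreeGroup.of m)) = _
      have h1 : σ1 (FreeGroup.of m) = FreeGroup.of (m + 1) := by simp [σ1]
      rw [h1, ih]
      congr 1
      ring
  | pred n ih =>
      intro m
      rw [zpow_sub_one]
      show (σ1 ^ (-n : ℤ)) (σ1⁻¹ (FreeGroup.of m)) = _
      have h1 : σ1⁻¹ (FreeGroup.of m) = FreeGroup.of (m + -1) := by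
        simp [σ1, MulAut.inv_def]
      rw [h1, ih]
      congr 1
      ring

lemma ofAdd_one_zpow (j : ℤ) :
    (Multiplicative.ofAdd (1 : ℤ)) ^ j = Multiplicative.ofAdd j := by
  rw [← ofAdd_zsmul]
  simp

lemma φ1_ofAdd (j : ℤ) : φ1 (Multiplicative.ofAdd j) = σ1 ^ j := rfl

lemma e1_comp_ι1 : e1.comp ι1 = inl := by
  apply FreeGroup.ext_hom
  intro j
  have hX : e1 X = inl (FreeGroup.of (0 : ℤ)) := by simp [e1, X, FreeGroup.lift_apply_of]
  have hY : e1 Y = inr (Multiplicative.ofAdd 1) := by simp [e1, Y, FreeGroup.lift_apply_of]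
  have h0 : ι1 (FreeGroup.of j) = Y ^ j * X * Y ^ (-j) := FreeGroup.lift_apply_of
  have h2 : (inr (Multiplicative.ofAdd (1:ℤ)) : D1) ^ j = inr (Multiplicative.ofAdd j) := by
    rw [← _root_.map_zpow (inr : Multiplicative ℤ →* D1), ofAdd_one_zpow]
  have h3 : (inr (Multiplicative.ofAdd (1:ℤ)) : D1) ^ (-j) = (inr (Multiplicative.ofAdd j))⁻¹ := by
    rw [zpow_neg, h2]
  rw [MonoidHom.comp_apply, h0, _root_.map_mul, _root_.map_mul, _root_.map_zpow,
    _root_.map_zpow, hX, hY, h2, h3, ← _root_.map_inv (inr : Multiplicative ℤ →* D1),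
    ← inl_aut, φ1_ofAdd, σ1_zpow]
  rw [zero_add]

lemma ι1_inj : Function.Injective ι1 := by
  intro u v h
  have h' := congrArg e1 h
  have hu := DFunLike.congr_fun e1_comp_ι1 u
  have hv := DFunLike.congr_fun e1_comp_ι1 v
  simp only [MonoidHom.comp_apply] at hu hv
  exact inl_injective (hu ▸ hv ▸ h')





abbrev J := {j : ℤ // j ≠ 0} × ℤ
abbrev K := {a : ℤ // a ≠ 0} × {j : ℤ // j ≠ 0}

def σ2 : MulAut (FreeGroup J) :=
  FreeGroup.freeGroupCongr (Equiv.prodCongr (Equiv.refl {j : ℤ // j ≠ 0}) (Equiv.addRight (1 : ℤ)))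

def φ2 : Multiplicative ℤ →* MulAut (FreeGroup J) := zpowersHom _ σ2

abbrev D2 := SemidirectProduct (FreeGroup J) (Multiplicative ℤ) φ2

def ι2 : FreeGroup J →* FreeGroup ℤ :=
  FreeGroup.lift fun p =>
    FreeGroup.of (0 : ℤ) ^ p.2 * FreeGroup.of p.1.val * FreeGroup.of (0 : ℤ) ^ (-(p.2 + 1))

def e2 : FreeGroup ℤ →* D2 :=
  FreeGroup.lift fun j =>
    if h : j = 0 then inr (Multiplicative.ofAdd 1)
    else inl (FreeGroup.of (⟨j, h⟩, (0 : ℤ))) * inr (Multiplicative.ofAdd 1)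

lemma σ2_zpow (k : ℤ) : ∀ p : J, (σ2 ^ k) (FreeGroup.of p) = FreeGroup.of (p.1, p.2 + k) := by
  induction k using Int.induction_on with
  | zero => simp
  | succ n ih =>
      rintro ⟨j0, k0⟩
      rw [zpow_add_one]
      show (σ2 ^ (n : ℤ)) (σ2 (FreeGroup.of (j0, k0))) = _
      have h1 : σ2 (FreeGroup.of (j0, k0)) = FreeGroup.of (j0, k0 + 1) := by
        simp [σ2, Prod.map]
      rw [h1, ih]
      congr 2
      ring
  | pred n ih =>
      rintro ⟨j0, k0⟩
      rw [zpow_sub_one]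
      show (σ2 ^ (-n : ℤ)) (σ2⁻¹ (FreeGroup.of (j0, k0))) = _
      have h1 : σ2⁻¹ (FreeGroup.of (j0, k0)) = FreeGroup.of (j0, k0 + -1) := by
        simp [σ2, MulAut.inv_def, Prod.map]
      rw [h1, ih]
      congr 2
      ring

lemma φ2_ofAdd (j : ℤ) : φ2 (Multiplicative.ofAdd j) = σ2 ^ j := rfl

lemma ofAdd_one_zpow' (j : ℤ) :
    (Multiplicative.ofAdd (1 : ℤ)) ^ j = Multiplicative.ofAdd j := by
  rw [← ofAdd_zsmul]; simp

lemma e2_comp_ι2 : e2.comp ι2 = inl := by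
  apply FreeGroup.ext_hom
  rintro ⟨j, k⟩
  have h0 : ι2 (FreeGroup.of (j, k)) =
      FreeGroup.of (0 : ℤ) ^ k * FreeGroup.of j.val * FreeGroup.of (0 : ℤ) ^ (-(k + 1)) :=
    FreeGroup.lift_apply_of
  have hz : e2 (FreeGroup.of (0 : ℤ)) = inr (Multiplicative.ofAdd 1) := by
    rw [show e2 (FreeGroup.of (0:ℤ)) = _ from FreeGroup.lift_apply_of, dif_pos rfl]
  have hj : e2 (FreeGroup.of j.val) = inl (FreeGroup.of (j, (0 : ℤ))) * inr (Multiplicative.ofAdd 1) := by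
    rw [show e2 (FreeGroup.of j.val) = _ from FreeGroup.lift_apply_of, dif_neg j.2]
  have h2 : ∀ m : ℤ, (inr (Multiplicative.ofAdd (1:ℤ)) : D2) ^ m = inr (Multiplicative.ofAdd m) := by
    intro m
    rw [← _root_.map_zpow (inr : Multiplicative ℤ →* D2), ofAdd_one_zpow']
  rw [MonoidHom.comp_apply, h0, _root_.map_mul, _root_.map_mul, _root_.map_zpow,
    _root_.map_zpow, hz, hj, h2, h2]
  have hmul : (inr (Multiplicative.ofAdd k) : D2) * (inl (FreeGroup.of (j, (0 : ℤ))) *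
      inr (Multiplicative.ofAdd 1)) * inr (Multiplicative.ofAdd (-(k + 1))) =
      inr (Multiplicative.ofAdd k) * inl (FreeGroup.of (j, (0 : ℤ))) *
        (inr (Multiplicative.ofAdd k))⁻¹ := by
    rw [← _root_.map_inv (inr : Multiplicative ℤ →* D2)]
    rw [mul_assoc, mul_assoc, ← _root_.map_mul (inr : Multiplicative ℤ →* D2), mul_assoc]
    congr 2
    rw [← ofAdd_add, ← ofAdd_neg]
    congr 1
    ring_nf
  rw [hmul, ← _root_.map_inv (inr : Multiplicative ℤ →* D2), ← inl_aut, φ2_ofAdd, σ2_zpow]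
  rw [zero_add]




def Wp (j : {j : ℤ // j ≠ 0}) : ℕ → FreeGroup J
  | 0 => 1
  | n + 1 => FreeGroup.of (j, -(n + 1 : ℤ)) * Wp j n

def Wm (j : {j : ℤ // j ≠ 0}) : ℕ → FreeGroup J
  | 0 => 1
  | n + 1 => (FreeGroup.of (j, (n : ℤ)))⁻¹ * Wm j n

def Wrow (j : {j : ℤ // j ≠ 0}) (a : ℤ) : FreeGroup J :=
  if 0 ≤ a then Wp j a.toNat else Wm j (-a).toNat

lemma Wrow_zero (j) : Wrow j 0 = 1 := by simp [Wrow, Wp]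

lemma Wrow_neg_one (j) : Wrow j (-1) = (FreeGroup.of (j, (0:ℤ)))⁻¹ := by
  show Wm j (-(-1):ℤ).toNat = _
  norm_num
  show (FreeGroup.of (j, ((0:ℕ) : ℤ)))⁻¹ * Wm j 0 = _
  rw [show ((0:ℕ):ℤ) = 0 by norm_num]
  simp [Wm]

lemma Wrow_succ (j : {j : ℤ // j ≠ 0}) (a : ℤ) :
    Wrow j (a + 1) = FreeGroup.of (j, -(a + 1)) * Wrow j a := by
  rcases le_or_gt 0 a with ha | ha
  · have h1 : (0:ℤ) ≤ a + 1 := by omega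
    have h2 : (a + 1).toNat = a.toNat + 1 := by omega
    rw [Wrow, Wrow, if_pos h1, if_pos ha, h2]
    show FreeGroup.of (j, -((a.toNat : ℤ) + 1)) * Wp j a.toNat = _
    have h5 : -((a.toNat : ℤ) + 1) = -(a + 1) := by omega
    rw [h5]
  · rcases eq_or_lt_of_le (show a ≤ -1 by omega) with ha1 | ha2
    · subst ha1
      rw [show (-1 + 1 : ℤ) = 0 by ring, Wrow_zero, Wrow_neg_one, neg_zero, mul_inv_cancel]
    · -- a ≤ -2
      have h1 : ¬ (0:ℤ) ≤ a + 1 := by omega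
      have h2 : ¬ (0:ℤ) ≤ a := by omega
      have h3 : (-a).toNat = (-(a+1)).toNat + 1 := by omega
      rw [Wrow, Wrow, if_neg h1, if_neg h2, h3]
      show _ = FreeGroup.of (j, -(a + 1)) * ((FreeGroup.of (j, ((-(a+1)).toNat : ℤ)))⁻¹ * Wm j (-(a+1)).toNat)
      have h4 : ((-(a+1)).toNat : ℤ) = -(a+1) := by omega
      rw [h4, ← mul_assoc, mul_inv_cancel, one_mul]

def Wgen (a : ℤ) (j : {j : ℤ // j ≠ 0}) : FreeGroup K :=
  if h : a = 0 then 1 else FreeGroup.of (⟨a, h⟩, j)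

def ι3 : FreeGroup K →* FreeGroup J := FreeGroup.lift fun p => Wrow p.2 p.1.val

def ψ3 : FreeGroup J →* FreeGroup K :=
  FreeGroup.lift fun p => Wgen (-p.2) p.1 * (Wgen (-p.2 - 1) p.1)⁻¹

lemma ψ3_of (j : {j : ℤ // j ≠ 0}) (k : ℤ) :
    ψ3 (FreeGroup.of (j, k)) = Wgen (-k) j * (Wgen (-k - 1) j)⁻¹ :=
  FreeGroup.lift_apply_of

lemma ψ3_Wrow (a : ℤ) (j : {j : ℤ // j ≠ 0}) : ψ3 (Wrow j a) = Wgen a j := by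
  induction a using Int.induction_on with
  | zero => rw [Wrow_zero, _root_.map_one]; simp [Wgen]
  | succ n ih =>
      rw [Wrow_succ, _root_.map_mul, ψ3_of, ih, neg_neg,
        show (n:ℤ) + 1 - 1 = (n:ℤ) by ring, inv_mul_cancel_right]
  | pred n ih =>
      have hrec := Wrow_succ j (-(n:ℤ) - 1)
      rw [show -(n:ℤ) - 1 + 1 = -(n:ℤ) by ring] at hrec
      rw [show (- -(n:ℤ)) = (n:ℤ) by ring] at hrec
      have h5 : Wrow j (-(n:ℤ) - 1) = (FreeGroup.of (j, (n:ℤ)))⁻¹ * Wrow j (-(n:ℤ)) := by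
        rw [hrec, ← mul_assoc, inv_mul_cancel, one_mul]
      rw [h5, _root_.map_mul, _root_.map_inv, ψ3_of, ih]
      rw [mul_inv_rev, inv_inv, mul_assoc, inv_mul_cancel, mul_one]

lemma ψ3_comp_ι3 : ψ3.comp ι3 = MonoidHom.id _ := by
  apply FreeGroup.ext_hom
  rintro ⟨a, j⟩
  rw [MonoidHom.comp_apply, MonoidHom.id_apply,
    show ι3 (FreeGroup.of (a, j)) = Wrow j a.val from FreeGroup.lift_apply_of, ψ3_Wrow]
  rw [Wgen, dif_neg a.2]

lemma ι3_inj : Function.Injective ι3 := by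
  intro u v h
  have hu := DFunLike.congr_fun ψ3_comp_ι3 u
  have hv := DFunLike.congr_fun ψ3_comp_ι3 v
  simp only [MonoidHom.comp_apply, MonoidHom.id_apply] at hu hv
  rw [← hu, ← hv, h]


lemma ι2_inj : Function.Injective ι2 := by
  intro u v h
  have h' := congrArg e2 h
  have hu := DFunLike.congr_fun e2_comp_ι2 u
  have hv := DFunLike.congr_fun e2_comp_ι2 v
  simp only [MonoidHom.comp_apply] at hu hv
  exact inl_injective (hu ▸ hv ▸ h')


/-! ### Composite computations -/

lemma ι2_of (j : {j : ℤ // j ≠ 0}) (k : ℤ) :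
    ι2 (FreeGroup.of (j, k)) =
      FreeGroup.of (0 : ℤ) ^ k * FreeGroup.of j.val * FreeGroup.of (0 : ℤ) ^ (-(k + 1)) :=
  FreeGroup.lift_apply_of

lemma Wrow_pred (j : {j : ℤ // j ≠ 0}) (a : ℤ) :
    Wrow j (a - 1) = (FreeGroup.of (j, -a))⁻¹ * Wrow j a := by
  have h := Wrow_succ j (a - 1)
  rw [show a - 1 + 1 = a by ring] at h
  rw [h, ← mul_assoc, inv_mul_cancel, one_mul]

lemma ι2_Wrow (j : {j : ℤ // j ≠ 0}) : ∀ a : ℤ,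
    ι2 (Wrow j a) = FreeGroup.of (0 : ℤ) ^ (-a) * FreeGroup.of j.val ^ a := by
  intro a
  induction a using Int.induction_on with
  | zero => rw [Wrow_zero, _root_.map_one]; simp
  | succ n ih =>
      rw [Wrow_succ, _root_.map_mul, ι2_of, ih]
      group
  | pred n ih =>
      rw [show -(n : ℤ) - 1 = (-(n : ℤ)) - 1 by ring, Wrow_pred, _root_.map_mul,
        _root_.map_inv, ι2_of, ih]
      group

def χ : FreeGroup K →* F2 := ι1.comp (ι2.comp ι3)

lemma ι1_of (m : ℤ) : ι1 (FreeGroup.of m) = Y ^ m * X * Y ^ (-m) := FreeGroup.lift_apply_of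

def Cel (a b : ℤ) : F2 :=
  (FreeGroup.of 0 ^ a)⁻¹ * (FreeGroup.of 1 ^ b)⁻¹ * FreeGroup.of 0 ^ a * FreeGroup.of 1 ^ b

lemma Cel_def (a b : ℤ) : Cel a b = (X ^ a)⁻¹ * (Y ^ b)⁻¹ * X ^ a * Y ^ b := rfl

lemma χ_of (a : {a : ℤ // a ≠ 0}) (j : {j : ℤ // j ≠ 0}) :
    χ (FreeGroup.of (a, j)) = Cel a.val (-j.val) := by
  have h0 : ι3 (FreeGroup.of (a, j)) = Wrow j a.val := FreeGroup.lift_apply_of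
  rw [χ, MonoidHom.comp_apply, MonoidHom.comp_apply, h0, ι2_Wrow,
    _root_.map_mul, _root_.map_zpow, _root_.map_zpow, ι1_of, ι1_of, Cel_def]
  have hx : Y ^ (0:ℤ) * X * Y ^ (-0:ℤ) = X := by simp
  rw [hx]
  have hconj : (Y ^ j.val * X * Y ^ (-j.val)) ^ a.val = Y ^ j.val * X ^ a.val * (Y ^ j.val)⁻¹ := by
    rw [show Y ^ (-j.val) = (Y ^ j.val)⁻¹ by rw [zpow_neg], conj_zpow]
  rw [hconj]
  group

/-! ### The set `S` and the lift homomorphism -/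

def S : Set F2 := {g | ∃ k₁ k₂ : ℤ, k₁ ≠ 0 ∧ k₂ ≠ 0 ∧
  g = (FreeGroup.of 0 ^ k₁)⁻¹ * (FreeGroup.of 1 ^ k₂)⁻¹ *
        FreeGroup.of 0 ^ k₁ * FreeGroup.of 1 ^ k₂}

def L : FreeGroup S →* F2 := FreeGroup.lift ((↑) : S → F2)

noncomputable def k1 (s : S) : ℤ := s.2.choose
noncomputable def k2 (s : S) : ℤ := s.2.choose_spec.choose

lemma k1_ne (s : S) : k1 s ≠ 0 := s.2.choose_spec.choose_spec.1
lemma k2_ne (s : S) : k2 s ≠ 0 := s.2.choose_spec.choose_spec.2.1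
lemma s_spec (s : S) : (s : F2) = Cel (k1 s) (k2 s) := s.2.choose_spec.choose_spec.2.2

noncomputable def fS (s : S) : K :=
  (⟨k1 s, k1_ne s⟩, ⟨-(k2 s), neg_ne_zero.mpr (k2_ne s)⟩)

noncomputable def θ : FreeGroup S →* FreeGroup K :=
  FreeGroup.lift fun s => FreeGroup.of (fS s)

def τ : FreeGroup K →* FreeGroup S :=
  FreeGroup.lift fun p =>
    FreeGroup.of ⟨Cel p.1.val (-p.2.val),
      ⟨p.1.val, -p.2.val, p.1.2, neg_ne_zero.mpr p.2.2, rfl⟩⟩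

lemma τ_comp_θ : τ.comp θ = MonoidHom.id _ := by
  apply FreeGroup.ext_hom
  intro s
  rw [MonoidHom.comp_apply, MonoidHom.id_apply,
    show θ (FreeGroup.of s) = FreeGroup.of (fS s) from FreeGroup.lift_apply_of,
    show τ (FreeGroup.of (fS s)) = _ from FreeGroup.lift_apply_of]
  congr 1
  apply Subtype.ext
  show Cel (k1 s) (-(-(k2 s))) = (s : F2)
  rw [neg_neg, ← s_spec]

lemma θ_inj : Function.Injective θ := by
  intro u v h
  have hu := DFunLike.congr_fun τ_comp_θ u
  have hv := DFunLike.congr_fun τ_comp_θ v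
  simp only [MonoidHom.comp_apply, MonoidHom.id_apply] at hu hv
  rw [← hu, ← hv, h]

lemma L_eq : L = χ.comp θ := by
  apply FreeGroup.ext_hom
  intro s
  rw [MonoidHom.comp_apply,
    show θ (FreeGroup.of s) = FreeGroup.of (fS s) from FreeGroup.lift_apply_of,
    show L (FreeGroup.of s) = (s : F2) from FreeGroup.lift_apply_of]
  show (s : F2) = χ (FreeGroup.of (⟨k1 s, k1_ne s⟩, ⟨-(k2 s), neg_ne_zero.mpr (k2_ne s)⟩))
  rw [χ_of]
  show (s : F2) = Cel (k1 s) (-(-(k2 s)))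
  rw [neg_neg, ← s_spec]

lemma L_inj : Function.Injective L := by
  rw [L_eq]
  have : ⇑(χ.comp θ) = ⇑ι1 ∘ ⇑ι2 ∘ ⇑ι3 ∘ ⇑θ := rfl
  rw [this]
  exact ι1_inj.comp (ι2_inj.comp (ι3_inj.comp θ_inj))

/-! ### The range of `L` is the commutator subgroup -/

def T : Subgroup F2 := Subgroup.closure S

lemma memT (a b : ℤ) : Cel a b ∈ T := by
  by_cases ha : a = 0
  · subst ha
    have : Cel 0 b = 1 := by rw [Cel_def]; group
    rw [this]; exact one_mem T
  by_cases hb : b = 0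
  · subst hb
    have : Cel a 0 = 1 := by rw [Cel_def]; group
    rw [this]; exact one_mem T
  · exact Subgroup.subset_closure ⟨a, b, ha, hb, rfl⟩

lemma idX (a b : ℤ) : X⁻¹ * Cel a b * X = Cel (a + 1) b * (Cel 1 b)⁻¹ := by
  rw [Cel_def, Cel_def, Cel_def]; group

lemma idXi (a b : ℤ) : X * Cel a b * X⁻¹ = Cel (a - 1) b * (Cel (-1) b)⁻¹ := by
  rw [Cel_def, Cel_def, Cel_def]; group

lemma idY (a b : ℤ) : Y⁻¹ * Cel a b * Y = (Cel a 1)⁻¹ * Cel a (b + 1) := by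
  rw [Cel_def, Cel_def, Cel_def]; group

lemma idYi (a b : ℤ) : Y * Cel a b * Y⁻¹ = (Cel a (-1))⁻¹ * Cel a (b - 1) := by
  rw [Cel_def, Cel_def, Cel_def]; group

lemma conj_mem_of_gen (g : F2) (hg : ∀ s ∈ S, g * s * g⁻¹ ∈ T) :
    ∀ h ∈ T, g * h * g⁻¹ ∈ T := by
  intro h hh
  have hle : T ≤ Subgroup.comap (MulAut.conj g).toMonoidHom T := by
    rw [T, Subgroup.closure_le]
    intro s hs
    exact hg s hs
  exact hle hh

lemma conj_mem : ∀ (g : F2), ∀ h ∈ T, g * h * g⁻¹ ∈ T := by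
  intro g
  induction g using FreeGroup.induction_on with
  | C1 => intro h hh; simpa using hh
  | of x =>
      apply conj_mem_of_gen
      rintro s ⟨k₁, k₂, h1, h2, rfl⟩
      fin_cases x
      · show X * Cel k₁ k₂ * X⁻¹ ∈ T
        rw [idXi]
        exact mul_mem (memT _ _) (inv_mem (memT _ _))
      · show Y * Cel k₁ k₂ * Y⁻¹ ∈ T
        rw [idYi]
        exact mul_mem (inv_mem (memT _ _)) (memT _ _)
  | inv_of x _ =>
      apply conj_mem_of_gen
      rintro s ⟨k₁, k₂, h1, h2, rfl⟩
      fin_cases x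
      · show X⁻¹ * Cel k₁ k₂ * X⁻¹⁻¹ ∈ T
        rw [inv_inv, idX]
        exact mul_mem (memT _ _) (inv_mem (memT _ _))
      · show Y⁻¹ * Cel k₁ k₂ * Y⁻¹⁻¹ ∈ T
        rw [inv_inv, idY]
        exact mul_mem (inv_mem (memT _ _)) (memT _ _)
  | mul g₁ g₂ ih₁ ih₂ =>
      intro h hh
      have : g₁ * g₂ * h * (g₁ * g₂)⁻¹ = g₁ * (g₂ * h * g₂⁻¹) * g₁⁻¹ := by group
      rw [this]
      exact ih₁ _ (ih₂ _ hh)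

lemma comm_mem : ∀ g h : F2, ⁅g, h⁆ ∈ T := by
  have conj' : ∀ (g : F2), ∀ h ∈ T, g * h * g⁻¹ ∈ T := conj_mem
  have key_inv : ∀ g h : F2, ⁅g, h⁆ ∈ T → ⁅g, h⁻¹⁆ ∈ T := by
    intro g h hgh
    have : ⁅g, h⁻¹⁆ = h⁻¹ * ⁅g, h⁆⁻¹ * (h⁻¹)⁻¹ := by
      rw [commutatorElement_def, commutatorElement_def]; group
    rw [this]
    exact conj' _ _ (inv_mem hgh)
  have key_mul : ∀ g h₁ h₂ : F2, ⁅g, h₁⁆ ∈ T → ⁅g, h₂⁆ ∈ T → ⁅g, h₁ * h₂⁆ ∈ T := by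
    intro g h₁ h₂ k1 k2
    have : ⁅g, h₁ * h₂⁆ = ⁅g, h₁⁆ * (h₁ * ⁅g, h₂⁆ * h₁⁻¹) := by
      rw [commutatorElement_def, commutatorElement_def, commutatorElement_def]; group
    rw [this]
    exact mul_mem k1 (conj' _ _ k2)
  have base : ∀ x y : Fin 2, ⁅(FreeGroup.of x : F2), (FreeGroup.of y : F2)⁆ ∈ T := by
    intro x y
    fin_cases x <;> fin_cases y
    · show ⁅(FreeGroup.of 0 : F2), (FreeGroup.of 0 : F2)⁆ ∈ T
      rw [(Commute.refl _).commutator_eq]; exact one_mem T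
    · show ⁅(FreeGroup.of 0 : F2), (FreeGroup.of 1 : F2)⁆ ∈ T
      have : ⁅(FreeGroup.of 0 : F2), (FreeGroup.of 1 : F2)⁆ = Cel (-1) (-1) := by
        rw [commutatorElement_def, Cel_def]
        show X * Y * X⁻¹ * Y⁻¹ = _
        group
      rw [this]; exact memT _ _
    · show ⁅(FreeGroup.of 1 : F2), (FreeGroup.of 0 : F2)⁆ ∈ T
      have : ⁅(FreeGroup.of 1 : F2), (FreeGroup.of 0 : F2)⁆ = (Cel (-1) (-1))⁻¹ := by
        rw [commutatorElement_def, Cel_def]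
        show Y * X * Y⁻¹ * X⁻¹ = _
        group
      rw [this]; exact inv_mem (memT _ _)
    · show ⁅(FreeGroup.of 1 : F2), (FreeGroup.of 1 : F2)⁆ ∈ T
      rw [(Commute.refl _).commutator_eq]; exact one_mem T
  have inner : ∀ x : Fin 2, ∀ h : F2, ⁅(FreeGroup.of x : F2), h⁆ ∈ T := by
    intro x h
    induction h using FreeGroup.induction_on with
    | C1 => rw [commutatorElement_one_right]; exact one_mem T
    | of y => exact base x y
    | inv_of y ih => exact key_inv _ _ ih
    | mul h₁ h₂ ih₁ ih₂ => exact key_mul _ _ _ ih₁ ih₂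
  have key_inv_l : ∀ g h : F2, (∀ h' : F2, ⁅g, h'⁆ ∈ T) → ⁅g⁻¹, h⁆ ∈ T := by
    intro g h hg
    have : ⁅g⁻¹, h⁆ = g⁻¹ * ⁅g, h⁆⁻¹ * (g⁻¹)⁻¹ := by
      rw [commutatorElement_def, commutatorElement_def]; group
    rw [this]
    exact conj' _ _ (inv_mem (hg h))
  intro g
  induction g using FreeGroup.induction_on with
  | C1 => intro h; rw [commutatorElement_one_left]; exact one_mem T
  | of x => exact inner x
  | inv_of x _ => intro h; exact key_inv_l _ _ (inner x)
  | mul g₁ g₂ ih₁ ih₂ =>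
      intro h
      have : ⁅g₁ * g₂, h⁆ = g₁ * ⁅g₂, h⁆ * g₁⁻¹ * ⁅g₁, h⁆ := by
        rw [commutatorElement_def, commutatorElement_def, commutatorElement_def]; group
      rw [this]
      exact mul_mem (conj' _ _ (ih₂ h)) (ih₁ h)

lemma range_eq : L.range = commutator F2 := by
  have hrange : L.range = T := by
    rw [L, FreeGroup.range_lift_eq_closure, Subtype.range_coe]
    rfl
  rw [hrange]
  apply le_antisymm
  · rw [T, Subgroup.closure_le]
    rintro g ⟨k₁, k₂, h1, h2, rfl⟩
    have : (FreeGroup.of 0 ^ k₁)⁻¹ * (FreeGroup.of 1 ^ k₂)⁻¹ *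
        FreeGroup.of 0 ^ k₁ * FreeGroup.of 1 ^ k₂ =
        ⁅((FreeGroup.of 0 : F2) ^ k₁)⁻¹, ((FreeGroup.of 1 : F2) ^ k₂)⁻¹⁆ := by
      rw [commutatorElement_def]; group
    show _ ∈ (commutator F2 : Set F2)
    rw [this, commutator_def]
    exact Subgroup.commutator_mem_commutator (Subgroup.mem_top _) (Subgroup.mem_top _)
  · rw [commutator_def]
    exact Subgroup.commutator_le.mpr fun g _ h _ => comm_mem g h

end Stmt6Aux

/-- The commutator subgroup of the free group `F₂` on `x₁, x₂` is freely generated by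
the commutators `[x₁^{k₁}, x₂^{k₂}]` with `k₁, k₂` nonzero integers. -/
theorem stmt6 :
    IsFreeBasis
      {g : FreeGroup (Fin 2) | ∃ k₁ k₂ : ℤ, k₁ ≠ 0 ∧ k₂ ≠ 0 ∧
        g = (FreeGroup.of 0 ^ k₁)⁻¹ * (FreeGroup.of 1 ^ k₂)⁻¹ *
              FreeGroup.of 0 ^ k₁ * FreeGroup.of 1 ^ k₂}
      (commutator (FreeGroup (Fin 2))) := by
  exact ⟨Stmt6Aux.L_inj, Stmt6Aux.range_eq⟩
end

section
/- (Tomaszewski's theorem) For n ≥ 1, the commutator subgroup [Fₙ,Fₙ] of the free group Fₙ on x₁,…,xₙ is freely generated by the set { (x_i^{k_i} x_{i+1}^{k_{i+1}} ⋯ x_n^{k_n})⁻¹ [x_i, x_j] (x_i^{k_i} x_{i+1}^{k_{i+1}} ⋯ x_n^{k_n}) : 1 ≤ i < j ≤ n, k_i, …, k_n ∈ ℤ }. -/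
/-- The ordered word `x_i^{k_i} x_{i+1}^{k_{i+1}} ⋯ x_{n-1}^{k_{n-1}}` in the free group
on `Fin n` (exponents given by `k`, only letters with index `≥ i` appear). -/
def tailWord (n : ℕ) (i : Fin n) (k : Fin n → ℤ) : FreeGroup (Fin n) :=
  (((List.finRange n).filter fun l => i ≤ l).map fun l => FreeGroup.of l ^ k l).prod

namespace Tomasz

open FreeGroup List

variable {n : ℕ}

/-- standard basis vector -/
abbrev e (i : Fin n) : Fin n → ℤ := Pi.single i 1

/-- The Tomaszewski basis elements. -/
def bElem (i j : Fin n) (k : Fin n → ℤ) : FreeGroup (Fin n) :=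
  (tailWord n i k)⁻¹ *
    ((FreeGroup.of i)⁻¹ * (FreeGroup.of j)⁻¹ * FreeGroup.of i * FreeGroup.of j) *
    tailWord n i k

def Sset (n : ℕ) : Set (FreeGroup (Fin n)) :=
  {g | ∃ i j : Fin n, i < j ∧ ∃ k : Fin n → ℤ, g = bElem i j k}

lemma bElem_mem {i j : Fin n} (h : i < j) (k : Fin n → ℤ) : bElem i j k ∈ Sset n :=
  ⟨i, j, h, k, rfl⟩

lemma bElem_congr {i j : Fin n} {k k' : Fin n → ℤ} (h : ∀ l, i ≤ l → k l = k' l) :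
    bElem i j k = bElem i j k' := by
  have ht : tailWord n i k = tailWord n i k' := by
    unfold tailWord
    congr 1
    apply List.map_congr_left
    intro l hl
    rw [List.mem_filter] at hl
    rw [h l (by simpa using hl.2)]
  rw [bElem, bElem, ht]

/- ## sorted list splitting -/

lemma sorted_split {L : List (Fin n)} (hL : L.Pairwise (· < ·)) {i : Fin n} (hi : i ∈ L) :
    L = (L.filter fun l => l < i) ++ i :: (L.filter fun l => i < l) := by
  induction L with
  | nil => cases hi
  | cons x T ih =>
    obtain ⟨hx, hT⟩ := List.pairwise_cons.1 hL
    rcases List.mem_cons.1 hi with rfl | hi'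
    · have h1 : (T.filter fun l => l < i) = [] := by
        rw [List.filter_eq_nil_iff]
        intro a ha
        simpa using not_lt.2 (hx a ha).le
      have h2 : (T.filter fun l => i < l) = T := by
        rw [List.filter_eq_self]
        intro a ha
        simpa using hx a ha
      simp [List.filter_cons, h1, h2]
    · have hxi : x < i := hx _ hi'
      have e1 : (decide (x < i)) = true := by simpa using hxi
      have e2 : (decide (i < x)) = false := by simpa using (asymm hxi : ¬ i < x)
      simp only [List.filter_cons, e1, e2, if_true, if_false, cond_true, cond_false]
      rw [List.cons_append]
      exact congrArg (x :: ·) (ih hT hi')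

lemma finRange_split (i : Fin n) :
    List.finRange n =
      ((List.finRange n).filter fun l => l < i) ++
        i :: ((List.finRange n).filter fun l => i < l) :=
  sorted_split (List.pairwise_lt_finRange n) (List.mem_finRange i)

lemma sorted_filter_le {L : List (Fin n)} (hL : L.Pairwise (· < ·)) {i : Fin n} (hi : i ∈ L) :
    (L.filter fun l => i ≤ l) = i :: (L.filter fun l => i < l) := by
  induction L with
  | nil => cases hi
  | cons x T ih =>
    obtain ⟨hx, hT⟩ := List.pairwise_cons.1 hL
    rcases List.mem_cons.1 hi with rfl | hi'
    · have h2 : (T.filter fun l => i ≤ l) = (T.filter fun l => i < l) := by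
        apply List.filter_congr
        intro a ha
        simp [le_of_lt (hx a ha), hx a ha]
      simp [List.filter_cons, h2]
    · have hxi : x < i := hx _ hi'
      have e1 : (decide (i ≤ x)) = false := by simpa using not_le.2 hxi
      have e2 : (decide (i < x)) = false := by simpa using (asymm hxi : ¬ i < x)
      simp only [List.filter_cons, e1, e2, if_false, cond_false]
      exact ih hT hi'

/-- generic product split of a word over `finRange.reverse` at index `i` -/
lemma prod_split {M : Type*} [Group M] (f : Fin n → M) (i : Fin n) :
    (((List.finRange n).reverse).map f).prod =
      ((((List.finRange n).filter fun l => i < l).reverse).map f).prod * f i *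
        ((((List.finRange n).filter fun l => l < i).reverse).map f).prod := by
  conv_lhs => rw [finRange_split i]
  rw [List.reverse_append, List.reverse_cons, List.map_append, List.prod_append,
    List.map_append, List.prod_append]
  simp [mul_assoc]

end Tomasz
namespace Tomasz

open FreeGroup List

variable {n : ℕ}

/- ## telescoping products over ℤ -/

/-- `zTel β c = β 1 * β 2 * ⋯ * β c` (suitably interpreted for `c ≤ 0`). -/
def zTel {M : Type*} [Group M] (β : ℤ → M) (c : ℤ) : M :=
  if 0 ≤ c then ((List.range c.toNat).map fun j : ℕ => β ((j : ℤ) + 1)).prod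
  else (((List.range (-c).toNat).map fun j : ℕ => β ((j : ℤ) + 1 + c)).prod)⁻¹

@[simp] lemma zTel_zero {M : Type*} [Group M] (β : ℤ → M) : zTel β 0 = 1 := by
  simp [zTel]

lemma zTel_succ {M : Type*} [Group M] (β : ℤ → M) (c : ℤ) :
    zTel β (c + 1) = zTel β c * β (c + 1) := by
  rcases le_or_gt 0 c with hc | hc
  · have h1 : (0:ℤ) ≤ c + 1 := by omega
    have h2 : (c + 1).toNat = c.toNat + 1 := by omega
    rw [zTel, zTel, if_pos h1, if_pos hc, h2, List.range_succ, List.map_append,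
      List.prod_append]
    simp [Int.toNat_of_nonneg hc]
  · rcases eq_or_lt_of_le (by omega : c + 1 ≤ 0) with h0 | h0
    · have hc1 : c = -1 := by omega
      subst hc1
      norm_num [zTel, List.range_succ]
    · have hn1 : ¬ (0:ℤ) ≤ c + 1 := by omega
      have hn2 : ¬ (0:ℤ) ≤ c := by omega
      have h2 : (-c).toNat = (-(c+1)).toNat + 1 := by omega
      rw [zTel, zTel, if_neg hn1, if_neg hn2, h2, List.range_succ_eq_map]
      rw [List.map_cons, List.prod_cons, List.map_map, mul_inv_rev]
      have : ((List.range (-(c+1)).toNat).map ((fun j : ℕ => β (j + 1 + c)) ∘ Nat.succ)).prod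
          = ((List.range (-(c+1)).toNat).map fun j : ℕ => β (j + 1 + (c + 1))).prod := by
        apply congrArg
        apply List.map_congr_left
        intro a _
        simp only [Function.comp_apply]
        congr 1
        push_cast
        ring
      rw [this]
      have : ((0:ℕ) : ℤ) + 1 + c = c + 1 := by push_cast; ring
      rw [this, inv_mul_cancel_right]

lemma zTel_congr {M : Type*} [Group M] {β β' : ℤ → M} (h : ∀ d, β d = β' d) (c : ℤ) :
    zTel β c = zTel β' c := by
  have : β = β' := funext h
  rw [this]

/- ## words in the free group -/

/-- descending word `x_{n-1}^{a_{n-1}} ⋯ x_0^{a_0}` -/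
def tword (a : Fin n → ℤ) : FreeGroup (Fin n) :=
  (((List.finRange n).reverse).map fun l => FreeGroup.of l ^ a l).prod

/-- descending word over indices `> i` only -/
def Wgt (i : Fin n) (a : Fin n → ℤ) : FreeGroup (Fin n) :=
  ((((List.finRange n).filter fun l => i < l).reverse).map fun l => FreeGroup.of l ^ a l).prod

lemma Wgt_congr {i : Fin n} {a a' : Fin n → ℤ} (h : ∀ l, i < l → a l = a' l) :
    Wgt i a = Wgt i a' := by
  unfold Wgt
  congr 1
  apply List.map_congr_left
  intro l hl
  rw [List.mem_reverse, List.mem_filter] at hl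
  rw [h l (by simpa using hl.2)]

lemma tword_zero : tword (0 : Fin n → ℤ) = 1 := by
  apply List.prod_eq_one
  intro x hx
  rw [List.mem_map] at hx
  obtain ⟨l, _, rfl⟩ := hx
  simp

lemma tword_eq_of_support {i : Fin n} {a : Fin n → ℤ} (h : ∀ l, l < i → a l = 0) :
    tword a = Wgt i a * FreeGroup.of i ^ a i := by
  rw [tword, prod_split _ i]
  have : ((((List.finRange n).filter fun l => l < i).reverse).map
      fun l => FreeGroup.of l ^ a l).prod = 1 := by
    apply List.prod_eq_one
    intro x hx
    rw [List.mem_map] at hx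
    obtain ⟨l, hl, rfl⟩ := hx
    rw [List.mem_reverse, List.mem_filter] at hl
    rw [h l (by simpa using hl.2)]
    simp
  rw [this, mul_one, Wgt]

/-- the ascending part of a tail word is the inverse of a `Wgt` -/
lemma asc_eq_inv_Wgt (i : Fin n) (a : Fin n → ℤ) :
    ((((List.finRange n).filter fun l => i < l)).map
      fun l => FreeGroup.of l ^ (-(a l))).prod = (Wgt i a)⁻¹ := by
  rw [Wgt, List.map_reverse, List.prod_reverse_noncomm, List.map_map, inv_inv]
  apply congrArg
  apply List.map_congr_left
  intro l _
  simp [Function.comp, zpow_neg]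

lemma tailWord_eq (i : Fin n) (k : Fin n → ℤ) :
    tailWord n i k =
      FreeGroup.of i ^ k i *
        (((List.finRange n).filter fun l => i < l).map fun l => FreeGroup.of l ^ k l).prod := by
  rw [tailWord, sorted_filter_le (List.pairwise_lt_finRange n) (List.mem_finRange i),
    List.map_cons, List.prod_cons]

/-- `kfun a m` : the exponent function of the basis element produced at position `a`. -/
def kfun (a : Fin n → ℤ) (m : Fin n) : Fin n → ℤ :=
  fun l => if l = m then -(a m) - 1 else -(a l)

lemma tailWord_kfun {i m : Fin n} (him : i < m) (a : Fin n → ℤ) :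
    tailWord n i (kfun a m) =
      FreeGroup.of i ^ (-(a i)) * (Wgt i (a + e m))⁻¹ := by
  rw [tailWord_eq]
  have h1 : kfun a m i = -(a i) := by
    rw [kfun, if_neg (Fin.ne_of_lt him)]
  have h2 : (((List.finRange n).filter fun l => i < l).map
      fun l => FreeGroup.of l ^ kfun a m l).prod
      = (((List.finRange n).filter fun l => i < l).map
        fun l => FreeGroup.of l ^ (-((a + e m) l))).prod := by
    apply congrArg
    apply List.map_congr_left
    intro l _
    rcases eq_or_ne l m with rfl | hlm
    · have : (a + e l) l = a l + 1 := by simp [e]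
      rw [kfun, if_pos rfl, this]
      ring_nf
    · have : (a + e m) l = a l := by simp [e, Pi.single_eq_of_ne hlm]
      rw [kfun, if_neg hlm, this]
  rw [h1, h2, asc_eq_inv_Wgt]

/- ## the two key group identities -/

/-- Schreier-type element: `t'(a) x_m t'(a+e_m)⁻¹`. -/
def sW (a : Fin n → ℤ) (m : Fin n) : FreeGroup (Fin n) :=
  tword a * FreeGroup.of m * (tword (a + e m))⁻¹

lemma sW_base {m : Fin n} {a : Fin n → ℤ} (h : ∀ l, l < m → a l = 0) :
    sW a m = 1 := by
  have h' : ∀ l, l < m → (a + e m) l = 0 := by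
    intro l hl
    have : e m l = 0 := Pi.single_eq_of_ne (Fin.ne_of_lt hl) 1
    simp [this, h l hl]
  rw [sW, tword_eq_of_support h, tword_eq_of_support h',
    Wgt_congr (a := a + e m) (a' := a) (fun l hl => by
      simp [e, Pi.single_eq_of_ne (Fin.ne_of_gt hl)])]
  have : (a + e m) m = a m + 1 := by simp [e]
  rw [this]
  group

lemma key_group {i m : Fin n} (him : i < m) {a : Fin n → ℤ}
    (ha : ∀ l, l < i → a l = 0) :
    sW (a - e i) m * bElem i m (kfun a m) = sW a m := by
  have hane : ∀ l, l < i → (a + e m) l = 0 := fun l hl => by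
    have h1 : e m l = 0 := Pi.single_eq_of_ne (Fin.ne_of_lt (hl.trans him)) 1
    simp [h1, ha l hl]
  have hase : ∀ l, l < i → (a - e i) l = 0 := fun l hl => by
    have h1 : e i l = 0 := Pi.single_eq_of_ne (Fin.ne_of_lt hl) 1
    simp [h1, ha l hl]
  have hasem : ∀ l, l < i → (a - e i + e m) l = 0 := fun l hl => by
    have h1 : e i l = 0 := Pi.single_eq_of_ne (Fin.ne_of_lt hl) 1
    have h2 : e m l = 0 := Pi.single_eq_of_ne (Fin.ne_of_lt (hl.trans him)) 1
    simp [h1, h2, ha l hl]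
  have him' : i ≠ m := Fin.ne_of_lt him
  -- abbreviations
  set V := Wgt i a with hV
  set V' := Wgt i (a + e m) with hV'
  have e1 : tword a = V * FreeGroup.of i ^ a i := tword_eq_of_support ha
  have e2 : tword (a + e m) = V' * FreeGroup.of i ^ a i := by
    rw [tword_eq_of_support hane]
    have : (a + e m) i = a i := by simp [e, Pi.single_eq_of_ne him']
    rw [this]
  have e3 : tword (a - e i) = V * FreeGroup.of i ^ (a i - 1) := by
    rw [tword_eq_of_support hase]
    have h1 : (a - e i) i = a i - 1 := by simp [e]
    have h2 : Wgt i (a - e i) = V := Wgt_congr (fun l hl => by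
      simp [e, Pi.single_eq_of_ne (Fin.ne_of_gt hl)])
    rw [h1, h2]
  have e4 : tword (a - e i + e m) = V' * FreeGroup.of i ^ (a i - 1) := by
    rw [tword_eq_of_support hasem]
    have h1 : (a - e i + e m) i = a i - 1 := by
      simp [e, Pi.single_eq_of_ne him']
    have h2 : Wgt i (a - e i + e m) = V' := Wgt_congr (fun l hl => by
      simp [e, Pi.single_eq_of_ne (Fin.ne_of_gt hl)])
    rw [h1, h2]
  rw [sW, sW, e1, e2, e3, e4, bElem, tailWord_kfun him, ← hV']
  group

end Tomasz
namespace Tomasz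

open FreeGroup List

variable {n : ℕ}

open Classical in
/-- inclusion of an element of the free group on `Fin n` as a generator of
the free group on `Sset n`, or `1` if it is not in `Sset n`. -/
noncomputable def ofS (g : FreeGroup (Fin n)) : FreeGroup (Sset n) :=
  if h : g ∈ Sset n then FreeGroup.of (⟨g, h⟩ : Sset n) else 1

lemma ofS_mem {g : FreeGroup (Fin n)} (h : g ∈ Sset n) :
    ofS g = FreeGroup.of (⟨g, h⟩ : Sset n) := by
  rw [ofS, dif_pos h]

/-- level-`l` factor of the cocycle -/
noncomputable def Qlev (m : Fin n) (a : Fin n → ℤ) (l : Fin n) : FreeGroup (Sset n) :=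
  zTel (fun d => ofS (bElem l m (fun l' => if l' = l then -d else kfun a m l'))) (a l)

/-- the cocycle `σ a m ∈ F(S)`, mapping to `t'(a) x_m t'(a+e_m)⁻¹`. -/
noncomputable def sig (a : Fin n → ℤ) (m : Fin n) : FreeGroup (Sset n) :=
  (((List.finRange n).reverse).map fun l => if l < m then Qlev m a l else 1).prod

lemma sig_one {m : Fin n} {a : Fin n → ℤ} (h : ∀ l, l < m → a l = 0) :
    sig a m = 1 := by
  apply List.prod_eq_one
  intro x hx
  rw [List.mem_map] at hx
  obtain ⟨l, _, rfl⟩ := hx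
  by_cases hl : l < m
  · rw [if_pos hl, Qlev, h l hl, zTel_zero]
  · rw [if_neg hl]

lemma key_sigma {i m : Fin n} (him : i < m) {a : Fin n → ℤ}
    (ha : ∀ l, l < i → a l = 0) :
    sig a m = sig (a - e i) m * ofS (bElem i m (kfun a m)) := by
  have hane : ∀ l, l < i → (a - e i) l = 0 := fun l hl => by
    have h1 : e i l = 0 := Pi.single_eq_of_ne (Fin.ne_of_lt hl) 1
    simp [h1, ha l hl]
  rw [sig, sig, prod_split _ i, prod_split _ i]
  -- the parts over indices < i are trivial
  have hY : ∀ (b : Fin n → ℤ), (∀ l, l < i → b l = 0) →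
      ((((List.finRange n).filter fun l => l < i).reverse).map
        fun l => if l < m then Qlev m b l else 1).prod = 1 := by
    intro b hb
    apply List.prod_eq_one
    intro x hx
    rw [List.mem_map] at hx
    obtain ⟨l, hl, rfl⟩ := hx
    rw [List.mem_reverse, List.mem_filter] at hl
    have hli : l < i := by simpa using hl.2
    by_cases hlm : l < m
    · rw [if_pos hlm, Qlev, hb l hli, zTel_zero]
    · rw [if_neg hlm]
  -- the parts over indices > i agree
  have hX : ((((List.finRange n).filter fun l => i < l).reverse).map
        fun l => if l < m then Qlev m a l else 1).prod
      = ((((List.finRange n).filter fun l => i < l).reverse).map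
        fun l => if l < m then Qlev m (a - e i) l else 1).prod := by
    apply congrArg
    apply List.map_congr_left
    intro l hl
    rw [List.mem_reverse, List.mem_filter] at hl
    have hil : i < l := by simpa using hl.2
    by_cases hlm : l < m
    · rw [if_pos hlm, if_pos hlm]
      have hal : (a - e i) l = a l := by
        simp [e, Pi.single_eq_of_ne (Fin.ne_of_gt hil)]
      rw [Qlev, Qlev, hal]
      apply zTel_congr
      intro d
      apply congrArg
      apply bElem_congr
      intro l' hl'
      rcases eq_or_ne l' l with rfl | hne
      · simp
      · rw [if_neg hne, if_neg hne, kfun, kfun]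
        have hl'i : l' ≠ i := Fin.ne_of_gt (lt_of_lt_of_le hil hl')
        have h1 : (a - e i) l' = a l' := by
          simp [e, Pi.single_eq_of_ne hl'i]
        have h2 : (a - e i) m = a m := by
          simp [e, Pi.single_eq_of_ne (Fin.ne_of_gt him)]
        rw [h1, h2]
    · rw [if_neg hlm, if_neg hlm]
  -- the middle factor telescopes
  have hmid : (if i < m then Qlev m a i else 1)
      = (if i < m then Qlev m (a - e i) i else 1) * ofS (bElem i m (kfun a m)) := by
    rw [if_pos him, if_pos him]
    have hai : (a - e i) i = a i - 1 := by simp [e]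
    have hβ : (fun d => ofS (bElem i m (fun l' => if l' = i then -d else kfun (a - e i) m l')))
        = (fun d => ofS (bElem i m (fun l' => if l' = i then -d else kfun a m l'))) := by
      funext d
      apply congrArg
      apply bElem_congr
      intro l' hl'
      rcases eq_or_ne l' i with rfl | hne
      · simp
      · rw [if_neg hne, if_neg hne, kfun, kfun]
        have hl'i : l' ≠ i := hne
        have h1 : (a - e i) l' = a l' := by simp [e, Pi.single_eq_of_ne hl'i]
        have h2 : (a - e i) m = a m := by
          simp [e, Pi.single_eq_of_ne (Fin.ne_of_gt him)]
        rw [h1, h2]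
    have hβval : ofS (bElem i m (fun l' => if l' = i then -(a i) else kfun a m l'))
        = ofS (bElem i m (kfun a m)) := by
      apply congrArg
      apply congrArg
      funext l'
      rcases eq_or_ne l' i with rfl | hne
      · rw [if_pos rfl, kfun, if_neg (Fin.ne_of_lt him)]
      · rw [if_neg hne]
    rw [Qlev, Qlev, hai, hβ]
    have : a i = (a i - 1) + 1 := by ring
    rw [this, zTel_succ]
    rw [show (a i - 1 + 1) = a i by ring, hβval]
  rw [hY a ha, hY _ hane, hX, hmid]
  group

end Tomasz
namespace Tomasz

open FreeGroup List

variable {n : ℕ}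

/- ## the semidirect product and the homomorphism Φ -/

/-- translation action of `ℤⁿ` on functions `ℤⁿ → F(S)` -/
noncomputable def rho (n : ℕ) :
    Multiplicative (Fin n → ℤ) →* MulAut ((Fin n → ℤ) → FreeGroup (Sset n)) where
  toFun t :=
    { toFun := fun f x => f (x + t.toAdd)
      invFun := fun f x => f (x - t.toAdd)
      left_inv := fun f => by funext x; simp
      right_inv := fun f => by funext x; simp
      map_mul' := fun f g => rfl }
  map_one' := by
    ext f x
    show f (x + 0) = f x
    rw [add_zero]
  map_mul' := fun t₁ t₂ => by
    ext f x
    show f (x + (t₁.toAdd + t₂.toAdd)) = f (x + t₁.toAdd + t₂.toAdd)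
    rw [add_assoc]

noncomputable abbrev SDP (n : ℕ) :=
  SemidirectProduct ((Fin n → ℤ) → FreeGroup (Sset n)) (Multiplicative (Fin n → ℤ)) (rho n)

noncomputable def Phi (n : ℕ) : FreeGroup (Fin n) →* SDP n :=
  FreeGroup.lift fun m =>
    (⟨fun a => sig a m, Multiplicative.ofAdd (e m)⟩ : SDP n)

lemma Phi_of (m : Fin n) :
    Phi n (FreeGroup.of m) = ⟨fun a => sig a m, Multiplicative.ofAdd (e m)⟩ :=
  FreeGroup.lift_apply_of

lemma left_mul (p q : SDP n) (x : Fin n → ℤ) :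
    (p * q).left x = p.left x * q.left (x + p.right.toAdd) := rfl

lemma left_inv' (p : SDP n) (x : Fin n → ℤ) :
    (p⁻¹).left x = (p.left (x - p.right.toAdd))⁻¹ := by
  have h : x - p.right.toAdd = x + (p.right⁻¹).toAdd := by
    rw [toAdd_inv, sub_eq_add_neg]
  rw [h]
  rfl

lemma Phi_of_left (m : Fin n) (x : Fin n → ℤ) :
    (Phi n (FreeGroup.of m)).left x = sig x m := by rw [Phi_of]

lemma Phi_of_right (m : Fin n) :
    (Phi n (FreeGroup.of m)).right = Multiplicative.ofAdd (e m) := by rw [Phi_of]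

/- ## C1 : per-generator identity -/

/-- the lift `F(S) → F(Fin n)`. -/
noncomputable def iota (n : ℕ) : FreeGroup (Sset n) →* FreeGroup (Fin n) :=
  FreeGroup.lift ((↑) : Sset n → FreeGroup (Fin n))

lemma iota_ofS {g : FreeGroup (Fin n)} (h : g ∈ Sset n) : iota n (ofS g) = g := by
  rw [ofS_mem h, iota, FreeGroup.lift_apply_of]

/-- measure for the strong induction -/
def mu (a : Fin n → ℤ) (m : Fin n) : ℕ :=
  ∑ l : Fin n, if l < m then (a l).natAbs else 0

lemma mu_update {i m : Fin n} (him : i < m) (a : Fin n → ℤ) (c : ℤ) :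
    mu (fun l => if l = i then c else a l) m
      = (mu a m - (a i).natAbs) + c.natAbs := by
  rw [mu, mu]
  rw [← Finset.sum_erase_add _ _ (Finset.mem_univ i),
    ← Finset.sum_erase_add _ _ (Finset.mem_univ i)]
  have h1 : ∀ l ∈ Finset.univ.erase i,
      (if l < m then ((if l = i then c else a l)).natAbs else 0)
        = (if l < m then (a l).natAbs else 0) := by
    intro l hl
    rw [if_neg (Finset.mem_erase.1 hl).1]
  rw [Finset.sum_congr rfl h1, if_pos him, if_pos him, if_pos rfl]
  set s := ∑ l ∈ Finset.univ.erase i, if l < m then (a l).natAbs else 0 with hs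
  omega

lemma C1gen : ∀ (N : ℕ) (a : Fin n → ℤ) (m : Fin n), mu a m = N →
    iota n (sig a m) = sW a m := by
  intro N
  induction N using Nat.strong_induction_on with
  | _ N ih =>
    intro a m hN
    by_cases hbase : ∀ l, l < m → a l = 0
    · rw [sig_one hbase, _root_.map_one, sW_base hbase]
    · push_neg at hbase
      -- find the minimal index with nonzero coordinate
      have hne : (Finset.univ.filter fun l => a l ≠ 0 ∧ l < m).Nonempty := by
        obtain ⟨l, hlm, hl0⟩ := hbase
        exact ⟨l, by simp [hl0, hlm]⟩
      set i := (Finset.univ.filter fun l => a l ≠ 0 ∧ l < m).min' hne with hidef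
      have hi : a i ≠ 0 ∧ i < m := by
        have := Finset.min'_mem _ hne
        simpa using this
      have hmin : ∀ l, l < i → a l = 0 := by
        intro l hl
        by_contra hl0
        have hlm : l < m := hl.trans hi.2
        have : i ≤ l := Finset.min'_le _ _ (by simp [hl0, hlm])
        exact absurd hl (not_lt.2 this)
      rcases lt_or_gt_of_ne hi.1 with hneg | hpos
      · -- a i < 0 : peel up
        have hsub : (a + e i) - e i = a := by ring
        have hsupp : ∀ l, l < i → (a + e i) l = 0 := fun l hl => by
          have h1 : e i l = 0 := Pi.single_eq_of_ne (Fin.ne_of_lt hl) 1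
          simp [h1, hmin l hl]
        have hks := key_sigma hi.2 hsupp
        rw [hsub] at hks
        have hkg := key_group hi.2 hsupp
        rw [hsub] at hkg
        have hupdate : (a + e i) = fun l => if l = i then a i + 1 else a l := by
          funext l
          rcases eq_or_ne l i with rfl | hne
          · simp [e]
          · simp [e, Pi.single_eq_of_ne hne, hne]
        have hmu : mu (a + e i) m < N := by
          rw [hupdate, mu_update hi.2, ← hN]
          have h1 : (a i + 1).natAbs < (a i).natAbs := by omega
          have h2 : (a i).natAbs ≤ mu a m := by
            rw [mu]
            have : (if i < m then (a i).natAbs else 0) = (a i).natAbs := if_pos hi.2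
            calc (a i).natAbs = (if i < m then (a i).natAbs else 0) := this.symm
              _ ≤ _ := Finset.single_le_sum (f := fun l => if l < m then (a l).natAbs else 0)
                  (fun l _ => Nat.zero_le _) (Finset.mem_univ i)
          omega
        have hIH := ih _ hmu (a + e i) m rfl
        have : sig a m = sig (a + e i) m * (ofS (bElem i m (kfun (a + e i) m)))⁻¹ := by
          rw [hks]; group
        rw [this, _root_.map_mul, _root_.map_inv, hIH,
          iota_ofS (bElem_mem hi.2 _)]
        rw [← hkg]; group
      · -- a i > 0 : peel down
        have hks := key_sigma hi.2 hmin
        have hkg := key_group hi.2 hmin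
        have hupdate : (a - e i) = fun l => if l = i then a i - 1 else a l := by
          funext l
          rcases eq_or_ne l i with rfl | hne
          · simp [e]
          · simp [e, Pi.single_eq_of_ne hne, hne]
        have hmu : mu (a - e i) m < N := by
          rw [hupdate, mu_update hi.2, ← hN]
          have h1 : (a i - 1).natAbs < (a i).natAbs := by omega
          have h2 : (a i).natAbs ≤ mu a m := by
            rw [mu]
            have : (if i < m then (a i).natAbs else 0) = (a i).natAbs := if_pos hi.2
            calc (a i).natAbs = (if i < m then (a i).natAbs else 0) := this.symm
              _ ≤ _ := Finset.single_le_sum (f := fun l => if l < m then (a l).natAbs else 0)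
                  (fun l _ => Nat.zero_le _) (Finset.mem_univ i)
          omega
        have hIH := ih _ hmu (a - e i) m rfl
        rw [hks, _root_.map_mul, hIH, iota_ofS (bElem_mem hi.2 _), hkg]

lemma C1gen' (a : Fin n → ℤ) (m : Fin n) : iota n (sig a m) = sW a m :=
  C1gen (mu a m) a m rfl

end Tomasz
namespace Tomasz

open FreeGroup List

variable {n : ℕ}

/-- scaled basis vector -/
def es (m : Fin n) (c : ℤ) : Fin n → ℤ := Pi.single m c

lemma es_lt {l m : Fin n} (h : l < m) (c : ℤ) : es m c l = 0 := by
  unfold es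
  exact Pi.single_eq_of_ne (M := fun _ => ℤ) (Fin.ne_of_lt h) c

/- ## global C1 -/

lemma C1G (w : FreeGroup (Fin n)) :
    ∀ x : Fin n → ℤ, iota n ((Phi n w).left x)
      = tword x * w * (tword (x + ((Phi n w).right).toAdd))⁻¹ := by
  induction w using FreeGroup.induction_on with
  | C1 =>
    intro x
    rw [_root_.map_one]
    show iota n ((1 : (Fin n → ℤ) → FreeGroup (Sset n)) x) = _
    rw [Pi.one_apply, _root_.map_one]
    show (1 : FreeGroup (Fin n)) = tword x * 1 * (tword (x + (1 : Multiplicative (Fin n → ℤ)).toAdd))⁻¹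
    rw [toAdd_one, add_zero, mul_one, mul_inv_cancel]
  | of m =>
    intro x
    show iota n ((Phi n (FreeGroup.of m)).left x) = tword x * FreeGroup.of m *
      (tword (x + ((Phi n (FreeGroup.of m)).right).toAdd))⁻¹
    rw [Phi_of_left, Phi_of_right, C1gen', toAdd_ofAdd, sW]
  | inv_of m ih =>
    intro x
    show iota n ((Phi n ((FreeGroup.of m)⁻¹)).left x) = tword x * (FreeGroup.of m)⁻¹ *
      (tword (x + ((Phi n ((FreeGroup.of m)⁻¹)).right).toAdd))⁻¹
    rw [_root_.map_inv, left_inv', Phi_of_right, toAdd_ofAdd, Phi_of_left, _root_.map_inv,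
      C1gen', sW, SemidirectProduct.inv_right, Phi_of_right, toAdd_inv, toAdd_ofAdd]
    have h1 : x - e m + e m = x := by ring
    have h2 : x + -e m = x - e m := by ring
    rw [h1, h2]
    group
  | mul u v hu hv =>
    intro x
    rw [_root_.map_mul, left_mul, _root_.map_mul, hu, hv, SemidirectProduct.mul_right,
      toAdd_mul]
    rw [show x + (((Phi n u).right).toAdd + ((Phi n v).right).toAdd)
        = (x + ((Phi n u).right).toAdd) + ((Phi n v).right).toAdd by ring]
    group

/- ## power and walk lemmas -/

lemma Phi_zpow_toAdd (m : Fin n) (c : ℤ) :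
    ((Phi n (FreeGroup.of m ^ c)).right).toAdd = es m c := by
  rw [map_zpow]
  have h1 : (Phi n (FreeGroup.of m) ^ c).right = (Phi n (FreeGroup.of m)).right ^ c :=
    map_zpow (SemidirectProduct.rightHom) _ c
  rw [h1, Phi_of_right, toAdd_zpow, toAdd_ofAdd]
  funext l
  rcases eq_or_ne l m with rfl | hne
  · simp [e, es]
  · simp [e, es, Pi.single_eq_of_ne hne]

lemma Phi_zpow_left {m : Fin n} {x : Fin n → ℤ} (hx : ∀ l, l < m → x l = 0) (c : ℤ) :
    (Phi n (FreeGroup.of m ^ c)).left x = 1 := by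
  have hsupp : ∀ (d : ℤ) (l : Fin n), l < m → (x + es m d) l = 0 := by
    intro d l hl
    simp [es_lt hl, hx l hl]
  induction c using Int.induction_on with
  | zero =>
    rw [zpow_zero, _root_.map_one]
    rfl
  | succ c ih =>
    rw [zpow_add_one, _root_.map_mul, left_mul, ih, Phi_zpow_toAdd, Phi_of_left, one_mul]
    exact sig_one (hsupp _)
  | pred c ih =>
    rw [zpow_sub_one, _root_.map_mul, left_mul, ih, Phi_zpow_toAdd, _root_.map_inv,
      left_inv', Phi_of_right, toAdd_ofAdd, Phi_of_left, one_mul]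
    have hv : x + es m (-(c:ℤ)) - e m = x + es m (-(c:ℤ) - 1) := by
      funext l
      rcases eq_or_ne l m with rfl | hne
      · simp only [Pi.add_apply, Pi.sub_apply, es, e, Pi.single_eq_same]
        ring
      · simp [es, e, Pi.single_eq_of_ne hne]
    rw [hv, sig_one (hsupp _)]
    simp

/-- word along a list of indices -/
def TW (L : List (Fin n)) (k : Fin n → ℤ) : FreeGroup (Fin n) :=
  (L.map fun l => FreeGroup.of l ^ k l).prod

/-- the abelianized value of `TW L k` -/
def kap (L : List (Fin n)) (k : Fin n → ℤ) : Fin n → ℤ :=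
  (L.map fun l => es l (k l)).sum

lemma TW_cons (l : Fin n) (T : List (Fin n)) (k : Fin n → ℤ) :
    TW (l :: T) k = FreeGroup.of l ^ k l * TW T k := by
  rw [TW, TW, List.map_cons, List.prod_cons]

lemma kap_cons (l : Fin n) (T : List (Fin n)) (k : Fin n → ℤ) :
    kap (l :: T) k = es l (k l) + kap T k := by
  rw [kap, kap, List.map_cons, List.sum_cons]

lemma TW_nil (k : Fin n → ℤ) : TW ([] : List (Fin n)) k = 1 := by
  rw [TW, List.map_nil, List.prod_nil]

lemma kap_nil (k : Fin n → ℤ) : kap ([] : List (Fin n)) k = 0 := by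
  rw [kap, List.map_nil, List.sum_nil]

lemma kap_apply {L : List (Fin n)} (hL : L.Nodup) (k : Fin n → ℤ) (x : Fin n) :
    kap L k x = if x ∈ L then k x else 0 := by
  induction L with
  | nil => simp [kap_nil]
  | cons l T ih =>
    obtain ⟨hlT, hT⟩ := List.nodup_cons.1 hL
    rw [kap_cons, Pi.add_apply, ih hT]
    rcases eq_or_ne x l with rfl | hne
    · rw [es, Pi.single_eq_same, if_neg hlT, if_pos (List.mem_cons_self), add_zero]
    · rw [es, Pi.single_eq_of_ne hne, zero_add]
      by_cases hxT : x ∈ T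
      · rw [if_pos hxT, if_pos (List.mem_cons_of_mem l hxT)]
      · rw [if_neg hxT, if_neg (by simp [hne, hxT])]

lemma TW_right (L : List (Fin n)) (k : Fin n → ℤ) :
    ((Phi n (TW L k)).right).toAdd = kap L k := by
  induction L with
  | nil =>
    rw [TW_nil, kap_nil, _root_.map_one]
    rfl
  | cons l T ih =>
    rw [TW_cons, kap_cons, _root_.map_mul, SemidirectProduct.mul_right, toAdd_mul,
      Phi_zpow_toAdd, ih]

lemma TW_left {L : List (Fin n)} (hL : L.Pairwise (· < ·)) (k : Fin n → ℤ) :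
    (Phi n (TW L k)).left (-(kap L k)) = 1 := by
  induction L with
  | nil =>
    rw [TW_nil, _root_.map_one]
    rfl
  | cons l T ih =>
    obtain ⟨hx, hT⟩ := List.pairwise_cons.1 hL
    have hnodup : (l :: T).Nodup := hL.imp ne_of_lt
    rw [TW_cons, _root_.map_mul, left_mul, Phi_zpow_toAdd]
    have hfirst : (Phi n (FreeGroup.of l ^ k l)).left (-(kap (l :: T) k)) = 1 := by
      apply Phi_zpow_left (fun l' hl' => ?_)
      have h1 : kap (l :: T) k l' = 0 := by
        rw [kap_apply hnodup]
        rw [if_neg]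
        intro hmem
        rcases List.mem_cons.1 hmem with rfl | hmem'
        · exact absurd hl' (lt_irrefl _)
        · exact absurd (hl'.trans (hx _ hmem')) (lt_irrefl _)
      simp [h1]
    have hpos : -(kap (l :: T) k) + es l (k l) = -(kap T k) := by
      rw [kap_cons]; ring
    rw [hfirst, one_mul, hpos]
    exact ih hT

end Tomasz
namespace Tomasz

open FreeGroup List

variable {n : ℕ}

lemma C2 {i j : Fin n} (hij : i < j) (k : Fin n → ℤ) :
    (Phi n (bElem i j k)).left 0 = ofS (bElem i j k) := by
  have hLpw : (((List.finRange n).filter fun l => i ≤ l) : List (Fin n)).Pairwise (· < ·) :=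
    (List.pairwise_lt_finRange n).sublist (List.filter_sublist)
  have hT : tailWord n i k = TW ((List.finRange n).filter fun l => i ≤ l) k := rfl
  set κ := kap ((List.finRange n).filter fun l => i ≤ l) k with hκdef
  have hκ : ∀ x, κ x = if i ≤ x then k x else 0 := by
    intro x
    rw [hκdef, kap_apply (hLpw.imp ne_of_lt)]
    by_cases hx : i ≤ x
    · rw [if_pos (by simp [List.mem_filter, List.mem_finRange, hx]), if_pos hx]
    · rw [if_neg (by simp [List.mem_filter, hx]), if_neg hx]
  have hκlt : ∀ l, l < i → κ l = 0 := fun l hl => by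
    rw [hκ]; exact if_neg (not_le.2 hl)
  have hpr : ((Phi n (tailWord n i k)).right).toAdd = κ := by
    rw [hT]; exact TW_right _ k
  have hpl : (Phi n (tailWord n i k)).left (-κ) = 1 := by
    rw [hT]; exact TW_left hLpw k
  conv_lhs => rw [bElem]
  rw [_root_.map_mul, _root_.map_mul, _root_.map_inv, _root_.map_mul,
    _root_.map_mul, _root_.map_mul, _root_.map_inv, _root_.map_inv]
  rw [left_mul, left_mul, left_mul, left_mul, left_mul]
  simp only [SemidirectProduct.mul_right, SemidirectProduct.inv_right, toAdd_mul, toAdd_inv,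
    Phi_of_right, toAdd_ofAdd, hpr]
  rw [left_inv', left_inv', left_inv']
  simp only [SemidirectProduct.inv_right, Phi_of_right, toAdd_ofAdd, toAdd_inv, hpr,
    Phi_of_left]
  have h1 : (0 : Fin n → ℤ) - κ = -κ := by ring
  have h2 : (0 : Fin n → ℤ) + -κ - e i = -κ - e i := by ring
  have h3 : (0 : Fin n → ℤ) + -κ + -e i - e j = -κ - e j - e i := by ring
  have h4 : (0 : Fin n → ℤ) + -κ + (-e i + -e j) = -κ - e j - e i := by ring
  have h5 : (0 : Fin n → ℤ) + -κ + (-e i + -e j + e i) = -κ - e j := by ring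
  have h6 : (0 : Fin n → ℤ) + (-κ + (-e i + -e j + e i + e j)) = -κ := by ring
  rw [h1, h2, h3, h4, h5, h6, hpl]
  have hsupz : ∀ l, l < i → (-κ - e i) l = 0 := fun l hl => by
    have h : e i l = 0 := Pi.single_eq_of_ne (M := fun _ => ℤ) (Fin.ne_of_lt hl) 1
    simp [h, hκlt l hl]
  have hsupw : ∀ l, l < i → (-κ - e j) l = 0 := fun l hl => by
    have h : e j l = 0 := Pi.single_eq_of_ne (M := fun _ => ℤ) (Fin.ne_of_lt (hl.trans hij)) 1
    simp [h, hκlt l hl]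
  have hsupwi : ∀ l, l < i → (-κ - e j - e i) l = 0 := fun l hl => by
    have ha : e i l = 0 := Pi.single_eq_of_ne (M := fun _ => ℤ) (Fin.ne_of_lt hl) 1
    have hb : e j l = 0 := Pi.single_eq_of_ne (M := fun _ => ℤ) (Fin.ne_of_lt (hl.trans hij)) 1
    simp [ha, hb, hκlt l hl]
  rw [sig_one hsupz, sig_one hsupwi]
  have hkey := key_sigma hij hsupw
  have hkf : kfun (-κ - e j) j = κ := by
    funext l
    rcases eq_or_ne l j with rfl | hne
    · simp only [kfun, if_pos rfl, Pi.sub_apply, Pi.neg_apply, e, Pi.single_eq_same]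
      ring_nf
      simp
    · simp only [kfun, if_neg hne, Pi.sub_apply, Pi.neg_apply, e,
        Pi.single_eq_of_ne hne]
      ring
  rw [hkf] at hkey
  have hbe : bElem i j κ = bElem i j k := bElem_congr (fun l hl => by rw [hκ, if_pos hl])
  rw [hbe] at hkey
  rw [show -κ - e j - e i = -κ - e j - e i from rfl] at hkey
  rw [hkey]
  group

end Tomasz
namespace Tomasz

open FreeGroup List

variable {n : ℕ}

lemma Phi_bElem_right (i j : Fin n) (k : Fin n → ℤ) :
    (Phi n (bElem i j k)).right = 1 := by
  have h : ((Phi n (bElem i j k)).right).toAdd = 0 := by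
    simp only [bElem, _root_.map_mul, _root_.map_inv, SemidirectProduct.mul_right,
      SemidirectProduct.inv_right, Phi_of_right, toAdd_mul, toAdd_inv, toAdd_ofAdd]
    ring
  calc (Phi n (bElem i j k)).right
      = Multiplicative.ofAdd (((Phi n (bElem i j k)).right).toAdd) := rfl
    _ = Multiplicative.ofAdd 0 := by rw [h]
    _ = 1 := rfl

lemma right_iota (u : FreeGroup (Sset n)) : (Phi n (iota n u)).right = 1 := by
  have h : (SemidirectProduct.rightHom.comp ((Phi n).comp (iota n)))
      = (1 : FreeGroup (Sset n) →* Multiplicative (Fin n → ℤ)) := by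
    apply FreeGroup.ext_hom
    intro s
    obtain ⟨i, j, hij, k, hs⟩ := s.2
    show SemidirectProduct.rightHom (Phi n (iota n (FreeGroup.of s))) = 1
    rw [iota, FreeGroup.lift_apply_of]
    show (Phi n s.val).right = 1
    rw [hs]
    exact Phi_bElem_right i j k
  exact DFunLike.congr_fun h u

lemma chi_id (u : FreeGroup (Sset n)) : (Phi n (iota n u)).left 0 = u := by
  have hhom : ∀ u v : FreeGroup (Sset n),
      (Phi n (iota n (u * v))).left 0
        = (Phi n (iota n u)).left 0 * (Phi n (iota n v)).left 0 := by
    intro u v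
    rw [_root_.map_mul, _root_.map_mul, left_mul, right_iota, toAdd_one, add_zero]
  let χ : FreeGroup (Sset n) →* FreeGroup (Sset n) :=
    { toFun := fun u => (Phi n (iota n u)).left 0
      map_one' := by
        show (Phi n (iota n 1)).left 0 = 1
        rw [_root_.map_one, _root_.map_one]
        rfl
      map_mul' := hhom }
  have h : χ = MonoidHom.id _ := by
    apply FreeGroup.ext_hom
    intro s
    show (Phi n (iota n (FreeGroup.of s))).left 0 = FreeGroup.of s
    rw [iota, FreeGroup.lift_apply_of]
    obtain ⟨i, j, hij, k, hs⟩ := s.2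
    show (Phi n s.val).left 0 = FreeGroup.of s
    rw [hs, C2 hij k, ofS_mem (bElem_mem hij k)]
    exact congrArg FreeGroup.of (Subtype.ext hs.symm)
  exact DFunLike.congr_fun h u

lemma iota_injective : Function.Injective (iota n) := by
  intro u v huv
  rw [← chi_id u, ← chi_id v, huv]

open scoped commutatorElement in
lemma range_le : (iota n).range ≤ commutator (FreeGroup (Fin n)) := by
  rw [iota, FreeGroup.range_lift_eq_closure]
  have h : Set.range ((↑) : ↥(Sset n) → FreeGroup (Fin n)) = Sset n := Subtype.range_coe
  rw [h, Subgroup.closure_le]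
  rintro g ⟨i, j, hij, k, rfl⟩
  show bElem i j k ∈ commutator (FreeGroup (Fin n))
  have hc : (FreeGroup.of i)⁻¹ * (FreeGroup.of j)⁻¹ * FreeGroup.of i * FreeGroup.of j
      = ⁅(FreeGroup.of i)⁻¹, (FreeGroup.of j)⁻¹⁆ := by
    rw [commutatorElement_def]
    group
  have hmem : ⁅(FreeGroup.of i)⁻¹, (FreeGroup.of j)⁻¹⁆ ∈ commutator (FreeGroup (Fin n)) := by
    rw [commutator_def]
    exact Subgroup.commutator_mem_commutator (Subgroup.mem_top _) (Subgroup.mem_top _)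
  have hnormal : (commutator (FreeGroup (Fin n))).Normal := Subgroup.commutator_normal ⊤ ⊤
  have hconj := hnormal.conj_mem _ hmem (tailWord n i k)⁻¹
  rw [inv_inv] at hconj
  rw [bElem, hc]
  rw [show (tailWord n i k)⁻¹ * ⁅(FreeGroup.of i)⁻¹, (FreeGroup.of j)⁻¹⁆ * tailWord n i k
      = (tailWord n i k)⁻¹ * ⁅(FreeGroup.of i)⁻¹, (FreeGroup.of j)⁻¹⁆ * ((tailWord n i k)⁻¹)⁻¹ by
    rw [inv_inv]]
  exact hnormal.conj_mem _ hmem _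

lemma commutator_le_range :
    commutator (FreeGroup (Fin n)) ≤ (iota n).range := by
  intro w hw
  have hr : (Phi n w).right = 1 := by
    have hker : commutator (FreeGroup (Fin n))
        ≤ (SemidirectProduct.rightHom.comp (Phi n)).ker := by
      rw [commutator_def, Subgroup.commutator_le]
      intro g _ h _
      rw [MonoidHom.mem_ker, map_commutatorElement]
      exact commutatorElement_eq_one_iff_commute.2 (Commute.all _ _)
    exact hker hw
  have hC := C1G w 0
  rw [hr, toAdd_one, add_zero, tword_zero, one_mul, inv_one, mul_one] at hC
  exact ⟨(Phi n w).left 0, hC⟩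

end Tomasz

/-- Tomaszewski's theorem: for `n ≥ 1`, the commutator subgroup of the free group `Fₙ`
on `x_0, …, x_{n-1}` is freely generated by the elements
`(x_i^{k_i} ⋯ x_{n-1}^{k_{n-1}})⁻¹ [x_i, x_j] (x_i^{k_i} ⋯ x_{n-1}^{k_{n-1}})`
for `i < j` and integers `k_i, …, k_{n-1}`. -/
theorem stmt7 (n : ℕ) (hn : 1 ≤ n) :
    IsFreeBasis
      {g : FreeGroup (Fin n) | ∃ i j : Fin n, i < j ∧ ∃ k : Fin n → ℤ,
        g = (tailWord n i k)⁻¹ *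
              ((FreeGroup.of i)⁻¹ * (FreeGroup.of j)⁻¹ * FreeGroup.of i * FreeGroup.of j) *
            tailWord n i k}
      (commutator (FreeGroup (Fin n))) := by
  show IsFreeBasis (Tomasz.Sset n) (commutator (FreeGroup (Fin n)))
  constructor
  · exact Tomasz.iota_injective
  · exact le_antisymm Tomasz.range_le Tomasz.commutator_le_range
end

section
/- Let F be a free group, A ≤ F a subgroup, and B ⊴ F a normal subgroup with F = B ⋊ A (internal semidirect product: B ∩ A = 1 and BA = F). Suppose B is freely generated by a set S on which A acts freely by conjugation (i.e., the conjugation action of A permutes S and the action on S is free), and let S' ⊆ S contain exactly one element from each A-orbit. Then F is the internal free product of the subgroup generated by S' (which is free on S') and A. -/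
/-- Let `F` be a free group, `A ≤ F` a subgroup and `B ⊴ F` a normal subgroup with
`F = B ⋊ A`.  If `B` is freely generated by a set `S` on which `A` acts freely by
conjugation and `S' ⊆ S` contains exactly one element of each `A`-orbit, then `F`
is the internal free product of the subgroup generated by `S'` and `A`. -/
theorem stmt8 (α : Type) (A B : Subgroup (FreeGroup α)) [B.Normal]
    (hdisj : B ⊓ A = ⊥) (hgen : B ⊔ A = ⊤)
    (S : Set (FreeGroup α)) (hSB : IsFreeBasis S B)
    (hact : ∀ a ∈ A, ∀ s ∈ S, a⁻¹ * s * a ∈ S)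
    (hfree : ∀ a ∈ A, ∀ s ∈ S, a⁻¹ * s * a = s → a = 1)
    (S' : Set (FreeGroup α)) (hS'S : S' ⊆ S)
    (horbit : ∀ s ∈ S, ∃! s', s' ∈ S' ∧ ∃ a ∈ A, s' = a⁻¹ * s * a) :
    Function.Bijective
      (Monoid.Coprod.lift (FreeGroup.lift ((↑) : S' → FreeGroup α)) A.subtype) := by
  classical
  obtain ⟨hinj, hrange⟩ := hSB
  set φ := Monoid.Coprod.lift (FreeGroup.lift ((↑) : S' → FreeGroup α)) A.subtype with hφ
  have hSmemB : ∀ t ∈ S, t ∈ B := fun t ht =>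
    hrange ▸ ⟨FreeGroup.of ⟨t, ht⟩, FreeGroup.lift_apply_of⟩
  -- orbit representatives
  choose rep hrepS' elt heltA hrepeq using fun s (hs : s ∈ S) => (horbit s hs).exists
  have repu : ∀ s (hs : s ∈ S), ∀ u ∈ S', ∀ c ∈ A, u = c⁻¹ * s * c →
      rep s hs = u ∧ elt s hs = c := by
    intro s hs u hu c hc hcu
    have h1 : rep s hs = u :=
      (horbit s hs).unique ⟨hrepS' s hs, elt s hs, heltA s hs, hrepeq s hs⟩ ⟨hu, c, hc, hcu⟩
    refine ⟨h1, ?_⟩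
    have heq : (elt s hs)⁻¹ * s * elt s hs = c⁻¹ * s * c := by
      rw [← hrepeq s hs, h1, hcu]
    have ha : (c * (elt s hs)⁻¹)⁻¹ * s * (c * (elt s hs)⁻¹) = s := by
      rw [mul_inv_rev, inv_inv]
      calc elt s hs * c⁻¹ * s * (c * (elt s hs)⁻¹)
          = elt s hs * (c⁻¹ * s * c) * (elt s hs)⁻¹ := by group
        _ = elt s hs * ((elt s hs)⁻¹ * s * elt s hs) * (elt s hs)⁻¹ := by rw [← heq]
        _ = s := by group
    have h2 := hfree _ (A.mul_mem hc (A.inv_mem (heltA s hs))) s hs ha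
    rw [mul_inv_eq_one] at h2
    exact h2.symm
  -- unique decomposition f = b * a
  have dec : ∀ f : FreeGroup α, ∃! p : B × A, (p.1 : FreeGroup α) * p.2 = f := by
    intro f
    have hf : f ∈ (↑(B ⊔ A) : Set (FreeGroup α)) := by rw [hgen]; trivial
    rw [Subgroup.normal_mul] at hf
    obtain ⟨b, hb, a, ha, hba⟩ := hf
    replace hb : b ∈ B := hb
    replace ha : a ∈ A := ha
    replace hba : b * a = f := hba
    refine ⟨(⟨b, hb⟩, ⟨a, ha⟩), hba, ?_⟩
    rintro ⟨b', a'⟩ h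
    simp only at h
    have heq : (b' : FreeGroup α) * a' = b * a := by rw [h, ← hba]
    have key : (b' : FreeGroup α)⁻¹ * b = (a' : FreeGroup α) * a⁻¹ := by
      calc (b' : FreeGroup α)⁻¹ * b = (b' : FreeGroup α)⁻¹ * (b * a) * a⁻¹ := by group
        _ = (b' : FreeGroup α)⁻¹ * ((b' : FreeGroup α) * a') * a⁻¹ := by rw [← heq]
        _ = (a' : FreeGroup α) * a⁻¹ := by group
    have hx : (b' : FreeGroup α)⁻¹ * b ∈ B ⊓ A :=
      ⟨B.mul_mem (B.inv_mem b'.2) hb, key ▸ A.mul_mem a'.2 (A.inv_mem ha)⟩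
    rw [hdisj, Subgroup.mem_bot] at hx
    have hb2 : (b' : FreeGroup α) = b := by rwa [inv_mul_eq_one] at hx
    have ha2 : (a' : FreeGroup α) = a := by
      rw [hb2, inv_mul_cancel] at key
      rw [eq_comm, mul_inv_eq_one] at key
      exact key
    exact Prod.ext (Subtype.ext hb2) (Subtype.ext ha2)
  choose p hp using fun f => (dec f).exists
  have decu : ∀ (f : FreeGroup α) (b : B) (a : A), (b : FreeGroup α) * a = f → p f = (b, a) :=
    fun f b a h => (dec f).unique (hp f) h
  -- the equivalence FreeGroup S ≃* B
  set e : FreeGroup S ≃* B :=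
    (MonoidHom.ofInjective hinj).trans (MulEquiv.subgroupCongr hrange) with he'
  have he : ∀ x : FreeGroup S, ((e x : B) : FreeGroup α) = FreeGroup.lift ((↑) : S → FreeGroup α) x :=
    fun x => rfl
  have heof : ∀ (t : FreeGroup α) (ht : t ∈ S), e (FreeGroup.of ⟨t, ht⟩) = ⟨t, hSmemB t ht⟩ := by
    intro t ht
    ext
    rw [he, FreeGroup.lift_apply_of]
  -- the map g on basis elements
  set Cop := Monoid.Coprod (FreeGroup S') ↥A with hCop
  set g : S → Cop := fun s =>
    Monoid.Coprod.inr (⟨elt s.1 s.2, heltA s.1 s.2⟩ : A) *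
      Monoid.Coprod.inl (FreeGroup.of (⟨rep s.1 s.2, hrepS' s.1 s.2⟩ : S')) *
      (Monoid.Coprod.inr (⟨elt s.1 s.2, heltA s.1 s.2⟩ : A))⁻¹ with hg
  set β : B →* Cop := (FreeGroup.lift g).comp e.symm.toMonoidHom with hβ
  have βS : ∀ (t : FreeGroup α) (ht : t ∈ S), β ⟨t, hSmemB t ht⟩ = g ⟨t, ht⟩ := by
    intro t ht
    have h1 : e.symm ⟨t, hSmemB t ht⟩ = FreeGroup.of ⟨t, ht⟩ := by
      apply e.injective
      rw [MulEquiv.apply_symm_apply, heof]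
    simp only [hβ, MonoidHom.comp_apply, MulEquiv.coe_toMonoidHom, h1, FreeGroup.lift_apply_of]
  -- conjugation compatibility
  have hconjmem : ∀ (a : A) (b : B), (a : FreeGroup α)⁻¹ * b * a ∈ B := by
    intro a b
    have := Subgroup.Normal.conj_mem ‹B.Normal› _ b.2 (a : FreeGroup α)⁻¹
    simpa using this
  have caB : ∀ (a : A) (b : B),
      β ⟨(a : FreeGroup α)⁻¹ * b * a, hconjmem a b⟩ =
        (Monoid.Coprod.inr a)⁻¹ * β b * Monoid.Coprod.inr a := by
    intro a b
    -- reduce to generators via hom extensionality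
    set conjHom : B →* B := MonoidHom.mk' (fun b => ⟨(a : FreeGroup α)⁻¹ * b * a, hconjmem a b⟩)
      (by intro x y; ext; push_cast; group) with hconjHom
    set h1 : FreeGroup S →* Cop := β.comp (conjHom.comp e.toMonoidHom) with hh1
    set h2 : FreeGroup S →* Cop :=
      ((MulAut.conj ((Monoid.Coprod.inr a : Cop)⁻¹)).toMonoidHom.comp β).comp e.toMonoidHom with hh2
    have hext : h1 = h2 := by
      apply FreeGroup.ext_hom
      rintro ⟨s, hs⟩
      have hsa : (a : FreeGroup α)⁻¹ * s * a ∈ S := hact a a.2 s hs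
      have hmem : (a : FreeGroup α)⁻¹ * s * a ∈ B := hSmemB _ hsa
      have h1val : h1 (FreeGroup.of ⟨s, hs⟩) = g ⟨(a : FreeGroup α)⁻¹ * s * a, hsa⟩ := by
        simp only [hh1, MonoidHom.comp_apply, MulEquiv.coe_toMonoidHom, heof]
        have : conjHom ⟨s, hSmemB s hs⟩ = ⟨(a : FreeGroup α)⁻¹ * s * a, hSmemB _ hsa⟩ := rfl
        rw [this, βS]
      rw [h1val]
      -- compute rep/elt of the conjugate
      have hru := repu ((a : FreeGroup α)⁻¹ * s * a) hsa (rep s hs) (hrepS' s hs)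
        ((a : FreeGroup α)⁻¹ * elt s hs) (A.mul_mem (A.inv_mem a.2) (heltA s hs)) ?_
      · obtain ⟨hr, hel⟩ := hru
        have hofeq : (⟨rep ((a : FreeGroup α)⁻¹ * s * a) hsa, hrepS' _ hsa⟩ : S')
            = ⟨rep s hs, hrepS' s hs⟩ := Subtype.ext hr
        have heleq : (⟨elt ((a : FreeGroup α)⁻¹ * s * a) hsa, heltA _ hsa⟩ : A)
            = a⁻¹ * ⟨elt s hs, heltA s hs⟩ := Subtype.ext hel
        simp only [hg, hofeq, heleq, map_mul, map_inv]
        simp only [hh2, MonoidHom.comp_apply, MulEquiv.coe_toMonoidHom, heof,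
          MulAut.conj_apply, βS s hs]
        simp only [hg]
        group
      · rw [hrepeq s hs]
        group
    have := DFunLike.congr_fun hext (e.symm b)
    simp only [hh1, hh2, MonoidHom.comp_apply, MulEquiv.coe_toMonoidHom,
      MulEquiv.apply_symm_apply, MulAut.conj_apply] at this
    have hcb : conjHom b = ⟨(a : FreeGroup α)⁻¹ * b * a, hconjmem a b⟩ := rfl
    rw [hcb] at this
    rw [this]
    group
  -- the inverse homomorphism
  have ψmul : ∀ f f' : FreeGroup α,
      β (p (f * f')).1 * Monoid.Coprod.inr (p (f * f')).2 =
        (β (p f).1 * Monoid.Coprod.inr (p f).2) * (β (p f').1 * Monoid.Coprod.inr (p f').2) := by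
    intro f f'
    set bf := (p f).1; set af := (p f).2
    set bg := (p f').1; set ag := (p f').2
    have hc : (((af : FreeGroup α))⁻¹)⁻¹ * bg * ((af : FreeGroup α))⁻¹ ∈ B := hconjmem af⁻¹ bg
    have hdecomp : ((bf * ⟨_, hc⟩ : B) : FreeGroup α) * ((af * ag : A) : FreeGroup α) = f * f' := by
      push_cast
      have h1 : (bf : FreeGroup α) * af = f := hp f
      have h2 : (bg : FreeGroup α) * ag = f' := hp f'
      rw [← h1, ← h2]
      group
    have hq := decu (f * f') _ _ hdecomp
    rw [hq]
    simp only [map_mul]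
    have hthis := caB af⁻¹ bg
    have hval : (⟨((af⁻¹ : A) : FreeGroup α)⁻¹ * ↑bg * ((af⁻¹ : A) : FreeGroup α),
        hconjmem af⁻¹ bg⟩ : B) = ⟨((af : FreeGroup α))⁻¹⁻¹ * ↑bg * ((af : FreeGroup α))⁻¹, hc⟩ :=
      Subtype.ext (by push_cast; group)
    rw [hval] at hthis
    rw [hthis]
    simp only [map_inv, inv_inv]
    group
  set ψ : FreeGroup α →* Monoid.Coprod (FreeGroup S') ↥A :=
    MonoidHom.mk' (fun f => β (p f).1 * Monoid.Coprod.inr (p f).2) ψmul with hψ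
  -- ψ is a left inverse of φ
  have hψA : ∀ a : A, ψ (a : FreeGroup α) = Monoid.Coprod.inr a := by
    intro a
    have := decu (a : FreeGroup α) 1 a (by simp)
    simp only [hψ, MonoidHom.mk'_apply, this, map_one, one_mul]
  have hψS' : ∀ (s : FreeGroup α) (hs : s ∈ S'), ψ s = Monoid.Coprod.inl (FreeGroup.of ⟨s, hs⟩) := by
    intro s hs
    have hsS : s ∈ S := hS'S hs
    have := decu s ⟨s, hSmemB s hsS⟩ 1 (by simp)
    simp only [hψ, MonoidHom.mk'_apply, this, map_one, mul_one]
    rw [βS s hsS]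
    obtain ⟨hr, hel⟩ := repu s hsS s hs 1 A.one_mem (by group)
    have hofeq : (⟨rep s hsS, hrepS' s hsS⟩ : S') = ⟨s, hs⟩ := Subtype.ext hr
    have heleq : (⟨elt s hsS, heltA s hsS⟩ : A) = 1 := Subtype.ext hel
    simp only [hg, hofeq, heleq, map_one, one_mul, inv_one, mul_one]
  have hleft : ∀ x, ψ (φ x) = x := by
    have : ψ.comp φ = MonoidHom.id _ := by
      apply Monoid.Coprod.hom_ext
      · apply FreeGroup.ext_hom
        rintro ⟨s, hs⟩
        simp only [MonoidHom.comp_apply, MonoidHom.id_apply, hφ,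
          Monoid.Coprod.lift_apply_inl, FreeGroup.lift_apply_of]
        exact hψS' s hs
      · ext a
        simp only [MonoidHom.comp_apply, MonoidHom.id_apply, hφ,
          Monoid.Coprod.lift_apply_inr, Subgroup.coe_subtype]
        exact hψA a
    intro x
    exact DFunLike.congr_fun this x
  constructor
  · exact Function.LeftInverse.injective hleft
  · -- surjectivity
    have hAle : A ≤ φ.range := by
      intro a ha
      exact ⟨Monoid.Coprod.inr ⟨a, ha⟩, by simp [hφ, Monoid.Coprod.lift_apply_inr]⟩
    have hSle : S ⊆ (φ.range : Set (FreeGroup α)) := by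
      intro t ht
      refine ⟨Monoid.Coprod.inr ⟨elt t ht, heltA t ht⟩ *
        Monoid.Coprod.inl (FreeGroup.of ⟨rep t ht, hrepS' t ht⟩) *
        (Monoid.Coprod.inr ⟨elt t ht, heltA t ht⟩)⁻¹, ?_⟩
      simp only [hφ, map_mul, map_inv, Monoid.Coprod.lift_apply_inl,
        Monoid.Coprod.lift_apply_inr, FreeGroup.lift_apply_of, Subgroup.coe_subtype]
      rw [hrepeq t ht]
      group
    have hBle : B ≤ φ.range := by
      rw [← hrange, FreeGroup.range_lift_eq_closure, Subtype.range_coe]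
      exact (Subgroup.closure_le _).mpr hSle
    rw [← MonoidHom.range_eq_top]
    rw [← top_le_iff, ← hgen]
    exact sup_le hBle hAle
end

section
/- Fix n ≥ 2. Let K be the normal closure of x₁ in the free group Fₙ on x₁,…,xₙ, and let B = K ∩ [Fₙ,Fₙ]. Then B is freely generated by the set { (x₁^{k₁} w)⁻¹ [x₁, x_j] (x₁^{k₁} w) : 1 < j ≤ n, k₁ ∈ ℤ, w in the subgroup generated by x₂,…,xₙ }. -/
/-! ### Auxiliary development -/

namespace Stmt9
open FreeGroup

abbrev Idx (n : ℕ) := {i : Fin n // (i : ℕ) ≠ 0}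
abbrev H (n : ℕ) := FreeGroup (Idx n)
abbrev Q (n : ℕ) := H n × Multiplicative ℤ
abbrev F (n : ℕ) := FreeGroup (Fin n)
abbrev J (n : ℕ) := {j : Fin n // 0 < (j : ℕ)}
abbrev I (n : ℕ) := J n × ℤ × H n
abbrev A (n : ℕ) := FreeGroup (I n)

variable {n : ℕ}

def sH (n : ℕ) : H n →* F n := FreeGroup.lift fun i => FreeGroup.of i.1

def Phi (n : ℕ) : F n →* Q n := FreeGroup.lift fun i =>
  if h : (i : ℕ) ≠ 0 then ((FreeGroup.of ⟨i, h⟩ : H n), 1) else (1, Multiplicative.ofAdd 1)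

def x0 (n : ℕ) (hn : 2 ≤ n) : F n := FreeGroup.of (⟨0, Nat.lt_of_lt_of_le (by decide) hn⟩ : Fin n)

def cc (hn : 2 ≤ n) (j : Fin n) : F n :=
  (x0 n hn)⁻¹ * (FreeGroup.of j)⁻¹ * x0 n hn * FreeGroup.of j

def bb (hn : 2 ≤ n) : I n → F n := fun ι =>
  (x0 n hn ^ ι.2.1 * sH n ι.2.2)⁻¹ * cc hn ι.1.1 * (x0 n hn ^ ι.2.1 * sH n ι.2.2)

def Vel (hn : 2 ≤ n) (j : J n) (t : ℤ) (u : H n) : F n :=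
  sH n u * x0 n hn ^ t * FreeGroup.of j.1 * x0 n hn ^ (-t) * (FreeGroup.of j.1)⁻¹ * (sH n u)⁻¹

def tau (hn : 2 ≤ n) (q : Q n) : F n := sH n q.1 * x0 n hn ^ (Multiplicative.toAdd q.2)

@[simp] lemma sH_of (i : Idx n) : sH n (FreeGroup.of i) = FreeGroup.of i.1 := lift_apply_of

lemma Phi_of_ne {i : Fin n} (h : (i : ℕ) ≠ 0) :
    Phi n (FreeGroup.of i) = ((FreeGroup.of ⟨i, h⟩ : H n), 1) := by
  simp [Phi, h]

lemma Phi_of_zero {i : Fin n} (h : (i : ℕ) = 0) :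
    Phi n (FreeGroup.of i) = (1, Multiplicative.ofAdd 1) := by
  simp [Phi, h]

lemma Phi_x0 (hn : 2 ≤ n) : Phi n (x0 n hn) = (1, Multiplicative.ofAdd 1) :=
  Phi_of_zero rfl

lemma Phi_x0_zpow (hn : 2 ≤ n) (k : ℤ) :
    Phi n (x0 n hn ^ k) = (1, Multiplicative.ofAdd k) := by
  rw [_root_.map_zpow, Phi_x0]
  refine Prod.ext ?_ ?_
  · show (1:H n) ^ k = 1; simp
  · show Multiplicative.ofAdd (1:ℤ) ^ k = _
    rw [← Int.ofAdd_mul]; simp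

lemma Phi_sH (w : H n) : Phi n (sH n w) = (w, 1) := by
  have : (Phi n).comp (sH n) = MonoidHom.inl (H n) (Multiplicative ℤ) := by
    apply FreeGroup.ext_hom
    intro a
    simp only [MonoidHom.comp_apply, sH_of, MonoidHom.inl_apply]
    rw [Phi_of_ne a.2]
  exact DFunLike.congr_fun this w

lemma Phi_cc (hn : 2 ≤ n) (j : J n) : Phi n (cc hn j.1) = 1 := by
  have hj : ((j.1 : Fin n) : ℕ) ≠ 0 := Nat.pos_iff_ne_zero.mp j.2
  rw [cc]
  simp only [_root_.map_mul, _root_.map_inv, Phi_x0, Phi_of_ne hj]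
  refine Prod.ext ?_ ?_ <;> simp

lemma Phi_bb (hn : 2 ≤ n) (ι : I n) : Phi n (bb hn ι) = 1 := by
  rw [bb]
  simp only [_root_.map_mul, _root_.map_inv, Phi_cc hn ι.1]
  group

end Stmt9

namespace Stmt9
open FreeGroup

variable {n : ℕ}

def jI (j : J n) : Idx n := ⟨j.1, Nat.pos_iff_ne_zero.mp j.2⟩

lemma key_identity (hn : 2 ≤ n) (j : J n) (t : ℤ) (u : H n) :
    Vel hn j (t + 1) u =
      Vel hn j t u * bb hn (j, -t - 1, (u * FreeGroup.of (jI j))⁻¹) := by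
  unfold Vel bb cc
  simp only [_root_.map_mul, _root_.map_inv, sH_of, jI]
  group

lemma Vel_zero (hn : 2 ≤ n) (j : J n) (u : H n) : Vel hn j 0 u = 1 := by
  unfold Vel; group

lemma Vel_mem (hn : 2 ≤ n) (j : J n) (t : ℤ) (u : H n) :
    Vel hn j t u ∈ Subgroup.closure (Set.range (bb hn)) := by
  induction t using Int.induction_on with
  | zero => rw [Vel_zero]; exact one_mem _
  | succ i ih =>
      rw [key_identity hn j i u]
      exact mul_mem ih (Subgroup.subset_closure ⟨_, rfl⟩)
  | pred i ih =>
      have h := key_identity hn j (-(i:ℤ) - 1) u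
      rw [show (-(i:ℤ) - 1 + 1) = -(i:ℤ) by ring] at h
      have h2 : Vel hn j (-(i:ℤ) - 1) u =
          Vel hn j (-(i:ℤ)) u * (bb hn (j, -(-(i:ℤ) - 1) - 1, (u * FreeGroup.of (jI j))⁻¹))⁻¹ := by
        rw [h]; group
      rw [h2]
      exact mul_mem ih (inv_mem (Subgroup.subset_closure ⟨_, rfl⟩))

lemma tau_one (hn : 2 ≤ n) : tau hn 1 = 1 := by
  unfold tau
  simp

lemma step_mem (hn : 2 ≤ n) (q : Q n) (i : Fin n) :
    tau hn q * FreeGroup.of i * (tau hn (q * Phi n (FreeGroup.of i)))⁻¹ ∈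
      Subgroup.closure (Set.range (bb hn)) := by
  by_cases h : (i : ℕ) = 0
  · have hx : (FreeGroup.of i : F n) = x0 n hn := by
      unfold x0; congr 1; exact Fin.ext h
    rw [Phi_of_zero h]
    have he : tau hn q * FreeGroup.of i *
        (tau hn (q * ((1 : H n), Multiplicative.ofAdd (1:ℤ))))⁻¹ = 1 := by
      unfold tau
      rw [hx]
      have h1 : (q * ((1 : H n), Multiplicative.ofAdd (1:ℤ))).1 = q.1 := by simp
      have h2 : Multiplicative.toAdd (q * ((1 : H n), Multiplicative.ofAdd (1:ℤ))).2
          = Multiplicative.toAdd q.2 + 1 := by simp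
      rw [h1, h2]
      group
    rw [he]; exact one_mem _
  · rw [Phi_of_ne h]
    have hq : q * ((FreeGroup.of ⟨i, h⟩ : H n), 1) = (q.1 * FreeGroup.of ⟨i, h⟩, q.2) := by
      ext <;> simp
    rw [hq]
    have he : tau hn q * FreeGroup.of i * (tau hn (q.1 * FreeGroup.of ⟨i, h⟩, q.2))⁻¹ =
        Vel hn ⟨i, Nat.pos_of_ne_zero h⟩ (Multiplicative.toAdd q.2) q.1 := by
      unfold tau Vel
      simp only [_root_.map_mul, sH_of]
      group
    rw [he]
    exact Vel_mem hn _ _ _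

lemma step_mem_inv (hn : 2 ≤ n) (q : Q n) (i : Fin n) :
    tau hn q * (FreeGroup.of i)⁻¹ * (tau hn (q * (Phi n (FreeGroup.of i))⁻¹))⁻¹ ∈
      Subgroup.closure (Set.range (bb hn)) := by
  have h2 := step_mem hn (q * (Phi n (FreeGroup.of i))⁻¹) i
  rw [inv_mul_cancel_right] at h2
  have he : tau hn q * (FreeGroup.of i)⁻¹ * (tau hn (q * (Phi n (FreeGroup.of i))⁻¹))⁻¹ =
      (tau hn (q * (Phi n (FreeGroup.of i))⁻¹) * FreeGroup.of i * (tau hn q)⁻¹)⁻¹ := by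
    group
  rw [he]
  exact inv_mem h2

lemma scan (hn : 2 ≤ n) (L : List (Fin n × Bool)) :
    FreeGroup.mk L * (tau hn (Phi n (FreeGroup.mk L)))⁻¹ ∈
      Subgroup.closure (Set.range (bb hn)) := by
  induction L using List.reverseRecOn with
  | nil =>
      rw [← FreeGroup.one_eq_mk, _root_.map_one, tau_one]
      simp only [inv_one, mul_one]
      exact one_mem _
  | append_singleton L p ih =>
      obtain ⟨i, bl⟩ := p
      rw [← FreeGroup.mul_mk]
      cases bl
      · have hmk : (FreeGroup.mk [(i, false)] : F n) = (FreeGroup.of i)⁻¹ := by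
          rw [FreeGroup.of, FreeGroup.inv_mk]
          rfl
        rw [hmk, _root_.map_mul, _root_.map_inv]
        have he : FreeGroup.mk L * (FreeGroup.of i)⁻¹ *
            (tau hn (Phi n (FreeGroup.mk L) * (Phi n (FreeGroup.of i))⁻¹))⁻¹ =
            (FreeGroup.mk L * (tau hn (Phi n (FreeGroup.mk L)))⁻¹) *
            (tau hn (Phi n (FreeGroup.mk L)) * (FreeGroup.of i)⁻¹ *
              (tau hn (Phi n (FreeGroup.mk L) * (Phi n (FreeGroup.of i))⁻¹))⁻¹) := by
          group
        rw [he]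
        exact mul_mem ih (step_mem_inv hn _ i)
      · have hmk : (FreeGroup.mk [(i, true)] : F n) = FreeGroup.of i := rfl
        rw [hmk, _root_.map_mul]
        have he : FreeGroup.mk L * FreeGroup.of i *
            (tau hn (Phi n (FreeGroup.mk L) * Phi n (FreeGroup.of i)))⁻¹ =
            (FreeGroup.mk L * (tau hn (Phi n (FreeGroup.mk L)))⁻¹) *
            (tau hn (Phi n (FreeGroup.mk L)) * FreeGroup.of i *
              (tau hn (Phi n (FreeGroup.mk L) * Phi n (FreeGroup.of i)))⁻¹) := by
          group
        rw [he]
        exact mul_mem ih (step_mem hn _ i)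

lemma ker_le_closure (hn : 2 ≤ n) (g : F n) (hg : Phi n g = 1) :
    g ∈ Subgroup.closure (Set.range (bb hn)) := by
  have h := scan hn (FreeGroup.toWord g)
  rw [FreeGroup.mk_toWord, hg, tau_one] at h
  simpa using h

lemma closure_eq_ker (hn : 2 ≤ n) :
    Subgroup.closure (Set.range (bb hn)) = (Phi n).ker := by
  apply le_antisymm
  · rw [Subgroup.closure_le]
    rintro g ⟨ι, rfl⟩
    exact Phi_bb hn ι
  · intro g hg
    exact ker_le_closure hn g hg

end Stmt9

namespace Stmt9
open FreeGroup

variable {n : ℕ}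

def piH (n : ℕ) : F n →* H n := (MonoidHom.fst _ _).comp (Phi n)

lemma piH_of_ne {i : Fin n} (h : (i : ℕ) ≠ 0) :
    piH n (FreeGroup.of i) = FreeGroup.of ⟨i, h⟩ := by
  simp [piH, Phi_of_ne h]

lemma piH_of_zero {i : Fin n} (h : (i : ℕ) = 0) : piH n (FreeGroup.of i) = 1 := by
  simp [piH, Phi_of_zero h]

lemma ncl_eq (hn : 2 ≤ n) : Subgroup.normalClosure {x0 n hn} = (piH n).ker := by
  apply le_antisymm
  · apply Subgroup.normalClosure_le_normal
    intro x hx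
    rw [Set.mem_singleton_iff] at hx
    subst hx
    exact MonoidHom.mem_ker.mpr (piH_of_zero rfl)
  · intro g hg
    set N := Subgroup.normalClosure {x0 n hn} with hN
    haveI : N.Normal := Subgroup.normalClosure_normal
    set qm : F n →* F n ⧸ N := QuotientGroup.mk' N with hqm
    set rho : H n →* F n ⧸ N := FreeGroup.lift (fun i => qm (FreeGroup.of i.1)) with hrho
    have hcomp : rho.comp (piH n) = qm := by
      apply FreeGroup.ext_hom
      intro a
      by_cases h : (a : ℕ) = 0
      · rw [MonoidHom.comp_apply, piH_of_zero h, _root_.map_one]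
        have hx : (FreeGroup.of a : F n) = x0 n hn := by
          unfold x0; congr 1; exact Fin.ext h
        rw [hx]
        exact ((QuotientGroup.eq_one_iff _).mpr
          (Subgroup.subset_normalClosure (Set.mem_singleton _))).symm
      · rw [MonoidHom.comp_apply, piH_of_ne h, hrho, lift_apply_of]
    have h1 : qm g = 1 := by
      have := DFunLike.congr_fun hcomp g
      rw [MonoidHom.comp_apply, MonoidHom.mem_ker.mp hg, _root_.map_one] at this
      exact this.symm
    exact (QuotientGroup.eq_one_iff g).mp h1

noncomputable def exps (n : ℕ) : F n →* Multiplicative (Fin n →₀ ℤ) :=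
  FreeGroup.lift fun i => Multiplicative.ofAdd (Finsupp.single i 1)

noncomputable def iota (n : ℕ) : Multiplicative (Fin n →₀ ℤ) →* Abelianization (F n) :=
  AddMonoidHom.toMultiplicativeLeft
    (Finsupp.liftAddHom fun i =>
      (zmultiplesHom _) (Additive.ofMul (Abelianization.of (FreeGroup.of i))))

lemma exps_of (a : Fin n) :
    exps n (FreeGroup.of a) = Multiplicative.ofAdd (Finsupp.single a (1:ℤ)) := lift_apply_of

lemma evalM (i : Fin n) (x : Fin n →₀ ℤ) :
    (AddMonoidHom.toMultiplicative (Finsupp.applyAddHom i)) (Multiplicative.ofAdd x) =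
      Multiplicative.ofAdd (x i) := rfl

lemma iota_exps : (iota n).comp (exps n) = (Abelianization.of : F n →* _) := by
  apply FreeGroup.ext_hom
  intro a
  rw [MonoidHom.comp_apply, exps_of]
  simp [iota, Finsupp.liftAddHom_apply_single]

lemma mem_commutator_of_ker (g : F n) (hg : Phi n g = 1) : g ∈ commutator (F n) := by
  have h1 : exps n g = 1 := by
    have hcomp : ∀ i : Fin n, Multiplicative.toAdd (exps n g) i = 0 := by
      intro i
      by_cases h : (i : ℕ) = 0
      · have hE : (AddMonoidHom.toMultiplicative (Finsupp.applyAddHom i)).comp (exps n) =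
            (MonoidHom.snd (H n) (Multiplicative ℤ)).comp (Phi n) := by
          apply FreeGroup.ext_hom
          intro a
          rw [MonoidHom.comp_apply, MonoidHom.comp_apply, exps_of, evalM]
          by_cases ha : (a : ℕ) = 0
          · have hai : a = i := Fin.ext (by rw [ha, h])
            rw [Phi_of_zero ha]
            subst hai
            simp
          · rw [Phi_of_ne ha]
            have hne : a ≠ i := fun e => ha (by rw [e, h])
            simp [Finsupp.single_apply, hne]
        have heq := DFunLike.congr_fun hE g
        rw [MonoidHom.comp_apply, MonoidHom.comp_apply, hg] at heq
        have h2 : (AddMonoidHom.toMultiplicative (Finsupp.applyAddHom i)) (exps n g) =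
            Multiplicative.ofAdd (Multiplicative.toAdd (exps n g) i) := rfl
        rw [h2] at heq
        simpa using heq
      · set E' : H n →* Multiplicative ℤ :=
          FreeGroup.lift (fun i' : Idx n =>
            Multiplicative.ofAdd ((Finsupp.single (i'.1 : Fin n) (1:ℤ)) i)) with hE'
        have hE : (AddMonoidHom.toMultiplicative (Finsupp.applyAddHom i)).comp (exps n) =
            E'.comp (piH n) := by
          apply FreeGroup.ext_hom
          intro a
          rw [MonoidHom.comp_apply, MonoidHom.comp_apply, exps_of, evalM]
          by_cases ha : (a : ℕ) = 0
          · rw [piH_of_zero ha, _root_.map_one]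
            have hne : a ≠ i := fun e => h (by rw [← e, ha])
            simp [Finsupp.single_apply, hne]
          · rw [piH_of_ne ha, hE', lift_apply_of]
        have heq := DFunLike.congr_fun hE g
        have hpi : piH n g = 1 := by simp [piH, hg]
        rw [MonoidHom.comp_apply, MonoidHom.comp_apply, hpi, _root_.map_one] at heq
        have h2 : (AddMonoidHom.toMultiplicative (Finsupp.applyAddHom i)) (exps n g) =
            Multiplicative.ofAdd (Multiplicative.toAdd (exps n g) i) := rfl
        rw [h2] at heq
        simpa using heq
    have h0 : Multiplicative.toAdd (exps n g) = 0 := Finsupp.ext hcomp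
    have h3 : exps n g = Multiplicative.ofAdd 0 := by
      rw [← h0]; rfl
    simpa using h3
  have h2 : Abelianization.of g = 1 := by
    have := DFunLike.congr_fun iota_exps g
    rw [MonoidHom.comp_apply, h1, _root_.map_one] at this
    exact this.symm
  exact (QuotientGroup.eq_one_iff g).mp h2

lemma ker_eq_inf (hn : 2 ≤ n) :
    (Phi n).ker = Subgroup.normalClosure {x0 n hn} ⊓ commutator (F n) := by
  apply le_antisymm
  · intro g hg
    have hg' : Phi n g = 1 := hg
    refine Subgroup.mem_inf.mpr ⟨?_, ?_⟩
    · rw [ncl_eq hn]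
      exact MonoidHom.mem_ker.mpr (by simp [piH, hg'])
    · exact mem_commutator_of_ker g hg'
  · rintro g hg
    obtain ⟨h1, h2⟩ := Subgroup.mem_inf.mp hg
    have e1 : piH n g = 1 := by rw [ncl_eq hn] at h1; exact h1
    have e2 : ((MonoidHom.snd (H n) (Multiplicative ℤ)).comp (Phi n)) g = 1 :=
      Abelianization.commutator_subset_ker _ h2
    show Phi n g = 1
    have : Phi n g = ((Phi n g).1, (Phi n g).2) := rfl
    rw [this]
    have e1' : (Phi n g).1 = 1 := e1
    have e2' : (Phi n g).2 = 1 := e2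
    rw [e1', e2']
    rfl

end Stmt9

namespace Stmt9
open FreeGroup

variable {n : ℕ}

def pp {G : Type*} [Group G] (a : ℤ → G) : ℤ → G
  | .ofNat t => ((List.range t).map fun s : ℕ => a (s : ℤ)).prod
  | .negSucc t => (((List.range (t + 1)).map fun s : ℕ => a (Int.negSucc t + (s : ℤ))).prod)⁻¹

lemma pp_zero {G : Type*} [Group G] (a : ℤ → G) : pp a 0 = 1 := by
  show ((List.range 0).map fun s : ℕ => a (s : ℤ)).prod = 1
  simp

lemma pp_succ {G : Type*} [Group G] (a : ℤ → G) (t : ℤ) : pp a (t + 1) = pp a t * a t := by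
  cases t with
  | ofNat m =>
      show pp a ((m : ℤ) + 1) = pp a (.ofNat m) * a (.ofNat m)
      rw [show ((m : ℤ) + 1) = Int.ofNat (m + 1) by simp]
      show ((List.range (m + 1)).map fun s : ℕ => a (s : ℤ)).prod = _
      rw [List.range_succ, List.map_append, List.prod_append]
      simp [pp]
  | negSucc m =>
      cases m with
      | zero =>
          show pp a 0 = pp a (.negSucc 0) * a (Int.negSucc 0)
          rw [pp_zero]
          show (1 : G) = (((List.range 1).map fun s : ℕ => a (Int.negSucc 0 + (s : ℤ))).prod)⁻¹ * _
          rw [show List.range 1 = [0] from rfl]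
          simp
      | succ m' =>
          show pp a (.negSucc m') = pp a (.negSucc (m' + 1)) * a (Int.negSucc (m' + 1))
          show (((List.range (m' + 1)).map fun s : ℕ => a (Int.negSucc m' + (s : ℤ))).prod)⁻¹ =
            (((List.range (m' + 1 + 1)).map fun s : ℕ =>
              a (Int.negSucc (m' + 1) + (s : ℤ))).prod)⁻¹ * a (Int.negSucc (m' + 1))
          have h1 : ((List.range (m' + 1 + 1)).map fun s : ℕ =>
              a (Int.negSucc (m' + 1) + (s : ℤ))) =
              a (Int.negSucc (m' + 1)) ::
                ((List.range (m' + 1)).map fun s : ℕ => a (Int.negSucc m' + (s : ℤ))) := by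
            rw [List.range_succ_eq_map]
            simp only [List.map_cons, List.map_map]
            congr 1
            refine List.map_congr_left ?_
            intro s _
            have he : Int.negSucc (m' + 1) + ((s : ℤ) + 1) = Int.negSucc m' + (s : ℤ) := by
              rw [Int.negSucc_eq, Int.negSucc_eq]
              push_cast
              ring
            show a (Int.negSucc (m' + 1) + ((s : ℤ) + 1)) = _
            rw [he]
          rw [h1, List.prod_cons]
          group

def vA (j : J n) (z : H n) : ℤ → A n := pp fun s => FreeGroup.of ((j, -s - 1, z) : I n)

lemma vA_zero (j : J n) (z : H n) : vA j z 0 = 1 := pp_zero _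

lemma vA_succ (j : J n) (z : H n) (t : ℤ) :
    vA j z (t + 1) = vA j z t * FreeGroup.of ((j, -t - 1, z) : I n) := pp_succ _ t

def fA : Fin n → Q n → A n := fun i q =>
  if h : (i : ℕ) ≠ 0 then
    vA ⟨i, Nat.pos_of_ne_zero h⟩ ((q.1 * FreeGroup.of ⟨i, h⟩)⁻¹) (Multiplicative.toAdd q.2)
  else 1

def act (n : ℕ) : Q n →* MulAut (Q n → A n) where
  toFun q :=
    { toFun := fun f x => f (x * q)
      invFun := fun f x => f (x * q⁻¹)
      left_inv := fun f => funext fun x => by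
        show f (x * q⁻¹ * q) = f x
        rw [inv_mul_cancel_right]
      right_inv := fun f => funext fun x => by
        show f (x * q * q⁻¹) = f x
        rw [mul_inv_cancel_right]
      map_mul' := fun f g => rfl }
  map_one' := MulEquiv.ext fun f => funext fun x => by
    show f (x * 1) = f x
    rw [mul_one]
  map_mul' := fun q₁ q₂ => MulEquiv.ext fun f => funext fun x => by
    show f (x * (q₁ * q₂)) = f (x * q₁ * q₂)
    rw [mul_assoc]

abbrev M (n : ℕ) := (Q n → A n) ⋊[act n] Q n

def Theta (n : ℕ) : F n →* M n :=
  FreeGroup.lift fun i => (⟨fA i, Phi n (FreeGroup.of i)⟩ : M n)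

lemma Theta_of (i : Fin n) :
    Theta n (FreeGroup.of i) = (⟨fA i, Phi n (FreeGroup.of i)⟩ : M n) := lift_apply_of

lemma Theta_right (g : F n) : (Theta n g).right = Phi n g := by
  have : SemidirectProduct.rightHom.comp (Theta n) = Phi n := by
    apply FreeGroup.ext_hom
    intro a
    rw [MonoidHom.comp_apply, Theta_of]
    rfl
  exact DFunLike.congr_fun this g

def ell (g : F n) : Q n → A n := (Theta n g).left

lemma ell_of (i : Fin n) (x : Q n) : ell (FreeGroup.of i) x = fA i x := by
  unfold ell; rw [Theta_of]

lemma ell_one (x : Q n) : ell (1 : F n) x = 1 := by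
  unfold ell; rw [_root_.map_one]; rfl

lemma ell_mul (g₁ g₂ : F n) (x : Q n) :
    ell (g₁ * g₂) x = ell g₁ x * ell g₂ (x * Phi n g₁) := by
  unfold ell
  rw [_root_.map_mul, SemidirectProduct.mul_left, Theta_right]
  rfl

lemma ell_inv (g : F n) (x : Q n) : ell g⁻¹ x = (ell g (x * (Phi n g)⁻¹))⁻¹ := by
  unfold ell
  rw [_root_.map_inv, SemidirectProduct.inv_left, Theta_right]
  rfl

end Stmt9

namespace Stmt9
open FreeGroup

variable {n : ℕ}

lemma fA_zero_eq_one {i : Fin n} (h : (i : ℕ) = 0) : fA (n := n) i = 1 := by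
  funext q
  unfold fA
  rw [dif_neg (by simp [h])]
  rfl

lemma Theta_x0 (hn : 2 ≤ n) :
    Theta n (x0 n hn) = SemidirectProduct.inr (Phi n (x0 n hn)) := by
  rw [x0, Theta_of, fA_zero_eq_one rfl]
  rfl

lemma ell_x0_zpow (hn : 2 ≤ n) (k : ℤ) (x : Q n) : ell (x0 n hn ^ k) x = 1 := by
  unfold ell
  rw [_root_.map_zpow, Theta_x0, ← _root_.map_zpow SemidirectProduct.inr]
  rw [SemidirectProduct.left_inr]
  rfl

lemma ell_x0 (hn : 2 ≤ n) (x : Q n) : ell (x0 n hn) x = 1 := by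
  have := ell_x0_zpow hn 1 x
  rwa [zpow_one] at this

lemma ell_x0_inv (hn : 2 ≤ n) (x : Q n) : ell (x0 n hn)⁻¹ x = 1 := by
  have := ell_x0_zpow hn (-1) x
  rwa [zpow_neg_one] at this

lemma ell_sH (w : H n) : ∀ u : H n, ell (sH n w) ((u, 1) : Q n) = 1 := by
  induction w using FreeGroup.induction_on with
  | C1 =>
      intro u
      rw [_root_.map_one]
      exact ell_one _
  | of i =>
      intro u
      rw [sH_of, ell_of]
      unfold fA
      rw [dif_pos i.2]
      exact vA_zero _ _
  | inv_of i ih =>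
      intro u
      rw [_root_.map_inv, ell_inv, sH_of]
      have hPhi : Phi n (FreeGroup.of (i : Fin n)) = ((FreeGroup.of i : H n), 1) := by
        rw [Phi_of_ne i.2]
      rw [hPhi]
      have hq : ((u, 1) : Q n) * ((FreeGroup.of i : H n), (1 : Multiplicative ℤ))⁻¹ =
          ((u * (FreeGroup.of i)⁻¹ : H n), (1 : Multiplicative ℤ)) := by
        simp [Prod.ext_iff]
      rw [hq, ← sH_of (n := n) i, ih]
      simp
  | mul g₁ g₂ ih₁ ih₂ =>
      intro u
      rw [_root_.map_mul, ell_mul, Phi_sH]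
      have hq : ((u, 1) : Q n) * ((g₁ : H n), (1 : Multiplicative ℤ)) =
          ((u * g₁ : H n), (1 : Multiplicative ℤ)) := by
        simp [Prod.ext_iff]
      rw [hq, ih₁, ih₂]
      simp

lemma ell_of_pos (j : J n) (u : H n) (m : ℤ) :
    ell (FreeGroup.of (j.1 : Fin n)) ((u, Multiplicative.ofAdd m) : Q n) =
      vA j ((u * FreeGroup.of (jI j))⁻¹) m := by
  rw [ell_of]
  unfold fA
  rw [dif_pos (Nat.pos_iff_ne_zero.mp j.2)]
  rfl

lemma ell_of_pos_inv (j : J n) (u : H n) (m : ℤ) :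
    ell ((FreeGroup.of (j.1 : Fin n))⁻¹) ((u, Multiplicative.ofAdd m) : Q n) =
      (vA j u⁻¹ m)⁻¹ := by
  rw [ell_inv]
  have hPhi : Phi n (FreeGroup.of (j.1 : Fin n)) =
      ((FreeGroup.of (jI j) : H n), (1 : Multiplicative ℤ)) :=
    Phi_of_ne _
  rw [hPhi]
  have hq : ((u, Multiplicative.ofAdd m) : Q n) *
      ((FreeGroup.of (jI j) : H n), (1 : Multiplicative ℤ))⁻¹ =
      ((u * (FreeGroup.of (jI j))⁻¹ : H n), Multiplicative.ofAdd m) := by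
    simp [Prod.ext_iff]
  rw [hq, ell_of_pos]
  congr 2
  simp

end Stmt9

namespace Stmt9
open FreeGroup

variable {n : ℕ}

lemma ell_cc (hn : 2 ≤ n) (j : J n) (w : H n) (k : ℤ) :
    ell (cc hn j.1) ((w⁻¹, Multiplicative.ofAdd (-k)) : Q n) =
      (vA j w (-k - 1))⁻¹ * vA j w (-k) := by
  have hPhix0 : Phi n (x0 n hn) = ((1 : H n), Multiplicative.ofAdd (1 : ℤ)) := Phi_x0 hn
  have hPhix0inv : Phi n (x0 n hn)⁻¹ = ((1 : H n), Multiplicative.ofAdd (-1 : ℤ)) := by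
    rw [_root_.map_inv, hPhix0]
    simp [Prod.ext_iff]
  have hPhij : Phi n (FreeGroup.of (j.1 : Fin n)) =
      ((FreeGroup.of (jI j) : H n), (1 : Multiplicative ℤ)) := Phi_of_ne _
  rw [cc]
  rw [ell_mul, ell_mul, ell_mul]
  rw [ell_x0_inv hn]
  -- state after x0⁻¹
  have hq3 : ((w⁻¹, Multiplicative.ofAdd (-k)) : Q n) * Phi n (x0 n hn)⁻¹ =
      ((w⁻¹, Multiplicative.ofAdd (-k - 1)) : Q n) := by
    rw [hPhix0inv]
    simp [Prod.ext_iff, ← ofAdd_add, div_eq_mul_inv]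
  rw [hq3, ell_of_pos_inv j w⁻¹ (-k - 1), inv_inv]
  -- state after x0⁻¹ * xj⁻¹
  have hq4 : ((w⁻¹, Multiplicative.ofAdd (-k)) : Q n) *
      Phi n ((x0 n hn)⁻¹ * (FreeGroup.of (j.1 : Fin n))⁻¹) =
      ((w⁻¹ * (FreeGroup.of (jI j))⁻¹, Multiplicative.ofAdd (-k - 1)) : Q n) := by
    rw [_root_.map_mul, _root_.map_inv (Phi n) (FreeGroup.of (j.1 : Fin n)), hPhix0inv, hPhij]
    simp [Prod.ext_iff, ← ofAdd_add, div_eq_mul_inv]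
  rw [hq4, ell_x0 hn]
  -- state after x0⁻¹ * xj⁻¹ * x0
  have hq5 : ((w⁻¹, Multiplicative.ofAdd (-k)) : Q n) *
      Phi n ((x0 n hn)⁻¹ * (FreeGroup.of (j.1 : Fin n))⁻¹ * x0 n hn) =
      ((w⁻¹ * (FreeGroup.of (jI j))⁻¹, Multiplicative.ofAdd (-k)) : Q n) := by
    rw [_root_.map_mul, _root_.map_mul, _root_.map_inv (Phi n) (FreeGroup.of (j.1 : Fin n)),
      hPhix0inv, hPhij, hPhix0]
    simp [Prod.ext_iff, ← ofAdd_add]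
  rw [hq5, ell_of_pos j _ (-k)]
  have hz : (w⁻¹ * (FreeGroup.of (jI j))⁻¹ * FreeGroup.of (jI j))⁻¹ = w := by
    simp
  rw [hz]
  group

lemma ell_bb (hn : 2 ≤ n) (ι : I n) : ell (bb hn ι) 1 = FreeGroup.of ι := by
  obtain ⟨j, k, w⟩ := ι
  have hPhiP : Phi n (x0 n hn ^ k * sH n w) = ((w, Multiplicative.ofAdd k) : Q n) := by
    rw [_root_.map_mul, Phi_x0_zpow, Phi_sH]
    simp [Prod.ext_iff]
  have hellP : ∀ u : H n,
      ell (x0 n hn ^ k * sH n w) ((u, Multiplicative.ofAdd (-k)) : Q n) = 1 := by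
    intro u
    rw [ell_mul, Phi_x0_zpow, ell_x0_zpow hn]
    have hq : ((u, Multiplicative.ofAdd (-k)) : Q n) *
        ((1 : H n), Multiplicative.ofAdd k) = ((u, 1) : Q n) := by
      simp [Prod.ext_iff, ← ofAdd_add]
    rw [hq, ell_sH w u, one_mul]
  have hb : bb hn (j, k, w) =
      (x0 n hn ^ k * sH n w)⁻¹ * cc hn j.1 * (x0 n hn ^ k * sH n w) := rfl
  rw [hb, ell_mul, ell_mul]
  have hstate1 : (1 : Q n) * Phi n (x0 n hn ^ k * sH n w)⁻¹ =
      ((w⁻¹, Multiplicative.ofAdd (-k)) : Q n) := by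
    rw [_root_.map_inv, hPhiP]
    simp [Prod.ext_iff]
  have hellPinv : ell (x0 n hn ^ k * sH n w)⁻¹ 1 = 1 := by
    rw [ell_inv]
    have : (1 : Q n) * (Phi n (x0 n hn ^ k * sH n w))⁻¹ =
        ((w⁻¹, Multiplicative.ofAdd (-k)) : Q n) := by
      rw [hPhiP]
      simp [Prod.ext_iff]
    rw [this, hellP]
    simp
  rw [hellPinv, one_mul]
  have hstate2 : (1 : Q n) * Phi n ((x0 n hn ^ k * sH n w)⁻¹) =
      ((w⁻¹, Multiplicative.ofAdd (-k)) : Q n) := hstate1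
  rw [hstate2, ell_cc hn j w k]
  have hstate3 : (1 : Q n) * Phi n ((x0 n hn ^ k * sH n w)⁻¹ * cc hn j.1) =
      ((w⁻¹, Multiplicative.ofAdd (-k)) : Q n) := by
    rw [_root_.map_mul, Phi_cc hn j, mul_one]
    exact hstate1
  rw [hstate3, hellP w⁻¹, mul_one]
  have hv := vA_succ j w (-k - 1)
  rw [show (-k - 1 + 1 : ℤ) = -k by ring] at hv
  rw [show (-(-k - 1) - 1 : ℤ) = k by ring] at hv
  rw [hv]
  group

end Stmt9

namespace Stmt9
open FreeGroup

variable {n : ℕ}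

def rhom (n : ℕ) : (Phi n).ker →* A n where
  toFun g := ell (g : F n) 1
  map_one' := by
    show ell ((1 : (Phi n).ker) : F n) 1 = 1
    exact ell_one 1
  map_mul' g h := by
    have hg : Phi n (g : F n) = 1 := g.2
    show ell ((g : F n) * (h : F n)) 1 = _
    rw [ell_mul, hg, mul_one]

lemma closure_image_eq :
    Subgroup.closure (FreeGroup.of '' {i : Fin n | (i : ℕ) ≠ 0}) = (sH n).range := by
  have himg : FreeGroup.of '' {i : Fin n | (i : ℕ) ≠ 0} =
      Set.range fun i : Idx n => (FreeGroup.of (i : Fin n) : F n) := by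
    ext g
    constructor
    · rintro ⟨i, hi, rfl⟩
      exact ⟨⟨i, hi⟩, rfl⟩
    · rintro ⟨i, rfl⟩
      exact ⟨(i : Fin n), i.2, rfl⟩
  rw [himg, ← FreeGroup.range_lift_eq_closure]
  rfl

lemma sset_eq (hn : 2 ≤ n) :
    {g : F n | ∃ j : Fin n, (0 : ℕ) < (j : ℕ) ∧ ∃ k : ℤ,
        ∃ w ∈ Subgroup.closure (FreeGroup.of '' {i : Fin n | (i : ℕ) ≠ 0}),
          g = (x0 n hn ^ k * w)⁻¹ *
                ((x0 n hn)⁻¹ * (FreeGroup.of j)⁻¹ * x0 n hn * FreeGroup.of j) *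
              (x0 n hn ^ k * w)} = Set.range (bb hn) := by
  ext g
  simp only [Set.mem_setOf_eq, Set.mem_range]
  constructor
  · rintro ⟨j, hj, k, w, hw, rfl⟩
    rw [closure_image_eq] at hw
    obtain ⟨wH, rfl⟩ := hw
    exact ⟨((⟨j, hj⟩ : J n), k, wH), rfl⟩
  · rintro ⟨⟨j, k, wH⟩, rfl⟩
    refine ⟨j.1, j.2, k, sH n wH, ?_, rfl⟩
    rw [closure_image_eq]
    exact ⟨wH, rfl⟩

lemma inj_lemma (hn : 2 ≤ n) (S : Set (F n)) (hS : S = Set.range (bb hn)) :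
    Function.Injective (FreeGroup.lift ((↑) : S → F n)) := by
  subst hS
  set SR : Set (F n) := Set.range (bb hn) with hSR
  set L : FreeGroup SR →* F n := FreeGroup.lift ((↑) : SR → F n) with hL
  have hmem : ∀ x, L x ∈ (Phi n).ker := by
    intro x
    have hx : L x ∈ L.range := ⟨x, rfl⟩
    rw [hL, FreeGroup.range_lift_eq_closure, Subtype.range_coe] at hx
    rw [closure_eq_ker hn] at hx
    exact hx
  have hchoice : ∀ s : SR, ∃ ι : I n, (s : F n) = bb hn ι := by
    rintro ⟨s, ι, rfl⟩
    exact ⟨ι, rfl⟩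
  choose idx hidx using hchoice
  have idx_inj : Function.Injective idx := by
    intro s t hst
    apply Subtype.ext
    rw [hidx s, hidx t, hst]
  set L' : FreeGroup SR →* (Phi n).ker := L.codRestrict _ hmem with hL'
  set u : FreeGroup SR →* A n := (rhom n).comp L' with hu'
  have hu : ∀ s : SR, u (FreeGroup.of s) = FreeGroup.of (idx s) := by
    intro s
    have hval : ((L' (FreeGroup.of s)) : F n) = bb hn (idx s) := by
      show L (FreeGroup.of s) = _
      rw [hL, FreeGroup.lift_apply_of]
      exact hidx s
    show ell ((L' (FreeGroup.of s)) : F n) 1 = _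
    rw [hval, ell_bb hn]
  have humap : u = FreeGroup.lift (fun s : SR => FreeGroup.of (idx s)) :=
    FreeGroup.ext_hom _ _ fun s => by rw [hu, FreeGroup.lift_apply_of]
  -- a retraction of idx
  have hj0 : (0 : ℕ) < ((⟨1, by omega⟩ : Fin n) : ℕ) := by simp
  set s₀ : SR := ⟨bb hn ((⟨⟨1, by omega⟩, hj0⟩ : J n), 0, 1), ⟨_, rfl⟩⟩ with hs₀
  classical
  set t : I n → SR := fun ι => if h : ∃ s : SR, idx s = ι then h.choose else s₀ with ht'
  have ht : ∀ s, t (idx s) = s := by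
    intro s
    have hex : ∃ s' : SR, idx s' = idx s := ⟨s, rfl⟩
    rw [ht']
    simp only [dif_pos hex]
    exact idx_inj hex.choose_spec
  intro x y hxy
  have h1 : u x = u y := by
    rw [hu']
    show rhom n (L' x) = rhom n (L' y)
    congr 1
    apply Subtype.ext
    exact hxy
  rw [humap] at h1
  have hml : ∀ z : FreeGroup SR, FreeGroup.lift (fun s : SR => FreeGroup.of (idx s)) z =
      FreeGroup.map idx z := by
    intro z
    rw [FreeGroup.map_eq_lift]
    rfl
  rw [hml, hml] at h1
  have h2 := congrArg (FreeGroup.map t) h1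
  rwa [FreeGroup.map.comp, FreeGroup.map.comp,
    show t ∘ idx = id from funext ht, FreeGroup.map.id, FreeGroup.map.id] at h2

end Stmt9


/-- For `n ≥ 2`, let `K` be the normal closure of `x₀` in the free group on `Fin n`
and `B = K ∩ [Fₙ,Fₙ]`.  Then `B` is freely generated by the elements
`(x₀^{k} w)⁻¹ [x₀, x_j] (x₀^{k} w)` with `j > 0`, `k ∈ ℤ`, and `w` in the subgroup
generated by `x₁, …, x_{n-1}`. -/
theorem stmt9 (n : ℕ) (hn : 2 ≤ n) :
    IsFreeBasis
      {g : FreeGroup (Fin n) | ∃ j : Fin n, (0 : ℕ) < (j : ℕ) ∧ ∃ k : ℤ,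
        ∃ w ∈ Subgroup.closure (FreeGroup.of '' {i : Fin n | (i : ℕ) ≠ 0}),
          g = (FreeGroup.of (⟨0, by omega⟩ : Fin n) ^ k * w)⁻¹ *
                ((FreeGroup.of (⟨0, by omega⟩ : Fin n))⁻¹ * (FreeGroup.of j)⁻¹ *
                  FreeGroup.of (⟨0, by omega⟩ : Fin n) * FreeGroup.of j) *
              (FreeGroup.of (⟨0, by omega⟩ : Fin n) ^ k * w)}
      (Subgroup.normalClosure {FreeGroup.of (⟨0, by omega⟩ : Fin n)} ⊓
        commutator (FreeGroup (Fin n))) := by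
  refine ⟨?_, ?_⟩
  · exact Stmt9.inj_lemma hn _ (Stmt9.sset_eq hn)
  · rw [FreeGroup.range_lift_eq_closure, Subtype.range_coe]
    show Subgroup.closure
        {g : FreeGroup (Fin n) | ∃ j : Fin n, (0 : ℕ) < (j : ℕ) ∧ ∃ k : ℤ,
          ∃ w ∈ Subgroup.closure (FreeGroup.of '' {i : Fin n | (i : ℕ) ≠ 0}),
            g = (Stmt9.x0 n hn ^ k * w)⁻¹ *
                  ((Stmt9.x0 n hn)⁻¹ * (FreeGroup.of j)⁻¹ *
                    Stmt9.x0 n hn * FreeGroup.of j) *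
                (Stmt9.x0 n hn ^ k * w)} = _
    rw [Stmt9.sset_eq hn, Stmt9.closure_eq_ker hn, Stmt9.ker_eq_inf hn]
    rfl
end

section
/- Let S = { y_{n,m} : n, m ∈ ℤ } be a set of formal symbols and F(S) the free group on S. Then F(S) is freely generated by the set S' = { y_{0,0} } ∪ { y_{n+1,m}⁻¹ y_{n,m} : n, m ∈ ℤ } ∪ { y_{0,m+1}⁻¹ y_{0,m} : m ∈ ℤ }. -/
namespace Stmt10

abbrev F := FreeGroup (ℤ × ℤ)

def Sset : Set F :=
  ({FreeGroup.of ((0 : ℤ), (0 : ℤ))} ∪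
    {g : FreeGroup (ℤ × ℤ) | ∃ n m : ℤ,
      g = (FreeGroup.of (n + 1, m))⁻¹ * FreeGroup.of (n, m)} ∪
    {g : FreeGroup (ℤ × ℤ) | ∃ m : ℤ,
      g = (FreeGroup.of ((0 : ℤ), m + 1))⁻¹ * FreeGroup.of ((0 : ℤ), m)})

def aElt : Sset := ⟨FreeGroup.of ((0 : ℤ), (0 : ℤ)), Or.inl (Or.inl rfl)⟩
def bElt (n m : ℤ) : Sset :=
  ⟨(FreeGroup.of (n + 1, m))⁻¹ * FreeGroup.of (n, m), Or.inl (Or.inr ⟨n, m, rfl⟩)⟩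
def cElt (m : ℤ) : Sset :=
  ⟨(FreeGroup.of ((0 : ℤ), m + 1))⁻¹ * FreeGroup.of ((0 : ℤ), m), Or.inr ⟨m, rfl⟩⟩

abbrev G := FreeGroup (↥Sset)

/-- telescoping product: `tele g n = (g 0)⁻¹ ⋯ (g (n-1))⁻¹` for `n ≥ 0`,
`g (-1) ⋯ g n` for `n < 0`. -/
def tele (g : ℤ → G) (n : ℤ) : G :=
  if 0 ≤ n then ((List.range n.toNat).map fun k : ℕ => (g (k : ℤ))⁻¹).prod
  else ((List.range (-n).toNat).map fun k : ℕ => g (-((k : ℤ) + 1))).prod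

lemma tele_zero (g : ℤ → G) : tele g 0 = 1 := by simp [tele]

lemma tele_succ (g : ℤ → G) (n : ℤ) : tele g (n + 1) = tele g n * (g n)⁻¹ := by
  rcases le_or_gt 0 n with h | h
  · have h1 : (0 : ℤ) ≤ n + 1 := by omega
    have h2 : (n + 1).toNat = n.toNat + 1 := by omega
    have h3 : ((n.toNat : ℤ)) = n := Int.toNat_of_nonneg h
    simp [tele, if_pos h, if_pos h1, h2, List.range_succ, h3]
  · rcases eq_or_lt_of_le (by omega : n + 1 ≤ 0) with h0 | h0
    · have hn : n = -1 := by omega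
      subst hn
      simp [tele, List.range_succ]
    · have hn1 : ¬ (0 : ℤ) ≤ n + 1 := by omega
      have hn2 : ¬ (0 : ℤ) ≤ n := by omega
      have h2 : (-n).toNat = (-(n + 1)).toNat + 1 := by omega
      have h3 : (((-(n + 1)).toNat : ℤ)) = -(n + 1) := Int.toNat_of_nonneg (by omega)
      have h4 : -(((-(n + 1)).toNat : ℤ) + 1) = n := by omega
      rw [tele, tele, if_neg hn1, if_neg hn2, h2, List.range_succ, List.map_append,
        List.prod_append, List.map_singleton, List.prod_singleton, h4]
      group

def Cc (m : ℤ) : G := tele (fun k => FreeGroup.of (cElt k)) m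
def Bb (n m : ℤ) : G := tele (fun k => FreeGroup.of (bElt k m)) n

lemma Cc_succ (m : ℤ) : Cc (m + 1) = Cc m * (FreeGroup.of (cElt m))⁻¹ :=
  tele_succ _ m
lemma Bb_succ (n m : ℤ) : Bb (n + 1) m = Bb n m * (FreeGroup.of (bElt n m))⁻¹ :=
  tele_succ _ n

def Yf (p : ℤ × ℤ) : G := FreeGroup.of aElt * Cc p.2 * Bb p.1 p.2

def L : G →* F := FreeGroup.lift ((↑) : Sset → F)
def r : F →* G := FreeGroup.lift Yf

lemma L_of (s : Sset) : L (FreeGroup.of s) = (s : F) := FreeGroup.lift_apply_of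

lemma LC (m : ℤ) :
    FreeGroup.of ((0 : ℤ), (0 : ℤ)) * L (Cc m) = FreeGroup.of ((0 : ℤ), m) := by
  induction m using Int.induction_on with
  | zero => simp [Cc, tele_zero]
  | succ k ih =>
      rw [Cc_succ, map_mul, map_inv, L_of, ← mul_assoc, ih]
      show FreeGroup.of ((0 : ℤ), (k : ℤ)) *
        ((FreeGroup.of ((0 : ℤ), (k : ℤ) + 1))⁻¹ * FreeGroup.of ((0 : ℤ), (k : ℤ)))⁻¹ = _
      group
  | pred k ih =>
      have h := Cc_succ (-(k : ℤ) - 1)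
      rw [show -(k : ℤ) - 1 + 1 = -(k : ℤ) by ring] at h
      rw [h, map_mul, map_inv, L_of] at ih
      show _ = FreeGroup.of ((0 : ℤ), -(k : ℤ) - 1)
      have : FreeGroup.of ((0 : ℤ), (0 : ℤ)) * L (Cc (-(k : ℤ) - 1)) =
          FreeGroup.of ((0 : ℤ), -(k : ℤ)) *
            ((cElt (-(k : ℤ) - 1) : F)) := by
        rw [← ih]; group
      rw [this]
      show _ * ((FreeGroup.of ((0 : ℤ), -(k : ℤ) - 1 + 1))⁻¹ *
        FreeGroup.of ((0 : ℤ), -(k : ℤ) - 1)) = _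
      rw [show -(k : ℤ) - 1 + 1 = -(k : ℤ) by ring]
      group

lemma LB (n m : ℤ) :
    FreeGroup.of ((0 : ℤ), m) * L (Bb n m) = FreeGroup.of (n, m) := by
  induction n using Int.induction_on with
  | zero => simp [Bb, tele_zero]
  | succ k ih =>
      rw [Bb_succ, map_mul, map_inv, L_of, ← mul_assoc, ih]
      show FreeGroup.of ((k : ℤ), m) *
        ((FreeGroup.of ((k : ℤ) + 1, m))⁻¹ * FreeGroup.of ((k : ℤ), m))⁻¹ = _
      group
  | pred k ih =>
      have h := Bb_succ (-(k : ℤ) - 1) m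
      rw [show -(k : ℤ) - 1 + 1 = -(k : ℤ) by ring] at h
      rw [h, map_mul, map_inv, L_of] at ih
      have : FreeGroup.of ((0 : ℤ), m) * L (Bb (-(k : ℤ) - 1) m) =
          FreeGroup.of (-(k : ℤ), m) * ((bElt (-(k : ℤ) - 1) m : F)) := by
        rw [← ih]; group
      rw [this]
      show _ * ((FreeGroup.of (-(k : ℤ) - 1 + 1, m))⁻¹ *
        FreeGroup.of (-(k : ℤ) - 1, m)) = _
      rw [show -(k : ℤ) - 1 + 1 = -(k : ℤ) by ring]
      group

lemma LY (p : ℤ × ℤ) : L (Yf p) = FreeGroup.of p := by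
  obtain ⟨n, m⟩ := p
  show L (FreeGroup.of aElt * Cc m * Bb n m) = _
  rw [map_mul, map_mul, L_of]
  show FreeGroup.of ((0 : ℤ), (0 : ℤ)) * L (Cc m) * L (Bb n m) = _
  rw [LC, LB]

lemma Lr : L.comp r = MonoidHom.id F := by
  apply FreeGroup.ext_hom
  intro p
  simp only [MonoidHom.comp_apply, MonoidHom.id_apply]
  rw [show r (FreeGroup.of p) = Yf p from FreeGroup.lift_apply_of, LY]

lemma r_of (p : ℤ × ℤ) : r (FreeGroup.of p) = Yf p := FreeGroup.lift_apply_of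

lemma rL : r.comp L = MonoidHom.id G := by
  apply FreeGroup.ext_hom
  intro s
  simp only [MonoidHom.comp_apply, MonoidHom.id_apply]
  rw [show L (FreeGroup.of s) = (s : F) from FreeGroup.lift_apply_of]
  obtain ⟨v, hv⟩ := s
  rcases hv with (h | ⟨n, m, rfl⟩) | ⟨m, rfl⟩
  · rcases h with rfl
    rw [show (⟨FreeGroup.of ((0 : ℤ), (0 : ℤ)), _⟩ : Sset) = aElt from rfl]
    show r (FreeGroup.of ((0 : ℤ), (0 : ℤ))) = _
    rw [r_of]
    show FreeGroup.of aElt * Cc 0 * Bb 0 0 = _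
    simp [Cc, Bb, tele_zero]
  · rw [show (⟨_, _⟩ : Sset) = bElt n m from rfl]
    show r ((FreeGroup.of (n + 1, m))⁻¹ * FreeGroup.of (n, m)) = _
    rw [map_mul, map_inv, r_of, r_of]
    show (Yf (n + 1, m))⁻¹ * Yf (n, m) = _
    show (FreeGroup.of aElt * Cc m * Bb (n + 1) m)⁻¹ *
      (FreeGroup.of aElt * Cc m * Bb n m) = _
    rw [Bb_succ]
    group
  · rw [show (⟨_, _⟩ : Sset) = cElt m from rfl]
    show r ((FreeGroup.of ((0 : ℤ), m + 1))⁻¹ * FreeGroup.of ((0 : ℤ), m)) = _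
    rw [map_mul, map_inv, r_of, r_of]
    show (Yf (0, m + 1))⁻¹ * Yf (0, m) = _
    show (FreeGroup.of aElt * Cc (m + 1) * Bb 0 (m + 1))⁻¹ *
      (FreeGroup.of aElt * Cc m * Bb 0 m) = _
    rw [Cc_succ]
    simp only [Bb, tele_zero]
    group

end Stmt10

open Stmt10 in
/-- The free group on the symbols `y_{n,m}`, `(n,m) ∈ ℤ²`, is freely generated by
`{ y_{0,0} } ∪ { y_{n+1,m}⁻¹ y_{n,m} } ∪ { y_{0,m+1}⁻¹ y_{0,m} }`. -/
theorem stmt10 :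
    IsFreeBasis
      ({FreeGroup.of ((0 : ℤ), (0 : ℤ))} ∪
        {g : FreeGroup (ℤ × ℤ) | ∃ n m : ℤ,
          g = (FreeGroup.of (n + 1, m))⁻¹ * FreeGroup.of (n, m)} ∪
        {g : FreeGroup (ℤ × ℤ) | ∃ m : ℤ,
          g = (FreeGroup.of ((0 : ℤ), m + 1))⁻¹ * FreeGroup.of ((0 : ℤ), m)})
      (⊤ : Subgroup (FreeGroup (ℤ × ℤ))) := by
  show IsFreeBasis Sset ⊤
  constructor
  · intro x y h
    have hx := DFunLike.congr_fun rL x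
    have hy := DFunLike.congr_fun rL y
    simp only [MonoidHom.comp_apply, MonoidHom.id_apply] at hx hy
    rw [← hx, ← hy]
    exact congrArg r h
  · rw [MonoidHom.range_eq_top]
    intro x
    refine ⟨r x, ?_⟩
    have := DFunLike.congr_fun Lr x
    simp at this
    exact this
end
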